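/- arXiv:1805.03284 — 11 statements merged into one kernel-verified Lean document; each statement's English description precedes it below -/
import Mathlib

section
/- For any monotone hemi-norm ν on the nonnegative orthant ℝ₊ⁿ, there exists a vector c with strictly positive entries such that ν(x) ≤ ⟨c, x⟩ ≤ n·ν(x) for all nonnegative vectors x. -/
/-- For any monotone hemi-norm ν on ℝ₊ⁿ, there is a vector `c` with
positive entries such that `ν x ≤ ⟨c, x⟩ ≤ n * ν x` for all nonnegative `x`. -/
theorem monotone_heminorm_linear_approx {n : ℕ} (ν : (Fin n → ℝ) → ℝ)
    (hconv : ∀ x y : Fin n → ℝ, 0 ≤ x → 0 ≤ y → ∀ t : ℝ, 0 ≤ t → t ≤ 1 →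
      ν (t • x + (1 - t) • y) ≤ t * ν x + (1 - t) * ν y)
    (hhom : ∀ t : ℝ, 0 < t → ∀ x : Fin n → ℝ, 0 ≤ x → ν (t • x) = t * ν x)
    (hmono : ∀ x y : Fin n → ℝ, 0 ≤ x → x ≤ y → ν x ≤ ν y)
    (hdef : ∀ x : Fin n → ℝ, 0 ≤ x → ν x = 0 → x = 0) :
    ∃ c : Fin n → ℝ, (∀ i, 0 < c i) ∧
      ∀ x : Fin n → ℝ, 0 ≤ x →
        ν x ≤ ∑ i, c i * x i ∧ ∑ i, c i * x i ≤ (n : ℝ) * ν x := by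
  have hν0 : ν 0 = 0 := by
    have h := hhom 2 (by norm_num) 0 le_rfl
    simp at h
    linarith
  have hnonneg : ∀ x : Fin n → ℝ, 0 ≤ x → 0 ≤ ν x := by
    intro x hx
    have := hmono 0 x le_rfl hx
    rwa [hν0] at this
  have hsub : ∀ x y : Fin n → ℝ, 0 ≤ x → 0 ≤ y → ν (x + y) ≤ ν x + ν y := by
    intro x y hx hy
    have hc := hconv x y hx hy (1/2) (by norm_num) (by norm_num)
    have hxy : (0 : Fin n → ℝ) ≤ (1/2 : ℝ) • x + (1/2 : ℝ) • y := by
      intro i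
      have h1 := hx i
      have h2 := hy i
      simp only [Pi.add_apply, Pi.smul_apply, smul_eq_mul]
      linarith
    have h2 := hhom 2 (by norm_num) _ hxy
    have he : (2 : ℝ) • ((1/2 : ℝ) • x + (1/2 : ℝ) • y) = x + y := by
      rw [smul_add, smul_smul, smul_smul]; norm_num
    rw [he] at h2
    norm_num at hc h2
    linarith
  -- single vectors
  have hsingle_nonneg : ∀ (i : Fin n) (a : ℝ), 0 ≤ a → (0 : Fin n → ℝ) ≤ Pi.single i a := by
    intro i a ha j
    classical
    simp only [Pi.single_apply]
    split <;> simp [ha]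
  set c : Fin n → ℝ := fun i => ν (Pi.single i 1) with hc
  have hscale : ∀ (i : Fin n) (a : ℝ), 0 ≤ a → ν (Pi.single i a) = a * c i := by
    intro i a ha
    rcases eq_or_lt_of_le ha with h | h
    · simp [← h, hν0]
    · have : Pi.single i a = a • (Pi.single i 1 : Fin n → ℝ) := by
        ext j
        classical
        simp [Pi.single_apply, mul_ite]
      rw [this, hhom a h _ (hsingle_nonneg i 1 (by norm_num))]
  have hcpos : ∀ i, 0 < c i := by
    intro i
    have h0 := hnonneg _ (hsingle_nonneg i 1 (by norm_num))
    rcases eq_or_lt_of_le h0 with h | h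
    · exfalso
      have := hdef _ (hsingle_nonneg i 1 (by norm_num)) h.symm
      have := congrFun this i
      simp at this
    · exact h
  refine ⟨c, hcpos, ?_⟩
  intro x hx
  classical
  constructor
  · -- ν x ≤ ∑ c i * x i, via subadditivity over singles
    have key : ∀ s : Finset (Fin n),
        (0 : Fin n → ℝ) ≤ (∑ i ∈ s, Pi.single i (x i)) ∧
        ν (∑ i ∈ s, Pi.single i (x i)) ≤ ∑ i ∈ s, c i * x i := by
      intro s
      induction s using Finset.induction with
      | empty => simp [hν0]
      | @insert a s hni ih =>
        rw [Finset.sum_insert hni, Finset.sum_insert hni]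
        constructor
        · exact add_nonneg (hsingle_nonneg a (x a) (hx a)) ih.1
        · calc ν (Pi.single a (x a) + ∑ i ∈ s, Pi.single i (x i))
              ≤ ν (Pi.single a (x a)) + ν (∑ i ∈ s, Pi.single i (x i)) :=
                hsub _ _ (hsingle_nonneg a (x a) (hx a)) ih.1
            _ ≤ c a * x a + ∑ i ∈ s, c i * x i := by
                rw [hscale a (x a) (hx a)]
                have := ih.2
                linarith [mul_comm (x a) (c a)]
    have hx_eq : (∑ i : Fin n, Pi.single i (x i)) = x := by
      ext j
      simp [Pi.single_apply]
    have h := (key Finset.univ).2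
    rwa [hx_eq] at h
  · -- each c i * x i = ν (single) ≤ ν x
    have hle : ∀ i : Fin n, c i * x i ≤ ν x := by
      intro i
      rw [mul_comm, ← hscale i (x i) (hx i)]
      refine hmono _ _ (hsingle_nonneg i (x i) (hx i)) ?_
      intro j
      simp only [Pi.single_apply]
      split
      · rename_i h; subst h; exact le_rfl
      · exact hx j
    calc ∑ i, c i * x i ≤ ∑ _i : Fin n, ν x := Finset.sum_le_sum fun i _ => hle i
      _ = (n : ℝ) * ν x := by simp [mul_comm]
end

section
/- If ν is a monotone hemi-norm on the nonnegative orthant ℝ₊ⁿ, then the map ν̂(x) := inf{ max(ν(y), ν(z)) : x = y − z, y ≥ 0, z ≥ 0 } defines a norm on ℝⁿ that extends ν, i.e., ν̂(x) = ν(x) for all x ≥ 0. -/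
/-- the extension `ν̂ x = inf { max (ν y) (ν z) : x = y - z, y, z ≥ 0 }`
of a monotone hemi-norm ν on ℝ₊ⁿ is a norm on ℝⁿ that agrees with ν on ℝ₊ⁿ. -/
theorem monotone_heminorm_extension_is_norm {n : ℕ} (ν : (Fin n → ℝ) → ℝ)
    (hconv : ∀ x y : Fin n → ℝ, 0 ≤ x → 0 ≤ y → ∀ t : ℝ, 0 ≤ t → t ≤ 1 →
      ν (t • x + (1 - t) • y) ≤ t * ν x + (1 - t) * ν y)
    (hhom : ∀ t : ℝ, 0 < t → ∀ x : Fin n → ℝ, 0 ≤ x → ν (t • x) = t * ν x)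
    (hmono : ∀ x y : Fin n → ℝ, 0 ≤ x → x ≤ y → ν x ≤ ν y)
    (hdef : ∀ x : Fin n → ℝ, 0 ≤ x → ν x = 0 → x = 0)
    (νhat : (Fin n → ℝ) → ℝ)
    (hνhat : ∀ x : Fin n → ℝ, νhat x =
      sInf {m : ℝ | ∃ y z : Fin n → ℝ, 0 ≤ y ∧ 0 ≤ z ∧ x = y - z ∧ m = max (ν y) (ν z)}) :
    (∀ x, 0 ≤ νhat x) ∧
    (∀ x, νhat x = 0 ↔ x = 0) ∧
    (∀ (t : ℝ) (x : Fin n → ℝ), νhat (t • x) = |t| * νhat x) ∧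
    (∀ x y : Fin n → ℝ, νhat (x + y) ≤ νhat x + νhat y) ∧
    (∀ x : Fin n → ℝ, 0 ≤ x → νhat x = ν x) := by
  classical
  set S : (Fin n → ℝ) → Set ℝ := fun x =>
    {m : ℝ | ∃ y z : Fin n → ℝ, 0 ≤ y ∧ 0 ≤ z ∧ x = y - z ∧ m = max (ν y) (ν z)} with hSdef
  have hνS : ∀ x, νhat x = sInf (S x) := hνhat
  have hν0 : ν 0 = 0 := by
    have h := hhom 2 (by norm_num) 0 le_rfl
    rw [smul_zero] at h
    linarith
  have hνnn : ∀ y : Fin n → ℝ, 0 ≤ y → 0 ≤ ν y := by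
    intro y hy
    have := hmono 0 y le_rfl hy
    linarith
  have hne : ∀ x, (S x).Nonempty := by
    intro x
    refine ⟨_, (fun i => max (x i) 0), (fun i => max (-x i) 0), ?_, ?_, ?_, rfl⟩
    · intro i; exact le_max_right _ _
    · intro i; exact le_max_right _ _
    · funext i
      simp only [Pi.sub_apply]
      rcases le_total (x i) 0 with h | h
      · rw [max_eq_right h, max_eq_left (by linarith)]; ring
      · rw [max_eq_left h, max_eq_right (by linarith)]; ring
  have hbdd : ∀ x, BddBelow (S x) := by
    intro x
    refine ⟨0, ?_⟩
    rintro m ⟨y, z, hy, hz, -, rfl⟩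
    exact le_trans (hνnn y hy) (le_max_left _ _)
  have hnn : ∀ x, 0 ≤ νhat x := by
    intro x
    rw [hνS]
    apply le_csInf (hne x)
    rintro m ⟨y, z, hy, hz, -, rfl⟩
    exact le_trans (hνnn y hy) (le_max_left _ _)
  have hagree : ∀ x, 0 ≤ x → νhat x = ν x := by
    intro x hx
    rw [hνS]
    apply le_antisymm
    · apply csInf_le (hbdd x)
      exact ⟨x, 0, hx, le_rfl, by simp, by rw [hν0, max_eq_left (hνnn x hx)]⟩
    · apply le_csInf (hne x)
      rintro m ⟨y, z, hy, hz, hxyz, rfl⟩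
      have hxy : x ≤ y := by
        intro i
        have h1 := congrFun hxyz i
        have h2 := hz i
        simp only [Pi.sub_apply] at h1
        simp only [Pi.zero_apply] at h2
        linarith
      exact le_trans (hmono x y hx hxy) (le_max_left _ _)
  have hsub : ∀ a b : Fin n → ℝ, 0 ≤ a → 0 ≤ b → ν (a + b) ≤ ν a + ν b := by
    intro a b ha hb
    have h1 := hconv a b ha hb (1/2) (by norm_num) (by norm_num)
    have hmid : (0 : Fin n → ℝ) ≤ (1/2 : ℝ) • a + (1 - 1/2 : ℝ) • b := by
      intro i
      have := ha i
      have := hb i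
      simp only [Pi.add_apply, Pi.smul_apply, smul_eq_mul, Pi.zero_apply] at *
      linarith
    have h2 := hhom 2 (by norm_num) _ hmid
    have he : (2 : ℝ) • ((1/2 : ℝ) • a + (1 - 1/2 : ℝ) • b) = a + b := by
      rw [smul_add, smul_smul, smul_smul]
      norm_num
    rw [he] at h2
    linarith
  have htri : ∀ x y, νhat (x + y) ≤ νhat x + νhat y := by
    intro x y
    have key : ∀ m1 ∈ S x, ∀ m2 ∈ S y, νhat (x + y) ≤ m1 + m2 := by
      rintro m1 ⟨y1, z1, hy1, hz1, hx1, rfl⟩ m2 ⟨y2, z2, hy2, hz2, hx2, rfl⟩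
      rw [hνS]
      calc sInf (S (x + y)) ≤ max (ν (y1 + y2)) (ν (z1 + z2)) :=
            csInf_le (hbdd _) ⟨y1 + y2, z1 + z2, add_nonneg hy1 hy2, add_nonneg hz1 hz2,
              by rw [hx1, hx2]; abel, rfl⟩
        _ ≤ _ := by
            apply max_le
            · exact le_trans (hsub _ _ hy1 hy2)
                (add_le_add (le_max_left _ _) (le_max_left _ _))
            · exact le_trans (hsub _ _ hz1 hz2)
                (add_le_add (le_max_right _ _) (le_max_right _ _))
    have step1 : ∀ m1 ∈ S x, νhat (x + y) - m1 ≤ νhat y := by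
      intro m1 hm1
      rw [hνS y]
      apply le_csInf (hne y)
      intro m2 hm2
      linarith [key m1 hm1 m2 hm2]
    have step2 : νhat (x + y) - νhat y ≤ νhat x := by
      rw [hνS x]
      apply le_csInf (hne x)
      intro m1 hm1
      linarith [step1 m1 hm1]
    linarith
  have hneg : ∀ x, νhat (-x) = νhat x := by
    have hSS : ∀ x, S x ⊆ S (-x) := by
      intro x
      rintro m ⟨y, z, hy, hz, hxe, rfl⟩
      exact ⟨z, y, hz, hy, by rw [hxe]; abel, max_comm _ _⟩
    intro x
    rw [hνS, hνS]
    have h1 := hSS x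
    have h2 := hSS (-x)
    rw [neg_neg] at h2
    rw [Set.Subset.antisymm h2 h1]
  have hle : ∀ t : ℝ, 0 < t → ∀ x, νhat (t • x) ≤ t * νhat x := by
    intro t ht x
    rw [hνS x, ← div_le_iff₀' ht]
    apply le_csInf (hne x)
    rintro m ⟨y, z, hy, hz, hxe, rfl⟩
    rw [div_le_iff₀' ht, hνS]
    apply csInf_le (hbdd _)
    refine ⟨t • y, t • z, smul_nonneg ht.le hy, smul_nonneg ht.le hz,
      by rw [hxe, smul_sub], ?_⟩
    rw [hhom t ht y hy, hhom t ht z hz]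
    exact mul_max_of_nonneg _ _ ht.le
  have hposeq : ∀ t : ℝ, 0 < t → ∀ x, νhat (t • x) = t * νhat x := by
    intro t ht x
    refine le_antisymm (hle t ht x) ?_
    have h := hle t⁻¹ (by positivity) (t • x)
    rw [smul_smul, inv_mul_cancel₀ ht.ne', one_smul] at h
    have h2 : t * νhat x ≤ t * (t⁻¹ * νhat (t • x)) :=
      mul_le_mul_of_nonneg_left h ht.le
    rw [← mul_assoc, mul_inv_cancel₀ ht.ne', one_mul] at h2
    exact h2
  have hhat0 : νhat 0 = 0 := by rw [hagree 0 le_rfl, hν0]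
  have hhomog : ∀ (t : ℝ) (x : Fin n → ℝ), νhat (t • x) = |t| * νhat x := by
    intro t x
    rcases lt_trichotomy t 0 with h | h | h
    · have he : t • x = (-t) • (-x) := by rw [neg_smul_neg]
      rw [he, hposeq (-t) (by linarith) (-x), hneg, abs_of_neg h]
    · subst h
      rw [zero_smul, hhat0, abs_zero, zero_mul]
    · rw [hposeq t h, abs_of_pos h]
  have hdefhat : ∀ x, νhat x = 0 ↔ x = 0 := by
    intro x
    constructor
    · intro h0
      by_contra hx
      obtain ⟨i, hi⟩ : ∃ i, x i ≠ 0 := by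
        by_contra hc
        push_neg at hc
        exact hx (funext hc)
      set e : Fin n → ℝ := Pi.single i 1 with he
      have he_nn : (0 : Fin n → ℝ) ≤ e := by
        intro j
        by_cases hj : j = i <;> simp [he, Pi.single_apply, hj]
      have hepos : 0 < ν e := by
        rcases (hνnn e he_nn).lt_or_eq with h | h
        · exact h
        · exfalso
          have h1 := hdef e he_nn h.symm
          have h2 := congrFun h1 i
          simp [he] at h2
      have hlow : ∀ m ∈ S x, |x i| * ν e ≤ m := by
        rintro m ⟨y, z, hy, hz, hxe, rfl⟩
        have hyz : x i = y i - z i := by rw [hxe]; simp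
        rcases hi.lt_or_gt with hneg' | hpos'
        · have hzi : -x i ≤ z i := by
            have := hy i
            simp only [Pi.zero_apply] at this
            linarith
          have hle' : ((-x i) • e) ≤ z := by
            intro j
            by_cases hj : j = i
            · subst hj
              simp only [Pi.smul_apply, he, Pi.single_eq_same, smul_eq_mul, mul_one]
              linarith
            · have := hz j
              simp only [Pi.zero_apply] at this
              simp [he, Pi.single_apply, hj, this]
          have hm := hmono _ z (smul_nonneg (by linarith) he_nn) hle'
          rw [hhom (-x i) (by linarith) e he_nn] at hm
          rw [abs_of_neg hneg']
          exact le_trans hm (le_max_right _ _)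
        · have hyi : x i ≤ y i := by
            have := hz i
            simp only [Pi.zero_apply] at this
            linarith
          have hle' : ((x i) • e) ≤ y := by
            intro j
            by_cases hj : j = i
            · subst hj
              simp only [Pi.smul_apply, he, Pi.single_eq_same, smul_eq_mul, mul_one]
              linarith
            · have := hy j
              simp only [Pi.zero_apply] at this
              simp [he, Pi.single_apply, hj, this]
          have hm := hmono _ y (smul_nonneg hpos'.le he_nn) hle'
          rw [hhom (x i) hpos' e he_nn] at hm
          rw [abs_of_pos hpos']
          exact le_trans hm (le_max_left _ _)
      have hlb : |x i| * ν e ≤ νhat x := by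
        rw [hνS]
        exact le_csInf (hne x) hlow
      have : 0 < |x i| * ν e := mul_pos (abs_pos.mpr hi) hepos
      linarith
    · rintro rfl; exact hhat0
  exact ⟨hnn, hdefhat, hhomog, htri, hagree⟩
end

section
/- Let f : ℝ₊ⁿ → ℝ₊ⁿ be continuous, monotone (x ≤ y implies f(x) ≤ f(y)) and positively homogeneous of degree one. Then the maximum max{ρ ≥ 0 : ∃ v ∈ ℝ₊ⁿ, v ≠ 0, f(v) ≥ ρ v} is attained, and any λ ≥ 0 such that f(v) ≥ λ v for some nonzero v ∈ ℝ₊ⁿ satisfies λ ≤ inf{ρ > 0 : ∃ u with all entries positive, f(u) ≤ ρ u}. -/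
/-- Auxiliary: the Collatz–Wielandt upper bound. -/
lemma cw_aux {n : ℕ} (hn : 0 < n)
    (f : (Fin n → ℝ) → (Fin n → ℝ))
    (hmono : ∀ x y : Fin n → ℝ, 0 ≤ x → x ≤ y → f x ≤ f y)
    (hhom : ∀ t : ℝ, 0 < t → ∀ x : Fin n → ℝ, 0 ≤ x → f (t • x) = t • f x) :
    ∀ lam : ℝ, 0 ≤ lam → (∃ v : Fin n → ℝ, 0 ≤ v ∧ v ≠ 0 ∧ lam • v ≤ f v) →
      ∀ ρ : ℝ, 0 < ρ → (∃ u : Fin n → ℝ, (∀ i, 0 < u i) ∧ f u ≤ ρ • u) → lam ≤ ρ := by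
  intro lam hlam ⟨v, hv0, hvne, hvf⟩ ρ hρ ⟨u, hu, huf⟩
  haveI : Nonempty (Fin n) := ⟨⟨0, hn⟩⟩
  have hu0 : (0 : Fin n → ℝ) ≤ u := fun i => (hu i).le
  set t := Finset.univ.sup' Finset.univ_nonempty (fun i => v i / u i) with ht_def
  obtain ⟨j, -, hj⟩ := Finset.exists_mem_eq_sup' Finset.univ_nonempty (fun i => v i / u i)
  have hvpos : ∃ k, 0 < v k := by
    by_contra h
    push_neg at h
    exact hvne (funext fun k => le_antisymm (h k) (hv0 k))
  obtain ⟨k, hk⟩ := hvpos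
  have ht : 0 < t :=
    lt_of_lt_of_le (div_pos hk (hu k))
      (Finset.le_sup' (fun i => v i / u i) (Finset.mem_univ k))
  have hvtu : v ≤ t • u := by
    intro i
    have h1 : v i / u i ≤ t := Finset.le_sup' (fun i => v i / u i) (Finset.mem_univ i)
    have h2 : v i = (v i / u i) * u i := (div_mul_cancel₀ (v i) (hu i).ne').symm
    calc v i = (v i / u i) * u i := h2
      _ ≤ t * u i := mul_le_mul_of_nonneg_right h1 (hu i).le
      _ = (t • u) i := rfl
  have hchain : lam • v ≤ (t * ρ) • u := by
    calc lam • v ≤ f v := hvf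
      _ ≤ f (t • u) := hmono v (t • u) hv0 hvtu
      _ = t • f u := hhom t ht u hu0
      _ ≤ t • (ρ • u) := fun i => mul_le_mul_of_nonneg_left (huf i) ht.le
      _ = (t * ρ) • u := by rw [smul_smul]
  have hvj : v j = t * u j := by
    rw [ht_def, hj, div_mul_cancel₀ (v j) (hu j).ne']
  have hvjpos : 0 < v j := by
    rw [hvj]; exact mul_pos ht (hu j)
  have := hchain j
  simp only [Pi.smul_apply, smul_eq_mul] at this
  have hfin : lam * v j ≤ ρ * v j := by
    calc lam * v j ≤ (t * ρ) * u j := this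
      _ = ρ * (t * u j) := by ring
      _ = ρ * v j := by rw [hvj]
  exact le_of_mul_le_mul_right hfin hvjpos

/-- nonlinear Collatz–Wielandt inequality.  For a continuous, monotone,
positively homogeneous self-map of ℝ₊ⁿ, the lower Collatz–Wielandt value
`max {ρ ≥ 0 : ∃ v ≥ 0, v ≠ 0, f v ≥ ρ v}` is attained, and any such `ρ` is bounded
above by every `ρ' > 0` admitting a positive vector `u` with `f u ≤ ρ' u`. -/
theorem collatz_wielandt_inequality {n : ℕ} (hn : 0 < n)
    (f : (Fin n → ℝ) → (Fin n → ℝ))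
    (hmaps : ∀ x : Fin n → ℝ, 0 ≤ x → 0 ≤ f x)
    (hcont : ContinuousOn f {x : Fin n → ℝ | 0 ≤ x})
    (hmono : ∀ x y : Fin n → ℝ, 0 ≤ x → x ≤ y → f x ≤ f y)
    (hhom : ∀ t : ℝ, 0 < t → ∀ x : Fin n → ℝ, 0 ≤ x → f (t • x) = t • f x) :
    (∃ ρmax : ℝ, IsGreatest
        {ρ : ℝ | 0 ≤ ρ ∧ ∃ v : Fin n → ℝ, 0 ≤ v ∧ v ≠ 0 ∧ ρ • v ≤ f v} ρmax) ∧
    (∀ lam : ℝ, 0 ≤ lam → (∃ v : Fin n → ℝ, 0 ≤ v ∧ v ≠ 0 ∧ lam • v ≤ f v) →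
      ∀ ρ : ℝ, 0 < ρ → (∃ u : Fin n → ℝ, (∀ i, 0 < u i) ∧ f u ≤ ρ • u) → lam ≤ ρ) := by
  haveI : Nonempty (Fin n) := ⟨⟨0, hn⟩⟩
  have haux := cw_aux hn f hmono hhom
  refine ⟨?_, haux⟩
  set S := {ρ : ℝ | 0 ≤ ρ ∧ ∃ v : Fin n → ℝ, 0 ≤ v ∧ v ≠ 0 ∧ ρ • v ≤ f v} with hS_def
  -- bound M
  set ones : Fin n → ℝ := fun _ => 1 with hones
  have hones0 : (0 : Fin n → ℝ) ≤ ones := fun i => zero_le_one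
  set M : ℝ := 1 + ∑ i, f ones i with hM_def
  have hfones0 : 0 ≤ f ones := hmaps ones hones0
  have hMpos : 0 < M := by
    have : 0 ≤ ∑ i, f ones i := Finset.sum_nonneg fun i _ => hfones0 i
    linarith
  have hfones_le : f ones ≤ M • ones := by
    intro i
    have h1 : f ones i ≤ ∑ j, f ones j :=
      Finset.single_le_sum (fun j _ => hfones0 j) (Finset.mem_univ i)
    simp only [Pi.smul_apply, hones, smul_eq_mul, mul_one]
    linarith
  have hbound : ∀ ρ ∈ S, ρ ≤ M := fun ρ hρ =>
    haux ρ hρ.1 hρ.2 M hMpos ⟨ones, fun i => one_pos, hfones_le⟩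
  -- the compact set
  set C : Set (ℝ × (Fin n → ℝ)) :=
    {p | p.1 ∈ Set.Icc (0:ℝ) M ∧ p.2 ∈ stdSimplex ℝ (Fin n) ∧ p.1 • p.2 ≤ f p.2} with hC_def
  have hS_eq : S = Prod.fst '' C := by
    ext ρ
    constructor
    · rintro ⟨hρ0, v, hv0, hvne, hvf⟩
      have hρM : ρ ≤ M := hbound ρ ⟨hρ0, v, hv0, hvne, hvf⟩
      have hvpos : ∃ k, 0 < v k := by
        by_contra h
        push_neg at h
        exact hvne (funext fun k => le_antisymm (h k) (hv0 k))
      obtain ⟨k, hk⟩ := hvpos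
      set s : ℝ := ∑ i, v i with hs_def
      have hs : 0 < s :=
        lt_of_lt_of_le hk (Finset.single_le_sum (fun j _ => hv0 j) (Finset.mem_univ k))
      set w : Fin n → ℝ := s⁻¹ • v with hw_def
      have hw0 : (0 : Fin n → ℝ) ≤ w := fun i =>
        mul_nonneg (inv_nonneg.2 hs.le) (hv0 i)
      have hwsum : ∑ i, w i = 1 := by
        simp only [hw_def, Pi.smul_apply, smul_eq_mul, ← Finset.mul_sum]
        field_simp
        exact hs_def.symm
      refine ⟨(ρ, w), ⟨⟨hρ0, hρM⟩, ⟨fun i => hw0 i, hwsum⟩, ?_⟩, rfl⟩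
      have hfw : f w = s⁻¹ • f v := hhom s⁻¹ (inv_pos.2 hs) v hv0
      intro i
      simp only [hfw, hw_def, hhom s⁻¹ (inv_pos.2 hs) v hv0, Pi.smul_apply, smul_eq_mul]
      have := hvf i
      simp only [Pi.smul_apply, smul_eq_mul] at this
      calc ρ * (s⁻¹ * v i) = s⁻¹ * (ρ * v i) := by ring
        _ ≤ s⁻¹ * f v i := mul_le_mul_of_nonneg_left this (inv_nonneg.2 hs.le)
    · rintro ⟨⟨ρ', v⟩, ⟨⟨hρ0, hρM⟩, ⟨hv0, hvsum⟩, hvf⟩, rfl⟩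
      refine ⟨hρ0, v, fun i => hv0 i, ?_, hvf⟩
      intro h
      rw [h] at hvsum
      simp at hvsum
  -- compactness
  have hK : IsCompact ((Set.Icc (0:ℝ) M) ×ˢ stdSimplex ℝ (Fin n)) :=
    (isCompact_Icc).prod (isCompact_stdSimplex ℝ (Fin n))
  have hKclosed : IsClosed ((Set.Icc (0:ℝ) M) ×ˢ stdSimplex ℝ (Fin n)) :=
    isClosed_Icc.prod (isClosed_stdSimplex ℝ (Fin n))
  have hgcont : ContinuousOn (fun p : ℝ × (Fin n → ℝ) => f p.2 - p.1 • p.2)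
      ((Set.Icc (0:ℝ) M) ×ˢ stdSimplex ℝ (Fin n)) := by
    apply ContinuousOn.sub
    · apply hcont.comp continuous_snd.continuousOn
      rintro ⟨a, b⟩ ⟨-, hb⟩
      exact fun i => hb.1 i
    · exact (continuous_fst.smul continuous_snd).continuousOn
  have hCclosed : IsClosed C := by
    have : C = ((Set.Icc (0:ℝ) M) ×ˢ stdSimplex ℝ (Fin n)) ∩
        (fun p : ℝ × (Fin n → ℝ) => f p.2 - p.1 • p.2) ⁻¹' {y | 0 ≤ y} := by
      ext ⟨a, b⟩
      simp only [hC_def, Set.mem_inter_iff, Set.mem_prod, Set.mem_preimage,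
        Set.mem_setOf_eq]
      constructor
      · rintro ⟨h1, h2, h3⟩
        exact ⟨⟨h1, h2⟩, fun i => by simpa using sub_nonneg.2 (h3 i) ⟩
      · rintro ⟨⟨h1, h2⟩, h3⟩
        refine ⟨h1, h2, fun i => ?_⟩
        have := h3 i
        simp only [Pi.sub_apply, Pi.zero_apply] at this
        linarith [this]
    rw [this]
    exact hgcont.preimage_isClosed_of_isClosed hKclosed isClosed_Ici
  have hCK : C ⊆ (Set.Icc (0:ℝ) M) ×ˢ stdSimplex ℝ (Fin n) := by
    rintro ⟨a, b⟩ ⟨h1, h2, -⟩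
    exact ⟨h1, h2⟩
  have hCcompact : IsCompact C := hK.of_isClosed_subset hCclosed hCK
  have hScompact : IsCompact S := by
    rw [hS_eq]
    exact hCcompact.image continuous_fst
  have hSne : S.Nonempty := by
    have hnR : (0:ℝ) < (n:ℝ)⁻¹ := inv_pos.2 (Nat.cast_pos.2 hn)
    have hw0 : (0 : Fin n → ℝ) ≤ fun _ => (n:ℝ)⁻¹ := fun i => hnR.le
    refine ⟨0, le_refl 0, (fun _ => (n:ℝ)⁻¹), hw0, ?_, ?_⟩
    · intro h
      have h2 := congrFun h ⟨0, hn⟩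
      exact hnR.ne' h2
    · rw [zero_smul]
      exact hmaps _ hw0
  exact hScompact.exists_isGreatest hSne
end

section
/- Let 𝒜 = {A₁, …, A_p} be a finite set of nonnegative n×n matrices, let u₁, …, u_m be nonnegative vectors in ℝ₊ⁿ whose sum has all entries positive, and let λ > 0. Suppose that for every a ∈ [p] and every index r ∈ [m], the inequality ⟨u_r, A_a x⟩ ≤ λ · max_s ⟨u_s, x⟩ holds for all x ∈ ℝ₊ⁿ. Then the map x ↦ max_s ⟨u_s, x⟩ is a monotone hemi-norm ν on ℝ₊ⁿ satisfying max_a ν(A_a x) ≤ λ ν(x) for all x ∈ ℝ₊ⁿ, and consequently λ ≥ ρ(𝒜), the joint spectral radius of 𝒜. -/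
open Matrix Filter

/-- if nonnegative vectors `u₁,…,u_m` with positive sum and `λ > 0`
satisfy `⟨u_r, A_a x⟩ ≤ λ · max_s ⟨u_s, x⟩` for all `a`, `r` and `x ≥ 0`, then
`ν x = max_s ⟨u_s, x⟩` is a monotone hemi-norm with `max_a ν (A_a x) ≤ λ ν x`,
and consequently the joint spectral radius `ρ(𝒜)` satisfies `ρ(𝒜) ≤ λ`. -/
theorem extremal_heminorm_from_eigenvector {n p m : ℕ} (hp : 0 < p) (hm : 0 < m)
    (A : Fin p → Matrix (Fin n) (Fin n) ℝ)
    (hA : ∀ a, ∀ i j, 0 ≤ A a i j)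
    (u : Fin m → Fin n → ℝ) (hu : ∀ r, 0 ≤ u r)
    (husum : ∀ i, 0 < ∑ r, u r i)
    (lam : ℝ) (hlam : 0 < lam)
    (hineq : ∀ (a : Fin p) (r : Fin m) (x : Fin n → ℝ), 0 ≤ x →
      u r ⬝ᵥ (A a).mulVec x ≤ lam * ⨆ s : Fin m, u s ⬝ᵥ x)
    (ρ : ℝ)
    (hρ : Tendsto (fun k : ℕ => ⨆ w : Fin k → Fin p,
        (⨆ i : Fin n, ⨆ j : Fin n, |((List.ofFn fun j => A (w j)).prod) i j|) ^ ((1 : ℝ) / k))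
      atTop (nhds ρ))
    (ν : (Fin n → ℝ) → ℝ) (hν : ∀ x, ν x = ⨆ s : Fin m, u s ⬝ᵥ x) :
    ((∀ x y : Fin n → ℝ, 0 ≤ x → 0 ≤ y → ∀ t : ℝ, 0 ≤ t → t ≤ 1 →
        ν (t • x + (1 - t) • y) ≤ t * ν x + (1 - t) * ν y) ∧
      (∀ t : ℝ, 0 < t → ∀ x : Fin n → ℝ, 0 ≤ x → ν (t • x) = t * ν x) ∧
      (∀ x y : Fin n → ℝ, 0 ≤ x → x ≤ y → ν x ≤ ν y) ∧
      (∀ x : Fin n → ℝ, 0 ≤ x → ν x = 0 → x = 0) ∧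
      (∀ (a : Fin p) (x : Fin n → ℝ), 0 ≤ x → ν ((A a).mulVec x) ≤ lam * ν x)) ∧
    ρ ≤ lam := by
  haveI : NeZero m := ⟨hm.ne'⟩
  haveI : NeZero p := ⟨hp.ne'⟩
  have hbdd : ∀ x : Fin n → ℝ, BddAbove (Set.range fun s : Fin m => u s ⬝ᵥ x) :=
    fun x => Set.Finite.bddAbove (Set.finite_range _)
  have hle : ∀ (r : Fin m) (x : Fin n → ℝ), u r ⬝ᵥ x ≤ ν x := by
    intro r x; rw [hν]; exact le_ciSup (hbdd x) r
  have hdot : ∀ (r : Fin m) (x : Fin n → ℝ), 0 ≤ x → 0 ≤ u r ⬝ᵥ x := fun r x hx =>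
    Finset.sum_nonneg fun i _ => mul_nonneg (hu r i) (hx i)
  have hν_nonneg : ∀ x : Fin n → ℝ, 0 ≤ x → 0 ≤ ν x := fun x hx =>
    le_trans (hdot 0 x hx) (hle 0 x)
  have hν_le : ∀ (x : Fin n → ℝ) (c : ℝ), (∀ s : Fin m, u s ⬝ᵥ x ≤ c) → ν x ≤ c := by
    intro x c h; rw [hν]; exact ciSup_le h
  -- the key inequality
  have hkey : ∀ (a : Fin p) (x : Fin n → ℝ), 0 ≤ x → ν ((A a).mulVec x) ≤ lam * ν x := by
    intro a x hx
    refine hν_le _ _ fun r => ?_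
    rw [hν x]
    exact hineq a r x hx
  -- nonnegativity of mulVec
  have hmv : ∀ (M : Matrix (Fin n) (Fin n) ℝ), (∀ i j, 0 ≤ M i j) →
      ∀ x : Fin n → ℝ, 0 ≤ x → 0 ≤ M.mulVec x := by
    intro M hM x hx i
    simp only [Pi.zero_apply, Matrix.mulVec, dotProduct]
    exact Finset.sum_nonneg fun j _ => mul_nonneg (hM i j) (hx j)
  refine ⟨⟨?_, ?_, ?_, ?_, hkey⟩, ?_⟩
  · -- convexity
    intro x y hx hy t ht ht1
    refine hν_le _ _ fun s => ?_
    have : u s ⬝ᵥ (t • x + (1 - t) • y) = t * (u s ⬝ᵥ x) + (1 - t) * (u s ⬝ᵥ y) := by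
      simp [dotProduct_add, dotProduct_smul, smul_eq_mul]
    rw [this]
    exact add_le_add (mul_le_mul_of_nonneg_left (hle s x) ht)
      (mul_le_mul_of_nonneg_left (hle s y) (by linarith))
  · -- homogeneity
    intro t ht x hx
    rw [hν, hν]
    simp only [dotProduct_smul, smul_eq_mul]
    exact (Real.mul_iSup_of_nonneg ht.le _).symm
  · -- monotone
    intro x y hx hxy
    refine hν_le _ _ fun s => le_trans ?_ (hle s y)
    exact Finset.sum_le_sum fun i _ => mul_le_mul_of_nonneg_left (hxy i) (hu s i)
  · -- definiteness
    intro x hx h0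
    funext i
    have hri : ∀ r : Fin m, u r ⬝ᵥ x = 0 := fun r =>
      le_antisymm (h0 ▸ hle r x) (hdot r x hx)
    have hsum : ∑ i', (∑ r, u r i') * x i' = 0 := by
      have : ∑ r, u r ⬝ᵥ x = 0 := Finset.sum_eq_zero fun r _ => hri r
      calc ∑ i', (∑ r, u r i') * x i' = ∑ i', ∑ r, u r i' * x i' := by
            simp [Finset.sum_mul]
        _ = ∑ r, u r ⬝ᵥ x := Finset.sum_comm
        _ = 0 := this
    have hterm : (∑ r, u r i) * x i = 0 := by
      have := (Finset.sum_eq_zero_iff_of_nonneg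
        (fun i' _ => mul_nonneg (husum i').le (hx i'))).mp hsum i (Finset.mem_univ i)
      exact this
    have := husum i
    show x i = 0
    by_contra hxi
    exact hxi (by
      rcases mul_eq_zero.mp hterm with h | h
      · exact absurd h (husum i).ne'
      · exact h)
  · -- ρ ≤ lam
    -- products
    have hprod : ∀ L : List (Matrix (Fin n) (Fin n) ℝ), (∀ M ∈ L, ∃ a, M = A a) →
        ∀ x : Fin n → ℝ, 0 ≤ x →
        0 ≤ L.prod.mulVec x ∧ ν (L.prod.mulVec x) ≤ lam ^ L.length * ν x := by
      intro L
      induction L with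
      | nil => intro _ x hx; simp [Matrix.one_mulVec]; exact hx
      | cons M L ih =>
        intro hmem x hx
        obtain ⟨a, rfl⟩ := hmem M List.mem_cons_self
        have ih' := ih (fun N hN => hmem N (List.mem_cons_of_mem _ hN)) x hx
        rw [List.prod_cons, ← Matrix.mulVec_mulVec]
        constructor
        · exact hmv _ (hA a) _ ih'.1
        · calc ν ((A a).mulVec (L.prod.mulVec x)) ≤ lam * ν (L.prod.mulVec x) :=
              hkey a _ ih'.1
            _ ≤ lam * (lam ^ L.length * ν x) :=
              mul_le_mul_of_nonneg_left ih'.2 hlam.le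
            _ = lam ^ (A a :: L).length * ν x := by rw [List.length_cons]; ring
    rcases Nat.eq_zero_or_pos n with hn | hn
    · -- n = 0 : the sequence is eventually 0, so ρ = 0
      subst hn
      haveI : IsEmpty (Fin 0) := inferInstance
      have heq : ∀ᶠ k : ℕ in atTop, (⨆ w : Fin k → Fin p,
          (⨆ i : Fin 0, ⨆ j : Fin 0, |((List.ofFn fun j => A (w j)).prod) i j|)
            ^ ((1 : ℝ) / k)) = 0 := by
        filter_upwards [eventually_ge_atTop 1] with k hk
        have : ∀ w : Fin k → Fin p,
            (⨆ i : Fin 0, ⨆ j : Fin 0, |((List.ofFn fun j => A (w j)).prod) i j|)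
              ^ ((1 : ℝ) / k) = 0 := by
          intro w
          rw [Real.iSup_of_isEmpty, Real.zero_rpow]
          positivity
        simp only [this]
        exact ciSup_const
      have h0 : Tendsto (fun k : ℕ => ⨆ w : Fin k → Fin p,
          (⨆ i : Fin 0, ⨆ j : Fin 0, |((List.ofFn fun j => A (w j)).prod) i j|)
            ^ ((1 : ℝ) / k)) atTop (nhds 0) :=
        tendsto_const_nhds.congr' (heq.mono fun k h => h.symm)
      have : ρ = 0 := tendsto_nhds_unique hρ h0
      rw [this]; exact hlam.le
    · haveI : NeZero n := ⟨hn.ne'⟩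
      set c : ℝ := Finset.univ.inf' Finset.univ_nonempty (fun i : Fin n => ∑ r, u r i) with hc_def
      have hc : 0 < c := (Finset.lt_inf'_iff _).mpr fun i _ => husum i
      set M0 : ℝ := Finset.univ.sup' Finset.univ_nonempty
        (fun j : Fin n => ν (Pi.single j (1 : ℝ))) with hM0_def
      have hsingle : ∀ j : Fin n, (0 : Fin n → ℝ) ≤ Pi.single j (1 : ℝ) := by
        intro j i
        classical
        rcases eq_or_ne i j with rfl | h
        · simp
        · simp [Pi.single_apply, h]
      have hM0 : 0 ≤ M0 := le_trans (hν_nonneg _ (hsingle ⟨0, hn⟩))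
        (Finset.le_sup' (fun j : Fin n => ν (Pi.single j (1 : ℝ))) (Finset.mem_univ (⟨0, hn⟩ : Fin n)))
      set C : ℝ := max 1 (↑m * M0 / c) with hC_def
      have hC1 : (1 : ℝ) ≤ C := le_max_left _ _
      have hC0 : (0 : ℝ) < C := lt_of_lt_of_le one_pos hC1
      -- lower bound:  c * y i ≤ m * ν y  for y ≥ 0
      have hlow : ∀ (y : Fin n → ℝ), 0 ≤ y → ∀ i, c * y i ≤ ↑m * ν y := by
        intro y hy i
        have h1 : c * y i ≤ (∑ r, u r i) * y i :=
          mul_le_mul_of_nonneg_right (Finset.inf'_le _ (Finset.mem_univ i)) (hy i)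
        have h2 : (∑ r, u r i) * y i ≤ ∑ i', (∑ r, u r i') * y i' :=
          Finset.single_le_sum (fun i' _ => mul_nonneg (husum i').le (hy i'))
            (Finset.mem_univ i)
        have h3 : ∑ i', (∑ r, u r i') * y i' = ∑ r, u r ⬝ᵥ y := by
          simp only [Finset.sum_mul, dotProduct]
          exact Finset.sum_comm
        have h4 : ∑ r, u r ⬝ᵥ y ≤ ∑ _r : Fin m, ν y :=
          Finset.sum_le_sum fun r _ => hle r y
        have h5 : ∑ _r : Fin m, ν y = ↑m * ν y := by
          simp [Finset.sum_const, nsmul_eq_mul]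
        linarith
      -- entry bound
      have hentry : ∀ (k : ℕ) (w : Fin k → Fin p) (i j : Fin n),
          0 ≤ ((List.ofFn fun j => A (w j)).prod) i j ∧
          ((List.ofFn fun j => A (w j)).prod) i j ≤ C * lam ^ k := by
        intro k w i j
        set L := List.ofFn fun j => A (w j) with hL
        have hmem : ∀ M ∈ L, ∃ a, M = A a := by
          intro M hM
          rw [hL, List.mem_ofFn] at hM
          obtain ⟨s, rfl⟩ := hM
          exact ⟨w s, rfl⟩
        have hlen : L.length = k := by rw [hL, List.length_ofFn]
        have hp' := hprod L hmem (Pi.single j 1) (hsingle j)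
        have hval : L.prod.mulVec (Pi.single j 1) i = L.prod i j := by
          rw [Matrix.mulVec_single]; simp
        constructor
        · rw [← hval]; exact hp'.1 i
        · have h1 : c * L.prod i j ≤ ↑m * ν (L.prod.mulVec (Pi.single j 1)) := by
            rw [← hval]; exact hlow _ hp'.1 i
          have h2 : ν (L.prod.mulVec (Pi.single j 1)) ≤ lam ^ k * M0 := by
            refine le_trans (hlen ▸ hp'.2) ?_
            exact mul_le_mul_of_nonneg_left
              (Finset.le_sup' (fun j : Fin n => ν (Pi.single j (1 : ℝ))) (Finset.mem_univ j)) (pow_nonneg hlam.le k)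
          have h3 : c * L.prod i j ≤ ↑m * (lam ^ k * M0) :=
            le_trans h1 (mul_le_mul_of_nonneg_left h2 (Nat.cast_nonneg m))
          have h4 : L.prod i j ≤ ↑m * M0 / c * lam ^ k := by
            rw [div_mul_eq_mul_div, le_div_iff₀ hc]
            nlinarith
          exact le_trans h4 (mul_le_mul_of_nonneg_right (le_max_right _ _)
            (pow_nonneg hlam.le k))
      -- per-term bound for k ≥ 1
      have hterm : ∀ᶠ k : ℕ in atTop, (⨆ w : Fin k → Fin p,
          (⨆ i : Fin n, ⨆ j : Fin n, |((List.ofFn fun j => A (w j)).prod) i j|)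
            ^ ((1 : ℝ) / k)) ≤ C ^ ((1 : ℝ) / k) * lam := by
        filter_upwards [eventually_ge_atTop 1] with k hk
        have hk0 : (k : ℝ) ≠ 0 := Nat.cast_ne_zero.mpr (by omega)
        refine ciSup_le fun w => ?_
        have hsup_le : (⨆ i : Fin n, ⨆ j : Fin n,
            |((List.ofFn fun j => A (w j)).prod) i j|) ≤ C * lam ^ k := by
          refine ciSup_le fun i => ciSup_le fun j => ?_
          rw [abs_of_nonneg (hentry k w i j).1]
          exact (hentry k w i j).2
        have hsup_nonneg : 0 ≤ ⨆ i : Fin n, ⨆ j : Fin n,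
            |((List.ofFn fun j => A (w j)).prod) i j| := by
          have i0 : Fin n := ⟨0, hn⟩
          have h1 : |((List.ofFn fun j => A (w j)).prod) i0 i0| ≤
              ⨆ j : Fin n, |((List.ofFn fun j => A (w j)).prod) i0 j| :=
            le_ciSup (f := fun j : Fin n => |((List.ofFn fun j => A (w j)).prod) i0 j|)
              (Set.Finite.bddAbove (Set.finite_range _)) i0
          have h2 : (⨆ j : Fin n, |((List.ofFn fun j => A (w j)).prod) i0 j|) ≤
              ⨆ i : Fin n, ⨆ j : Fin n, |((List.ofFn fun j => A (w j)).prod) i j| :=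
            le_ciSup (f := fun i : Fin n => ⨆ j : Fin n, |((List.ofFn fun j => A (w j)).prod) i j|)
              (Set.Finite.bddAbove (Set.finite_range _)) i0
          exact (abs_nonneg _).trans (h1.trans h2)
        calc (⨆ i : Fin n, ⨆ j : Fin n,
              |((List.ofFn fun j => A (w j)).prod) i j|) ^ ((1 : ℝ) / k)
            ≤ (C * lam ^ k) ^ ((1 : ℝ) / k) :=
              Real.rpow_le_rpow hsup_nonneg hsup_le (by positivity)
          _ = C ^ ((1 : ℝ) / k) * (lam ^ k) ^ ((1 : ℝ) / k) :=
              Real.mul_rpow hC0.le (pow_nonneg hlam.le k)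
          _ = C ^ ((1 : ℝ) / k) * lam := by
              rw [← Real.rpow_natCast lam k, ← Real.rpow_mul hlam.le,
                mul_one_div_cancel hk0, Real.rpow_one]
      -- the bound tends to lam
      have hglim : Tendsto (fun k : ℕ => C ^ ((1 : ℝ) / k) * lam) atTop (nhds lam) := by
        have h1 : Tendsto (fun k : ℕ => (1 : ℝ) / k) atTop (nhds 0) :=
          tendsto_one_div_atTop_nhds_zero_nat
        have h2 : Tendsto (fun k : ℕ => C ^ ((1 : ℝ) / k)) atTop (nhds 1) := by
          have := (Real.continuousAt_const_rpow (a := C) (b := 0) hC0.ne').tendsto.comp h1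
          simpa [Real.rpow_zero, Function.comp_def] using this
        have := h2.mul_const lam
        simpa using this
      exact le_of_tendsto_of_tendsto hρ hglim hterm
end

section
/- For the operators T^d of the hierarchy, the nonlinear spectral radius is non-increasing in d: r(T^{d+1}) ≤ r(T^d), provided the finite set of nonnegative matrices 𝒜 is positively irreducible. -/
open Matrix

/-- Transition map of the De Bruijn automaton of depth `d` on `p` symbols:
`τ(i₁⋯i_d, a) = i₂⋯i_d a`. -/
def deBruijnShift {p : ℕ} (d : ℕ) (r : Fin d → Fin p) (a : Fin p) : Fin d → Fin p :=
  fun i => if h : (i : ℕ) + 1 < d then r ⟨(i : ℕ) + 1, h⟩ else a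

/-- The depth-`d` operator of the hierarchy, acting on the product cone
`∏_{s ∈ [p]^d} ℝ₊ⁿ` (encoded on the index type `(Fin d → Fin p) × Fin n`):
`T^d_s(x) = sup { A_aᵀ x_r : τ^d(r, a) = s }`, componentwise. -/
noncomputable def deBruijnOp {n p : ℕ} (A : Fin p → Matrix (Fin n) (Fin n) ℝ) (d : ℕ)
    (x : (Fin d → Fin p) × Fin n → ℝ) : (Fin d → Fin p) × Fin n → ℝ :=
  fun q => ⨆ ra : {ra : (Fin d → Fin p) × Fin p // deBruijnShift d ra.1 ra.2 = q.1},
    (A ra.1.2)ᵀ.mulVec (fun j => x (ra.1.1, j)) q.2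

/-- The (nonlinear) spectral radius, via the Collatz–Wielandt formula
`r(f) = inf {ρ > 0 : ∃ u > 0, f(u) ≤ ρ u}`. -/
noncomputable def cwRadius {ι : Type*} [Fintype ι] (f : (ι → ℝ) → (ι → ℝ)) : ℝ :=
  sInf {ρ : ℝ | 0 < ρ ∧ ∃ u : ι → ℝ, (∀ i, 0 < u i) ∧ f u ≤ ρ • u}

/-- A family of nonnegative matrices is positively irreducible if no non-trivial
face of ℝ₊ⁿ is invariant by all the matrices. -/
def PosIrredFamily {n p : ℕ} (A : Fin p → Matrix (Fin n) (Fin n) ℝ) : Prop :=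
  ∀ I : Set (Fin n), I.Nonempty → I ≠ Set.univ →
    ¬ (∀ (a : Fin p) (x : Fin n → ℝ), (0 ≤ x ∧ ∀ i ∉ I, x i = 0) →
        (0 ≤ (A a).mulVec x ∧ ∀ i ∉ I, (A a).mulVec x i = 0))

/-- Every word is in the image of the shift. -/
lemma deBruijnShift_surj {p d : ℕ} (hp : 0 < p) (s : Fin d → Fin p) :
    ∃ ra : (Fin d → Fin p) × Fin p, deBruijnShift d ra.1 ra.2 = s := by
  refine ⟨⟨fun j => if h : 1 ≤ (j : ℕ) then s ⟨(j : ℕ) - 1, by omega⟩ else ⟨0, hp⟩,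
    if h : 0 < d then s ⟨d - 1, by omega⟩ else ⟨0, hp⟩⟩, ?_⟩
  funext i
  simp only [deBruijnShift]
  by_cases h : (i : ℕ) + 1 < d
  · rw [dif_pos h]
    have h1 : 1 ≤ (((⟨(i : ℕ) + 1, h⟩ : Fin d)) : ℕ) := by simp
    rw [dif_pos h1]
    congr 1
  · rw [dif_neg h, dif_pos i.pos]
    have hi := i.isLt
    congr 1
    apply Fin.ext
    simp only []
    omega

/-- The tail projection intertwines the shifts. -/
lemma deBruijnShift_tail {p d : ℕ} (r : Fin (d + 1) → Fin p) (a : Fin p) :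
    deBruijnShift d (fun i => r i.succ) a = fun i => deBruijnShift (d + 1) r a i.succ := by
  funext i
  simp only [deBruijnShift, Fin.val_succ]
  split_ifs with h h'
  · congr 1
  · omega
  · omega
  · rfl

/-- for a positively irreducible family of nonnegative matrices,
the spectral radii of the hierarchy are non-increasing: `r(T^{d+1}) ≤ r(T^d)`. -/
theorem cwRadius_deBruijnOp_antitone {n p : ℕ} (hn : 0 < n) (hp : 0 < p)
    (A : Fin p → Matrix (Fin n) (Fin n) ℝ)
    (hA : ∀ a, ∀ i j, 0 ≤ A a i j)
    (hirr : PosIrredFamily A) (d : ℕ) :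
    cwRadius (deBruijnOp A (d + 1)) ≤ cwRadius (deBruijnOp A d) := by
  have hne : ∀ (e : ℕ) (s : Fin e → Fin p),
      Nonempty {ra : (Fin e → Fin p) × Fin p // deBruijnShift e ra.1 ra.2 = s} := by
    intro e s
    obtain ⟨ra, hra⟩ := deBruijnShift_surj hp s
    exact ⟨⟨ra, hra⟩⟩
  have hbdd : BddBelow {ρ : ℝ | 0 < ρ ∧ ∃ u : ((Fin (d+1) → Fin p) × Fin n) → ℝ,
      (∀ i, 0 < u i) ∧ deBruijnOp A (d+1) u ≤ ρ • u} :=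
    ⟨0, fun ρ hρ => le_of_lt hρ.1⟩
  -- the depth-d set is nonempty
  have hSne : Set.Nonempty {ρ : ℝ | 0 < ρ ∧ ∃ u : ((Fin d → Fin p) × Fin n) → ℝ,
      (∀ i, 0 < u i) ∧ deBruijnOp A d u ≤ ρ • u} := by
    set M : ℝ := 1 + ∑ b : Fin p, ∑ j : Fin n, ∑ i : Fin n, A b j i with hM
    have hMsum : (0:ℝ) ≤ ∑ b : Fin p, ∑ j : Fin n, ∑ i : Fin n, A b j i := by
      refine Finset.sum_nonneg fun b _ => Finset.sum_nonneg fun j _ =>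
        Finset.sum_nonneg fun i _ => hA b j i
    have hMpos : 0 < M := by positivity
    refine ⟨M, hMpos, fun _ => 1, fun _ => one_pos, fun q => ?_⟩
    have := hne d q.1
    refine ciSup_le fun ra => ?_
    have hterm : (A ra.1.2)ᵀ.mulVec (fun _ => (1:ℝ)) q.2 = ∑ j : Fin n, A ra.1.2 j q.2 := by
      simp [mulVec, dotProduct, transpose]
    rw [hterm]
    have h1 : ∑ j : Fin n, A ra.1.2 j q.2 ≤ ∑ j : Fin n, ∑ i : Fin n, A ra.1.2 j i := by
      refine Finset.sum_le_sum fun j _ => ?_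
      exact Finset.single_le_sum (fun i _ => hA ra.1.2 j i) (Finset.mem_univ q.2)
    have h2 : ∑ j : Fin n, ∑ i : Fin n, A ra.1.2 j i
        ≤ ∑ b : Fin p, ∑ j : Fin n, ∑ i : Fin n, A b j i :=
      Finset.single_le_sum (fun b _ => Finset.sum_nonneg fun j _ =>
        Finset.sum_nonneg fun i _ => hA b j i) (Finset.mem_univ ra.1.2)
    have : M • (1:ℝ) = M := by simp
    calc ∑ j : Fin n, A ra.1.2 j q.2 ≤ ∑ b : Fin p, ∑ j : Fin n, ∑ i : Fin n, A b j i :=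
          le_trans h1 h2
      _ ≤ M := by simp [hM]
      _ = M • (1:ℝ) := by simp
  refine csInf_le_csInf hbdd hSne ?_
  rintro ρ ⟨hρ, u, hu, hle⟩
  refine ⟨hρ, fun q => u (fun i => q.1 i.succ, q.2), fun q => hu _, fun q => ?_⟩
  have := hne (d+1) q.1
  refine ciSup_le fun ra => ?_
  -- ra : shift (d+1) ra.1.1 ra.1.2 = q.1
  have hcomm : deBruijnShift d (fun i => ra.1.1 i.succ) ra.1.2 = fun i => q.1 i.succ := by
    rw [deBruijnShift_tail]
    funext i
    rw [ra.2]
  have hkey : (A ra.1.2)ᵀ.mulVec (fun j => u (fun i => ra.1.1 i.succ, j)) q.2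
      ≤ deBruijnOp A d u (fun i => q.1 i.succ, q.2) := by
    have := hne d (fun i => q.1 i.succ)
    exact le_ciSup (f := fun rb : {rb : (Fin d → Fin p) × Fin p //
        deBruijnShift d rb.1 rb.2 = fun i => q.1 i.succ} =>
        (A rb.1.2)ᵀ.mulVec (fun j => u (rb.1.1, j)) q.2)
      (Set.Finite.bddAbove (Set.finite_range _))
      ⟨(fun i => ra.1.1 i.succ, ra.1.2), hcomm⟩
  refine le_trans (le_of_eq ?_) (le_trans hkey ?_)
  · rfl
  · have h := hle (fun i => q.1 i.succ, q.2)
    simpa using h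
end

section
/- Let 𝒜 be a positively irreducible finite set of nonnegative n×n matrices and T^0(x) = sup_{1≤a≤p} A_a^T x on ℝ₊ⁿ. Then r(T^0) ≤ n · ρ(𝒜), where ρ(𝒜) is the joint spectral radius. -/
open Matrix Filter

/-- The level-0 operator `T⁰(x) = sup_{1 ≤ a ≤ p} A_aᵀ x` (componentwise sup). -/
noncomputable def T0 {n p : ℕ} (A : Fin p → Matrix (Fin n) (Fin n) ℝ)
    (x : Fin n → ℝ) : Fin n → ℝ :=
  fun i => ⨆ a : Fin p, (A a)ᵀ.mulVec x i

namespace CWAux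

variable {n p : ℕ}

/-- product of matrices along a word -/
noncomputable def Pw (A : Fin p → Matrix (Fin n) (Fin n) ℝ) {k : ℕ} (w : Fin k → Fin p) :
    Matrix (Fin n) (Fin n) ℝ := (List.ofFn fun j => A (w j)).prod

lemma Pw_snoc (A : Fin p → Matrix (Fin n) (Fin n) ℝ) {k : ℕ} (w : Fin k → Fin p) (a : Fin p) :
    Pw A (Fin.snoc w a) = Pw A w * A a := by
  unfold Pw
  rw [List.ofFn_succ']
  simp

lemma list_prod_entry_nonneg (l : List (Matrix (Fin n) (Fin n) ℝ))
    (h : ∀ M ∈ l, ∀ i j, (0:ℝ) ≤ M i j) : ∀ i j, (0:ℝ) ≤ l.prod i j := by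
  induction l with
  | nil => intro i j; simp [Matrix.one_apply]; split <;> norm_num
  | cons M l ih =>
      intro i j
      rw [List.prod_cons, Matrix.mul_apply]
      refine Finset.sum_nonneg fun k _ => mul_nonneg (h M (List.mem_cons_self) i k)
        (ih (fun N hN => h N (List.mem_cons_of_mem _ hN)) k j)

lemma Pw_nonneg (A : Fin p → Matrix (Fin n) (Fin n) ℝ) (hA : ∀ a i j, 0 ≤ A a i j)
    {k : ℕ} (w : Fin k → Fin p) (i j : Fin n) : 0 ≤ Pw A w i j := by
  refine list_prod_entry_nonneg _ ?_ i j
  intro M hM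
  obtain ⟨m, rfl⟩ := List.mem_ofFn.1 hM
  exact hA _

/-- g k i = sup over words of length k of (𝟙 ᵥ* P_w) i -/
noncomputable def g (A : Fin p → Matrix (Fin n) (Fin n) ℝ) (k : ℕ) (i : Fin n) : ℝ :=
  ⨆ w : Fin k → Fin p, Matrix.vecMul 1 (Pw A w) i

lemma vecMul_one_apply (M : Matrix (Fin n) (Fin n) ℝ) (i : Fin n) :
    Matrix.vecMul 1 M i = ∑ j, M j i := by
  simp [Matrix.vecMul, dotProduct]

lemma vecMul_one_nonneg (M : Matrix (Fin n) (Fin n) ℝ) (hM : ∀ i j, 0 ≤ M i j) (i : Fin n) :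
    0 ≤ Matrix.vecMul 1 M i := by
  rw [vecMul_one_apply]
  exact Finset.sum_nonneg fun j _ => hM j i

lemma g_nonneg (A : Fin p → Matrix (Fin n) (Fin n) ℝ) (hA : ∀ a i j, 0 ≤ A a i j)
    (hp : 0 < p) (k : ℕ) (i : Fin n) : 0 ≤ g A k i := by
  haveI : Nonempty (Fin p) := ⟨⟨0, hp⟩⟩
  let w₀ : Fin k → Fin p := fun _ => ⟨0, hp⟩
  refine le_trans (vecMul_one_nonneg _ (Pw_nonneg A hA w₀) i) ?_
  exact le_ciSup (f := fun w : Fin k → Fin p => Matrix.vecMul 1 (Pw A w) i)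
    (Set.finite_range _).bddAbove w₀

lemma g_zero (A : Fin p → Matrix (Fin n) (Fin n) ℝ) (i : Fin n) : g A 0 i = 1 := by
  unfold g
  rw [ciSup_unique]
  have : Pw A (default : Fin 0 → Fin p) = 1 := by
    unfold Pw; simp
  rw [this, Matrix.vecMul_one]
  rfl

/-- key recursion -/
lemma g_step (A : Fin p → Matrix (Fin n) (Fin n) ℝ) (hA : ∀ a i j, 0 ≤ A a i j)
    (hp : 0 < p) (k : ℕ) (a : Fin p) (i : Fin n) :
    Matrix.vecMul (g A k) (A a) i ≤ (n : ℝ) * g A (k+1) i := by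
  haveI : Nonempty (Fin p) := ⟨⟨0, hp⟩⟩
  have hterm : ∀ j : Fin n, g A k j * A a j i ≤ g A (k+1) i := by
    intro j
    obtain ⟨w, hw⟩ := Finite.exists_max (fun w : Fin k → Fin p => Matrix.vecMul 1 (Pw A w) j)
    have hgj : g A k j = Matrix.vecMul 1 (Pw A w) j := by
      exact le_antisymm (ciSup_le hw) (le_ciSup (f := fun w : Fin k → Fin p => Matrix.vecMul 1 (Pw A w) j) (Set.finite_range _).bddAbove w)
    have h1 : Matrix.vecMul 1 (Pw A w) j * A a j i ≤ Matrix.vecMul (Matrix.vecMul 1 (Pw A w)) (A a) i := by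
      have : Matrix.vecMul (Matrix.vecMul 1 (Pw A w)) (A a) i
          = ∑ j', Matrix.vecMul 1 (Pw A w) j' * A a j' i := by
        simp [Matrix.vecMul, dotProduct]
      rw [this]
      refine Finset.single_le_sum (fun j' _ => mul_nonneg
        (vecMul_one_nonneg _ (Pw_nonneg A hA w) j') (hA a j' i)) (Finset.mem_univ j)
    have h2 : Matrix.vecMul (Matrix.vecMul 1 (Pw A w)) (A a) i ≤ g A (k+1) i := by
      rw [Matrix.vecMul_vecMul, ← Pw_snoc]
      exact le_ciSup (f := fun w : Fin (k+1) → Fin p => Matrix.vecMul 1 (Pw A w) i)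
        (Set.finite_range _).bddAbove (Fin.snoc w a : Fin (k+1) → Fin p)
    calc g A k j * A a j i = Matrix.vecMul 1 (Pw A w) j * A a j i := by rw [hgj]
      _ ≤ _ := h1
      _ ≤ _ := h2
  calc Matrix.vecMul (g A k) (A a) i = ∑ j, g A k j * A a j i := by
        simp [Matrix.vecMul, dotProduct]
    _ ≤ ∑ _j : Fin n, g A (k+1) i := Finset.sum_le_sum fun j _ => hterm j
    _ = (n : ℝ) * g A (k+1) i := by simp [mul_comm]

/-- entry bound: g ≤ n * Sk where Sk is the sup of entries over words -/
lemma g_le (A : Fin p → Matrix (Fin n) (Fin n) ℝ) (hA : ∀ a i j, 0 ≤ A a i j)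
    (hn : 0 < n) (hp : 0 < p) (k : ℕ) (i : Fin n) :
    g A k i ≤ (n : ℝ) * ⨆ w : Fin k → Fin p, ⨆ i' : Fin n, ⨆ j' : Fin n, |Pw A w i' j'| := by
  haveI : Nonempty (Fin n) := ⟨⟨0, hn⟩⟩
  haveI : Nonempty (Fin p) := ⟨⟨0, hp⟩⟩
  refine ciSup_le fun w => ?_
  rw [vecMul_one_apply]
  have hentry : ∀ j' i', Pw A w j' i' ≤ ⨆ w : Fin k → Fin p, ⨆ i' : Fin n, ⨆ j' : Fin n, |Pw A w i' j'| := by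
    intro j' i'
    calc Pw A w j' i' ≤ |Pw A w j' i'| := le_abs_self _
      _ ≤ ⨆ j'' : Fin n, |Pw A w j' j''| :=
          le_ciSup (f := fun j'' : Fin n => |Pw A w j' j''|) (Set.finite_range _).bddAbove i'
      _ ≤ ⨆ i'' : Fin n, ⨆ j'' : Fin n, |Pw A w i'' j''| :=
          le_ciSup (f := fun i'' : Fin n => ⨆ j'' : Fin n, |Pw A w i'' j''|)
            (Set.finite_range _).bddAbove j'
      _ ≤ _ := le_ciSup (f := fun w : Fin k → Fin p => ⨆ i'' : Fin n, ⨆ j'' : Fin n, |Pw A w i'' j''|)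
            (Set.finite_range _).bddAbove w
  calc ∑ j, Pw A w j i ≤ ∑ _j : Fin n, ⨆ w : Fin k → Fin p, ⨆ i' : Fin n, ⨆ j' : Fin n, |Pw A w i' j'| :=
        Finset.sum_le_sum fun j _ => hentry j i
    _ = _ := by simp [mul_comm]



variable {n p : ℕ}

lemma Pw_def (A : Fin p → Matrix (Fin n) (Fin n) ℝ) {k : ℕ} (w : Fin k → Fin p) :
    (List.ofFn fun j => A (w j)).prod = Pw A w := rfl

lemma Nw_nonneg (A : Fin p → Matrix (Fin n) (Fin n) ℝ) (hn : 0 < n) {k : ℕ}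
    (w : Fin k → Fin p) : 0 ≤ ⨆ i : Fin n, ⨆ j : Fin n, |Pw A w i j| := by
  haveI : Nonempty (Fin n) := ⟨⟨0, hn⟩⟩
  refine le_trans (abs_nonneg (Pw A w ⟨0,hn⟩ ⟨0,hn⟩)) ?_
  calc |Pw A w ⟨0,hn⟩ ⟨0,hn⟩| ≤ ⨆ j : Fin n, |Pw A w ⟨0,hn⟩ j| :=
        le_ciSup (f := fun j : Fin n => |Pw A w ⟨0,hn⟩ j|) (Set.finite_range _).bddAbove _
    _ ≤ _ := le_ciSup (f := fun i : Fin n => ⨆ j : Fin n, |Pw A w i j|)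
        (Set.finite_range _).bddAbove _

lemma Sk_nonneg (A : Fin p → Matrix (Fin n) (Fin n) ℝ) (hn : 0 < n) (hp : 0 < p) (k : ℕ) :
    0 ≤ ⨆ w : Fin k → Fin p, ⨆ i : Fin n, ⨆ j : Fin n, |Pw A w i j| := by
  haveI : Nonempty (Fin p) := ⟨⟨0, hp⟩⟩
  refine le_trans (Nw_nonneg A hn (fun _ : Fin k => (⟨0, hp⟩ : Fin p))) ?_
  exact le_ciSup (f := fun w : Fin k → Fin p => ⨆ i : Fin n, ⨆ j : Fin n, |Pw A w i j|)
    (Set.finite_range _).bddAbove _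

lemma Sk_le_of (A : Fin p → Matrix (Fin n) (Fin n) ℝ) (hn : 0 < n) (hp : 0 < p)
    {k : ℕ} (hk : k ≠ 0) {ρ₁ : ℝ}
    (h : (⨆ w : Fin k → Fin p, (⨆ i : Fin n, ⨆ j : Fin n, |Pw A w i j|) ^ ((1:ℝ)/k)) ≤ ρ₁) :
    (⨆ w : Fin k → Fin p, ⨆ i : Fin n, ⨆ j : Fin n, |Pw A w i j|) ≤ ρ₁ ^ k := by
  haveI : Nonempty (Fin p) := ⟨⟨0, hp⟩⟩
  refine ciSup_le fun w => ?_
  set N : ℝ := ⨆ i : Fin n, ⨆ j : Fin n, |Pw A w i j| with hN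
  have hN0 : 0 ≤ N := Nw_nonneg A hn w
  have h1 : N ^ ((1:ℝ)/k) ≤ ρ₁ :=
    le_trans (le_ciSup (f := fun w : Fin k → Fin p =>
      (⨆ i : Fin n, ⨆ j : Fin n, |Pw A w i j|) ^ ((1:ℝ)/k)) (Set.finite_range _).bddAbove w) h
  have h2 : (N ^ ((1:ℝ)/k)) ^ (k:ℕ) ≤ ρ₁ ^ k :=
    pow_le_pow_left₀ (Real.rpow_nonneg hN0 _) h1 k
  have h3 : (N ^ ((1:ℝ)/k)) ^ (k:ℕ) = N := by
    rw [← Real.rpow_natCast (N ^ ((1:ℝ)/k)) k, ← Real.rpow_mul hN0,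
      one_div, inv_mul_cancel₀ (Nat.cast_ne_zero.mpr hk), Real.rpow_one]
  rw [← h3]; exact h2


end CWAux

open CWAux in
/-- for a positively irreducible family of nonnegative matrices,
`r(T⁰) ≤ n · ρ(𝒜)`, where `ρ(𝒜)` is the joint spectral radius. -/
theorem cwRadius_T0_le {n p : ℕ} (hn : 0 < n) (hp : 0 < p)
    (A : Fin p → Matrix (Fin n) (Fin n) ℝ)
    (hA : ∀ a, ∀ i j, 0 ≤ A a i j)
    (hirr : PosIrredFamily A)
    (ρ : ℝ)
    (hρ : Tendsto (fun k : ℕ => ⨆ w : Fin k → Fin p,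
        (⨆ i : Fin n, ⨆ j : Fin n, |((List.ofFn fun j => A (w j)).prod) i j|) ^ ((1 : ℝ) / k))
      atTop (nhds ρ)) :
    cwRadius (T0 A) ≤ (n : ℝ) * ρ := by
  haveI : Nonempty (Fin p) := ⟨⟨0, hp⟩⟩
  haveI : Nonempty (Fin n) := ⟨⟨0, hn⟩⟩
  have hn' : (0:ℝ) < n := by exact_mod_cast hn
  simp only [Pw_def] at hρ
  have hρ0 : 0 ≤ ρ := by
    refine ge_of_tendsto' hρ fun k => ?_
    refine le_trans (Real.rpow_nonneg (Nw_nonneg A hn (fun _ : Fin k => (⟨0, hp⟩ : Fin p))) ((1:ℝ)/k)) ?_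
    exact le_ciSup (f := fun w : Fin k → Fin p =>
      (⨆ i : Fin n, ⨆ j : Fin n, |Pw A w i j|) ^ ((1:ℝ)/k)) (Set.finite_range _).bddAbove _
  refine le_of_forall_pos_le_add fun ε hε => ?_
  set ρ₂ : ℝ := ρ + ε / n with hρ₂def
  set ρ₁ : ℝ := ρ + ε / (2 * n) with hρ₁def
  have hρ₁pos : 0 < ρ₁ := by positivity
  have h12 : ρ₁ < ρ₂ := by
    have h : ε / (2 * (n:ℝ)) < ε / n := by
      apply div_lt_div_of_pos_left hε hn'
      linarith
    rw [hρ₁def, hρ₂def]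
    linarith
  have hρ₂pos : 0 < ρ₂ := hρ₁pos.trans h12
  -- growth bound
  obtain ⟨K, hK⟩ := eventually_atTop.1
    (hρ.eventually_lt_const (show ρ < ρ₁ by
      have h : 0 < ε / (2*(n:ℝ)) := by positivity
      rw [hρ₁def]
      exact lt_add_of_pos_right ρ h))
  set Sk : ℕ → ℝ := fun k => ⨆ w : Fin k → Fin p, ⨆ i : Fin n, ⨆ j : Fin n, |Pw A w i j|
    with hSkdef
  have hSk0 : ∀ k, 0 ≤ Sk k := fun k => Sk_nonneg A hn hp k
  set K' := max K 1 with hK'def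
  set C : ℝ := 1 + ∑ m ∈ Finset.range K', Sk m / ρ₁ ^ m with hCdef
  have hsumnn : ∀ m ∈ Finset.range K', 0 ≤ Sk m / ρ₁ ^ m :=
    fun m _ => div_nonneg (hSk0 m) (pow_nonneg hρ₁pos.le m)
  have hC1 : 1 ≤ C := le_add_of_nonneg_right (Finset.sum_nonneg hsumnn)
  have hgrow : ∀ k, Sk k ≤ C * ρ₁ ^ k := by
    intro k
    rcases lt_or_ge k K' with hk | hk
    · have h1 : Sk k / ρ₁ ^ k ≤ C := by
        calc Sk k / ρ₁ ^ k ≤ ∑ m ∈ Finset.range K', Sk m / ρ₁ ^ m :=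
              Finset.single_le_sum hsumnn (Finset.mem_range.2 hk)
          _ ≤ C := le_add_of_nonneg_left zero_le_one
      have h2 := mul_le_mul_of_nonneg_right h1 (pow_nonneg hρ₁pos.le k)
      rwa [div_mul_cancel₀ _ (pow_pos hρ₁pos k).ne'] at h2
    · have hk0 : k ≠ 0 := by
        have := le_trans (le_max_right K 1) hk; omega
      have hterm := (hK k (le_trans (le_max_left K 1) hk)).le
      calc Sk k ≤ ρ₁ ^ k := Sk_le_of A hn hp hk0 hterm
        _ ≤ C * ρ₁ ^ k := le_mul_of_one_le_left (pow_nonneg hρ₁pos.le k) hC1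
  -- the vector u
  set c : ℝ := ρ₂⁻¹ with hcdef
  have hcpos : 0 < c := inv_pos.2 hρ₂pos
  have hcρ₂ : ρ₂ * c = 1 := mul_inv_cancel₀ hρ₂pos.ne'
  have hrat0 : 0 ≤ c * ρ₁ := mul_nonneg hcpos.le hρ₁pos.le
  have hrat1 : c * ρ₁ < 1 := by
    rw [hcdef, inv_mul_lt_iff₀ hρ₂pos, mul_one]
    exact h12
  set h : Fin n → ℕ → ℝ := fun i k => c ^ k * g A k i with hhdef
  have hh0 : ∀ i k, 0 ≤ h i k := fun i k =>
    mul_nonneg (pow_nonneg hcpos.le k) (g_nonneg A hA hp k i)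
  have hhle : ∀ i k, h i k ≤ ((n:ℝ) * C) * (c * ρ₁) ^ k := by
    intro i k
    calc h i k = c ^ k * g A k i := rfl
      _ ≤ c ^ k * ((n:ℝ) * Sk k) :=
          mul_le_mul_of_nonneg_left (g_le A hA hn hp k i) (pow_nonneg hcpos.le k)
      _ ≤ c ^ k * ((n:ℝ) * (C * ρ₁ ^ k)) :=
          mul_le_mul_of_nonneg_left
            (mul_le_mul_of_nonneg_left (hgrow k) hn'.le) (pow_nonneg hcpos.le k)
      _ = ((n:ℝ) * C) * (c * ρ₁) ^ k := by rw [mul_pow]; ring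
  have hsum : ∀ i, Summable (h i) := fun i =>
    Summable.of_nonneg_of_le (hh0 i) (hhle i)
      ((summable_geometric_of_lt_one hrat0 hrat1).mul_left _)
  set u : Fin n → ℝ := fun i => ∑' k, h i k with hudef
  have hupos : ∀ i, 0 < u i := by
    intro i
    have h1 : h i 0 ≤ u i := (hsum i).le_tsum 0 fun j _ => hh0 i j
    have h2 : h i 0 = 1 := by simp [hhdef, g_zero]
    linarith [h1, h2]
  have hT : T0 A u ≤ ((n:ℝ) * ρ₂) • u := by
    intro i
    simp only [Pi.smul_apply, smul_eq_mul]
    refine ciSup_le fun a => ?_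
    rw [Matrix.mulVec_transpose]
    have expand : Matrix.vecMul u (A a) i
        = ∑' k, c ^ k * Matrix.vecMul (g A k) (A a) i := by
      have e1 : Matrix.vecMul u (A a) i = ∑ j, u j * A a j i := by
        simp [Matrix.vecMul, dotProduct]
      rw [e1]
      have e2 : ∀ j : Fin n, u j * A a j i = ∑' k, h j k * A a j i :=
        fun j => tsum_mul_right.symm
      simp only [e2]
      rw [← Summable.tsum_finsetSum (fun j _ => (hsum j).mul_right _)]
      congr 1; funext k
      simp only [hhdef]
      rw [show Matrix.vecMul (g A k) (A a) i = ∑ j, g A k j * A a j i by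
        simp [Matrix.vecMul, dotProduct], Finset.mul_sum]
      congr 1; funext j; ring
    rw [expand]
    have hlhs_le : ∀ k, c ^ k * Matrix.vecMul (g A k) (A a) i ≤ ((n:ℝ)*ρ₂) * h i (k+1) := by
      intro k
      have h1 := g_step A hA hp k a i
      calc c ^ k * Matrix.vecMul (g A k) (A a) i
          ≤ c ^ k * ((n:ℝ) * g A (k+1) i) :=
            mul_le_mul_of_nonneg_left h1 (pow_nonneg hcpos.le k)
        _ = ((n:ℝ)*ρ₂) * h i (k+1) := by
            simp only [hhdef, pow_succ]
            have e : (n:ℝ) * ρ₂ * (c ^ k * c * g A (k+1) i)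
                = (ρ₂ * c) * (c ^ k * ((n:ℝ) * g A (k+1) i)) := by ring
            rw [e, hcρ₂, one_mul]
    have hlhs0 : ∀ k, 0 ≤ c ^ k * Matrix.vecMul (g A k) (A a) i := by
      intro k
      refine mul_nonneg (pow_nonneg hcpos.le k) ?_
      rw [show Matrix.vecMul (g A k) (A a) i = ∑ j, g A k j * A a j i by
        simp [Matrix.vecMul, dotProduct]]
      exact Finset.sum_nonneg fun j _ => mul_nonneg (g_nonneg A hA hp k j) (hA a j i)
    have hsumshift : Summable fun k => h i (k+1) := (summable_nat_add_iff 1).2 (hsum i)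
    have hsumrhs : Summable fun k => ((n:ℝ)*ρ₂) * h i (k+1) := hsumshift.mul_left _
    have hsumlhs : Summable fun k => c ^ k * Matrix.vecMul (g A k) (A a) i :=
      Summable.of_nonneg_of_le hlhs0 hlhs_le hsumrhs
    calc ∑' k, c ^ k * Matrix.vecMul (g A k) (A a) i
        ≤ ∑' k, ((n:ℝ)*ρ₂) * h i (k+1) := Summable.tsum_le_tsum hlhs_le hsumlhs hsumrhs
      _ = ((n:ℝ)*ρ₂) * ∑' k, h i (k+1) := tsum_mul_left
      _ ≤ ((n:ℝ)*ρ₂) * u i := by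
          have hsplit := Summable.tsum_eq_zero_add (hsum i)
          have : ∑' k, h i (k+1) ≤ u i := by
            simp only [hudef]; rw [hsplit]; linarith [hh0 i 0]
          exact mul_le_mul_of_nonneg_left this (mul_nonneg hn'.le hρ₂pos.le)
  have hmem : (n:ℝ) * ρ₂ ∈ {ρ' : ℝ | 0 < ρ' ∧ ∃ u : Fin n → ℝ, (∀ i, 0 < u i) ∧ T0 A u ≤ ρ' • u} :=
    ⟨mul_pos hn' hρ₂pos, u, hupos, hT⟩
  have hbdd : BddBelow {ρ' : ℝ | 0 < ρ' ∧ ∃ u : Fin n → ℝ, (∀ i, 0 < u i) ∧ T0 A u ≤ ρ' • u} :=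
    ⟨0, fun x hx => hx.1.le⟩
  calc cwRadius (T0 A) ≤ (n:ℝ) * ρ₂ := csInf_le hbdd hmem
    _ = (n:ℝ) * ρ + ε := by
        rw [hρ₂def, mul_add, mul_div_cancel₀ _ hn'.ne']
end

section
/- Let 𝒜 be a positively irreducible finite set of nonnegative n×n matrices and T^d the depth-d De Bruijn operator. Then r(T^d) ≤ n^{1/(d+1)} · ρ(𝒜). In particular, r(T^d) → ρ(𝒜) as d → ∞. -/
open Matrix Filter

namespace CW8
variable {n p : ℕ}

/-- product of matrices along a word -/
def wprod (A : Fin p → Matrix (Fin n) (Fin n) ℝ) {k : ℕ} (w : Fin k → Fin p) :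
    Matrix (Fin n) (Fin n) ℝ :=
  (List.ofFn fun j => A (w j)).prod

lemma wprod_zero (A : Fin p → Matrix (Fin n) (Fin n) ℝ) (w : Fin 0 → Fin p) :
    wprod A w = 1 := by simp [wprod]

lemma wprod_snoc (A : Fin p → Matrix (Fin n) (Fin n) ℝ) {k : ℕ}
    (w : Fin k → Fin p) (a : Fin p) :
    wprod A (Fin.snoc w a) = wprod A w * A a := by
  unfold wprod
  rw [List.ofFn_succ']
  simp [Fin.snoc_castSucc, Fin.snoc_last]

lemma wprod_nonneg {A : Fin p → Matrix (Fin n) (Fin n) ℝ}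
    (hA : ∀ a i j, 0 ≤ A a i j) :
    ∀ {k : ℕ} (w : Fin k → Fin p) (i j : Fin n), 0 ≤ wprod A w i j := by
  intro k
  induction k with
  | zero =>
    intro w i j
    rw [wprod_zero]
    by_cases h : i = j <;> simp [Matrix.one_apply, h]
  | succ k ih =>
    intro w i j
    rw [← Fin.snoc_init_self w, wprod_snoc, Matrix.mul_apply]
    exact Finset.sum_nonneg fun t _ => mul_nonneg (ih _ _ _) (hA _ _ _)

lemma entry_mul_le {M N : Matrix (Fin n) (Fin n) ℝ}
    (hM : ∀ i j, 0 ≤ M i j) (hN : ∀ i j, 0 ≤ N i j) (k j i : Fin n) :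
    M k j * N j i ≤ (M * N) k i := by
  rw [Matrix.mul_apply]
  exact Finset.single_le_sum (f := fun t => M k t * N t i)
    (fun t _ => mul_nonneg (hM _ _) (hN _ _)) (Finset.mem_univ j)

lemma exists_wprod_append (A : Fin p → Matrix (Fin n) (Fin n) ℝ) :
    ∀ {c L : ℕ} (w : Fin L → Fin p) (b : Fin c → Fin p),
    ∃ w' : Fin (L + c) → Fin p, wprod A w' = wprod A w * wprod A b := by
  intro c
  induction c with
  | zero =>
    intro L w b
    exact ⟨w, by rw [wprod_zero, mul_one]⟩
  | succ c ih =>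
    intro L w b
    obtain ⟨w', hw'⟩ := ih w (Fin.init b)
    refine ⟨Fin.snoc w' (b (Fin.last c)), ?_⟩
    rw [wprod_snoc, hw', mul_assoc, ← wprod_snoc, Fin.snoc_init_self]

variable {n p : ℕ}

noncomputable def G (A : Fin p → Matrix (Fin n) (Fin n) ℝ) (hn : 0 < n) (hp : 0 < p)
    (L : ℕ) (i : Fin n) : ℝ :=
  haveI : Nonempty (Fin n) := ⟨⟨0, hn⟩⟩
  haveI : Nonempty (Fin p) := ⟨⟨0, hp⟩⟩
  Finset.univ.sup' Finset.univ_nonempty fun wk : (Fin L → Fin p) × Fin n => wprod A wk.1 wk.2 i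

variable {A : Fin p → Matrix (Fin n) (Fin n) ℝ} {hn : 0 < n} {hp : 0 < p}

lemma le_G {L : ℕ} (w : Fin L → Fin p) (k i : Fin n) :
    wprod A w k i ≤ G A hn hp L i := by
  unfold G
  exact Finset.le_sup' (fun wk : (Fin L → Fin p) × Fin n => wprod A wk.1 wk.2 i)
    (Finset.mem_univ (w, k))

lemma G_le {L : ℕ} {i : Fin n} {c : ℝ}
    (h : ∀ (w : Fin L → Fin p) (k : Fin n), wprod A w k i ≤ c) :
    G A hn hp L i ≤ c := by
  unfold G
  exact Finset.sup'_le _ _ fun wk _ => h wk.1 wk.2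

lemma G_attained (L : ℕ) (i : Fin n) :
    ∃ wk : (Fin L → Fin p) × Fin n, G A hn hp L i = wprod A wk.1 wk.2 i := by
  haveI : Nonempty (Fin n) := ⟨⟨0, hn⟩⟩
  haveI : Nonempty (Fin p) := ⟨⟨0, hp⟩⟩
  obtain ⟨wk, -, h⟩ := Finset.exists_mem_eq_sup' Finset.univ_nonempty
    (fun wk : (Fin L → Fin p) × Fin n => wprod A wk.1 wk.2 i)
  exact ⟨wk, h⟩

lemma one_le_G_zero (i : Fin n) : 1 ≤ G A hn hp 0 i := by
  have h := le_G (A := A) (hn := hn) (hp := hp) (fun t : Fin 0 => t.elim0) i i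
  rwa [wprod_zero, Matrix.one_apply_eq] at h

lemma G_nonneg (hA : ∀ a i j, 0 ≤ A a i j) (L : ℕ) (i : Fin n) :
    0 ≤ G A hn hp L i :=
  le_trans (wprod_nonneg hA (fun _ => ⟨0, hp⟩) ⟨0, hn⟩ i) (le_G _ _ _)

lemma wprod_mul_G_le (hA : ∀ a i j, 0 ≤ A a i j) {c L : ℕ}
    (b : Fin c → Fin p) (j i : Fin n) :
    wprod A b j i * G A hn hp L j ≤ G A hn hp (L + c) i := by
  obtain ⟨⟨w0, k0⟩, hG⟩ := G_attained (A := A) (hn := hn) (hp := hp) L j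
  rw [hG]
  obtain ⟨w', hw'⟩ := exists_wprod_append A w0 b
  calc wprod A b j i * wprod A w0 k0 j
      = wprod A w0 k0 j * wprod A b j i := mul_comm _ _
    _ ≤ (wprod A w0 * wprod A b) k0 i :=
        entry_mul_le (wprod_nonneg hA w0) (wprod_nonneg hA b) k0 j i
    _ = wprod A w' k0 i := by rw [hw']
    _ ≤ G A hn hp (L + c) i := le_G _ _ _

end CW8

namespace CW8

/-- suffix of length ℓ of a word of length d -/
def sfx {P d : ℕ} (ℓ : ℕ) (hℓ : ℓ ≤ d) (r : Fin d → Fin P) : Fin ℓ → Fin P :=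
  fun t => r ⟨d - ℓ + t.1, by omega⟩

lemma sfx_self {P d : ℕ} (r : Fin d → Fin P) : sfx d le_rfl r = r := by
  funext t
  exact congrArg r (Fin.ext (by simp [sfx]))

lemma sfx_shift {P d ℓ : ℕ} (hℓ : ℓ < d) (r : Fin d → Fin P) (a : Fin P) :
    sfx (ℓ + 1) hℓ (deBruijnShift d r a) = Fin.snoc (sfx ℓ hℓ.le r) a := by
  funext t
  refine Fin.lastCases ?_ ?_ t
  · rw [Fin.snoc_last]
    simp only [sfx, deBruijnShift, Fin.val_last]
    rw [dif_neg (by omega)]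
  · intro t'
    rw [Fin.snoc_castSucc]
    simp only [sfx, deBruijnShift, Fin.coe_castSucc]
    rw [dif_pos (by omega)]
    exact congrArg r (Fin.ext (by simp; omega))

lemma step_vec {n : ℕ} (B M : Matrix (Fin n) (Fin n) ℝ) (v : Fin n → ℝ) (i : Fin n) :
    ∑ j, B j i * ((Mᵀ).mulVec v) j = (((M * B)ᵀ).mulVec v) i := by
  simp only [Matrix.mulVec, dotProduct, Matrix.transpose_apply, Matrix.mul_apply,
    Finset.sum_mul, Finset.mul_sum]
  rw [Finset.sum_comm]
  refine Finset.sum_congr rfl fun j _ => Finset.sum_congr rfl fun t _ => by ring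

lemma exists_good_u {n p : ℕ} (hn : 0 < n) (hp : 0 < p)
    (A : Fin p → Matrix (Fin n) (Fin n) ℝ) (hA : ∀ a i j, 0 ≤ A a i j)
    {lam : ℝ} (hlam : 0 < lam) (d N : ℕ) (hN : 0 < N)
    (hbound : ∀ i, G A hn hp (N * (d + 1)) i ≤ lam ^ (N * (d + 1))) :
    ∃ u : (Fin d → Fin p) × Fin n → ℝ, (∀ q, 0 < u q) ∧
      deBruijnOp A d u ≤ ((n : ℝ) ^ ((1 : ℝ) / (d + 1)) * lam) • u := by
  have hn' : (0:ℝ) < n := by exact_mod_cast hn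
  set μ : ℝ := (n : ℝ) ^ ((1 : ℝ) / (d + 1)) * lam with hμdef
  have hμ : 0 < μ := mul_pos (Real.rpow_pos_of_pos hn' _) hlam
  have hd1 : ((d:ℝ) + 1) ≠ 0 := by positivity
  have hμpow : μ ^ (d + 1) = (n : ℝ) * lam ^ (d + 1) := by
    rw [hμdef, mul_pow]
    congr 1
    rw [← Real.rpow_natCast ((n:ℝ) ^ ((1:ℝ)/(d+1))) (d+1), ← Real.rpow_mul hn'.le]
    push_cast
    rw [one_div, inv_mul_cancel₀ hd1, Real.rpow_one]
  -- the vector v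
  obtain ⟨v, hv⟩ : ∃ v : Fin n → ℝ, v = fun i => (Finset.range N).sup'
      (Finset.nonempty_range_iff.mpr hN.ne') (fun m => G A hn hp (m*(d+1)) i / lam ^ (m*(d+1))) :=
    ⟨_, rfl⟩
  have hv1 : ∀ i, 1 ≤ v i := by
    intro i
    have h0 : (1:ℝ) ≤ G A hn hp (0*(d+1)) i / lam ^ (0*(d+1)) := by
      simpa using one_le_G_zero (A := A) (hn := hn) (hp := hp) i
    rw [hv]
    dsimp only
    exact le_trans h0 (Finset.le_sup' (fun m => G A hn hp (m*(d+1)) i / lam ^ (m*(d+1)))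
      (Finset.mem_range.mpr hN))
  have hv0 : ∀ i, 0 ≤ v i := fun i => le_trans zero_le_one (hv1 i)
  have hvstep : ∀ (b : Fin (d+1) → Fin p) (j i : Fin n),
      wprod A b j i * v j ≤ lam ^ (d+1) * v i := by
    intro b j i
    obtain ⟨m0, hm0mem, hm0⟩ := Finset.exists_mem_eq_sup'
      (Finset.nonempty_range_iff.mpr hN.ne')
      (fun m => G A hn hp (m*(d+1)) j / lam ^ (m*(d+1)))
    have hm0N : m0 < N := Finset.mem_range.mp hm0mem
    have hvj : v j = G A hn hp (m0*(d+1)) j / lam ^ (m0*(d+1)) := by rw [hv]; exact hm0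
    have hlp : (0:ℝ) < lam ^ (m0*(d+1)) := pow_pos hlam _
    have key : wprod A b j i * G A hn hp (m0*(d+1)) j ≤ G A hn hp (m0*(d+1) + (d+1)) i :=
      wprod_mul_G_le hA b j i
    have hbnn : 0 ≤ wprod A b j i := wprod_nonneg hA b j i
    rcases Nat.lt_or_ge (m0+1) N with hlt | hge
    · have hmul : m0*(d+1) + (d+1) = (m0+1)*(d+1) := by ring
      have hsup : G A hn hp ((m0+1)*(d+1)) i / lam ^ ((m0+1)*(d+1)) ≤ v i := by
        rw [hv]
        dsimp only
        exact Finset.le_sup' (fun m => G A hn hp (m*(d+1)) i / lam ^ (m*(d+1)))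
          (Finset.mem_range.mpr hlt)
      calc wprod A b j i * v j
          = wprod A b j i * G A hn hp (m0*(d+1)) j / lam ^ (m0*(d+1)) := by
            rw [hvj, mul_div_assoc]
        _ ≤ G A hn hp (m0*(d+1)+(d+1)) i / lam ^ (m0*(d+1)) := by gcongr
        _ = lam ^ (d+1) * (G A hn hp ((m0+1)*(d+1)) i / lam ^ ((m0+1)*(d+1))) := by
            rw [hmul, show (m0+1)*(d+1) = m0*(d+1) + (d+1) from by ring, pow_add]
            field_simp
            ring
        _ ≤ lam ^ (d+1) * v i := by
            exact mul_le_mul_of_nonneg_left hsup (pow_nonneg hlam.le _)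
    · have hEq : m0 + 1 = N := by omega
      have hmulN : m0*(d+1) + (d+1) = N*(d+1) := by rw [← hEq]; ring
      have hGle : G A hn hp (m0*(d+1)+(d+1)) i ≤ lam ^ (N*(d+1)) := by
        rw [hmulN]; exact hbound i
      calc wprod A b j i * v j
          = wprod A b j i * G A hn hp (m0*(d+1)) j / lam ^ (m0*(d+1)) := by
            rw [hvj, mul_div_assoc]
        _ ≤ lam ^ (N*(d+1)) / lam ^ (m0*(d+1)) := by gcongr; exact key.trans hGle
        _ = lam ^ (d+1) := by
            rw [← hmulN, pow_add]
            field_simp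
        _ ≤ lam ^ (d+1) * v i := le_mul_of_one_le_right (pow_nonneg hlam.le _) (hv1 i)
  -- the eigenvector candidate u
  obtain ⟨u, hu⟩ : ∃ u : (Fin d → Fin p) × Fin n → ℝ, u = fun q =>
      ∑ ℓ : Fin (d+1),
        ((wprod A (sfx ℓ.1 (Nat.lt_succ_iff.mp ℓ.isLt) q.1))ᵀ.mulVec v) q.2 / μ ^ ℓ.1 :=
    ⟨_, rfl⟩
  have htermnn : ∀ (r : Fin d → Fin p) (i : Fin n) (ℓ : Fin (d+1)),
      0 ≤ ((wprod A (sfx ℓ.1 (Nat.lt_succ_iff.mp ℓ.isLt) r))ᵀ.mulVec v) i / μ ^ ℓ.1 := by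
    intro r i ℓ
    apply div_nonneg _ (pow_nonneg hμ.le _)
    simp only [Matrix.mulVec, dotProduct, Matrix.transpose_apply]
    exact Finset.sum_nonneg fun j _ => mul_nonneg (wprod_nonneg hA _ _ _) (hv0 j)
  have hterm0 : ∀ (r : Fin d → Fin p) (i : Fin n),
      ((wprod A (sfx 0 (Nat.zero_le d) r))ᵀ.mulVec v) i / μ ^ (0:ℕ) = v i := by
    intro r i
    rw [wprod_zero, Matrix.transpose_one, Matrix.one_mulVec, pow_zero, div_one]
  have hupos : ∀ q, 0 < u q := by
    rintro ⟨r, i⟩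
    rw [hu]
    have hle : ((wprod A (sfx (0:Fin (d+1)).1 (Nat.lt_succ_iff.mp (0:Fin (d+1)).isLt) r))ᵀ.mulVec v) i
        / μ ^ ((0:Fin (d+1)):ℕ) ≤ ∑ ℓ : Fin (d+1),
        ((wprod A (sfx ℓ.1 (Nat.lt_succ_iff.mp ℓ.isLt) r))ᵀ.mulVec v) i / μ ^ ℓ.1 :=
      Finset.single_le_sum (fun ℓ _ => htermnn r i ℓ) (Finset.mem_univ (0 : Fin (d+1)))
    have h0 : ((wprod A (sfx (0:Fin (d+1)).1 (Nat.lt_succ_iff.mp (0:Fin (d+1)).isLt) r))ᵀ.mulVec v) i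
        / μ ^ ((0:Fin (d+1)):ℕ) = v i := hterm0 r i
    calc (0:ℝ) < 1 := one_pos
      _ ≤ v i := hv1 i
      _ ≤ _ := by rw [← h0]; exact hle
  -- main one-step inequality
  have hmain : ∀ (r : Fin d → Fin p) (a : Fin p) (i : Fin n),
      ((A a)ᵀ.mulVec fun j => u (r, j)) i ≤ μ * u (deBruijnShift d r a, i) := by
    intro r a i
    have lhs_eq : ((A a)ᵀ.mulVec fun j => u (r, j)) i
        = ∑ ℓ : Fin (d+1),
            (((wprod A (sfx ℓ.1 (Nat.lt_succ_iff.mp ℓ.isLt) r) * A a)ᵀ).mulVec v) i / μ ^ ℓ.1 := by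
      calc ((A a)ᵀ.mulVec fun j => u (r, j)) i
          = ∑ j, (A a) j i * u (r, j) := by
            simp [Matrix.mulVec, dotProduct, Matrix.transpose_apply]
        _ = ∑ j, ∑ ℓ : Fin (d+1), (A a) j i *
              (((wprod A (sfx ℓ.1 (Nat.lt_succ_iff.mp ℓ.isLt) r))ᵀ.mulVec v) j / μ ^ ℓ.1) := by
            refine Finset.sum_congr rfl fun j _ => ?_
            rw [hu, Finset.mul_sum]
        _ = ∑ ℓ : Fin (d+1), ∑ j, (A a) j i *
              (((wprod A (sfx ℓ.1 (Nat.lt_succ_iff.mp ℓ.isLt) r))ᵀ.mulVec v) j / μ ^ ℓ.1) :=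
            Finset.sum_comm
        _ = ∑ ℓ : Fin (d+1),
            (((wprod A (sfx ℓ.1 (Nat.lt_succ_iff.mp ℓ.isLt) r) * A a)ᵀ).mulVec v) i / μ ^ ℓ.1 := by
            refine Finset.sum_congr rfl fun ℓ _ => ?_
            rw [← step_vec, Finset.sum_div]
            exact Finset.sum_congr rfl fun j _ => by rw [mul_div_assoc]
    rw [lhs_eq, hu]
    dsimp only
    rw [Fin.sum_univ_castSucc, Fin.sum_univ_succ, mul_add, Finset.mul_sum,
      add_comm (μ * (((wprod A (sfx ((0 : Fin (d+1)) : ℕ)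
        (Nat.lt_succ_iff.mp (0 : Fin (d+1)).isLt) (deBruijnShift d r a)))ᵀ.mulVec v) i / μ ^ ((0 : Fin (d+1)) : ℕ)))]
    apply add_le_add
    · refine Finset.sum_le_sum fun ℓ' _ => ?_
      have hℓd : (ℓ' : ℕ) < d := ℓ'.isLt
      simp only [Fin.coe_castSucc, Fin.val_succ]
      have hmat : wprod A (sfx ((ℓ' : ℕ) + 1)
            (Nat.lt_succ_iff.mp (by omega : (ℓ' : ℕ) + 1 < d + 1)) (deBruijnShift d r a))
          = wprod A (sfx (ℓ' : ℕ) (Nat.lt_succ_iff.mp (by omega : (ℓ' : ℕ) < d + 1)) r) * A a := by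
        rw [show sfx ((ℓ' : ℕ) + 1)
            (Nat.lt_succ_iff.mp (by omega : (ℓ' : ℕ) + 1 < d + 1)) (deBruijnShift d r a)
            = Fin.snoc (sfx (ℓ' : ℕ) hℓd.le r) a from sfx_shift hℓd r a, wprod_snoc]
      rw [hmat]
      have hx : ∀ X : ℝ, μ * (X / μ ^ ((ℓ' : ℕ) + 1)) = X / μ ^ (ℓ' : ℕ) := by
        intro X
        rw [pow_succ]
        field_simp
      rw [hx]
    · simp only [Fin.val_last, Fin.val_zero]
      rw [hterm0 (deBruijnShift d r a) i]
      have hY : wprod A (sfx d (Nat.lt_succ_iff.mp (Fin.last d).isLt) r) * A a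
          = wprod A (Fin.snoc r a) := by
        rw [show sfx d (Nat.lt_succ_iff.mp (Fin.last d).isLt) r = r from sfx_self r, ← wprod_snoc]
      rw [hY]
      have hsum : ((wprod A (Fin.snoc r a))ᵀ.mulVec v) i ≤ μ ^ (d+1) * v i := by
        have h1 : ((wprod A (Fin.snoc r a))ᵀ.mulVec v) i
            = ∑ j, wprod A (Fin.snoc r a) j i * v j := by
          simp [Matrix.mulVec, dotProduct, Matrix.transpose_apply]
        rw [h1, hμpow]
        calc ∑ j, wprod A (Fin.snoc r a) j i * v j
            ≤ ∑ _j : Fin n, lam ^ (d+1) * v i :=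
              Finset.sum_le_sum fun j _ => hvstep (Fin.snoc r a) j i
          _ = (n : ℝ) * (lam ^ (d+1) * v i) := by
              rw [Finset.sum_const, Finset.card_univ, Fintype.card_fin, nsmul_eq_mul]
          _ = (n : ℝ) * lam ^ (d+1) * v i := by ring
      rw [div_le_iff₀ (pow_pos hμ d)]
      calc ((wprod A (Fin.snoc r a))ᵀ.mulVec v) i ≤ μ ^ (d+1) * v i := hsum
        _ = μ * v i * μ ^ d := by rw [pow_succ]; ring
  -- assemble
  refine ⟨u, hupos, fun q => ?_⟩
  obtain ⟨s0, i0⟩ := q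
  rw [Pi.smul_apply, smul_eq_mul]
  simp only [deBruijnOp]
  apply Real.iSup_le
  · rintro ⟨⟨r, a⟩, hra⟩
    have h := hmain r a i0
    simp only at hra
    rw [hra] at h
    exact h
  · exact mul_nonneg hμ.le (hupos (s0, i0)).le

/-- state reached in the De Bruijn automaton after reading a word -/
def iterState {p d : ℕ} : {k : ℕ} → (Fin d → Fin p) → (Fin k → Fin p) → (Fin d → Fin p)
  | 0, r, _ => r
  | (_ + 1), r, w => deBruijnShift d (iterState r (Fin.init w)) (w (Fin.last _))

lemma tendsto_rpow_one_div {x : ℝ} (hx : 0 < x) :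
    Tendsto (fun k : ℕ => x ^ ((1:ℝ)/k)) atTop (nhds 1) := by
  have h1 : Tendsto (fun k : ℕ => ((1:ℝ)/k) * Real.log x) atTop (nhds 0) := by
    simpa using tendsto_one_div_atTop_nhds_zero_nat.mul_const (Real.log x)
  have h2 : Tendsto (fun k : ℕ => Real.exp (((1:ℝ)/k) * Real.log x)) atTop (nhds 1) := by
    simpa [Function.comp_def] using (Real.continuous_exp.tendsto 0).comp h1
  refine h2.congr fun k => ?_
  rw [mul_comm, ← Real.rpow_def_of_pos hx]

lemma rho_le_of_mem {n p : ℕ} (hn : 0 < n) (hp : 0 < p)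
    (A : Fin p → Matrix (Fin n) (Fin n) ℝ) (hA : ∀ a, ∀ i j, 0 ≤ A a i j) (d : ℕ)
    {ρ : ℝ}
    (hρ : Tendsto (fun k : ℕ => ⨆ w : Fin k → Fin p,
        (⨆ i : Fin n, ⨆ j : Fin n, |((List.ofFn fun j => A (w j)).prod) i j|) ^ ((1 : ℝ) / k))
      atTop (nhds ρ))
    {c : ℝ} (hc : 0 < c) {u : (Fin d → Fin p) × Fin n → ℝ} (hu : ∀ q, 0 < u q)
    (hTu : deBruijnOp A d u ≤ c • u) : ρ ≤ c := by
  haveI : Nonempty (Fin n) := ⟨⟨0, hn⟩⟩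
  haveI : Nonempty (Fin p) := ⟨⟨0, hp⟩⟩
  have hstep : ∀ (r : Fin d → Fin p) (a : Fin p) (i : Fin n),
      ((A a)ᵀ.mulVec fun j => u (r, j)) i ≤ c * u (deBruijnShift d r a, i) := by
    intro r a i
    have h1 := hTu (deBruijnShift d r a, i)
    rw [Pi.smul_apply, smul_eq_mul] at h1
    refine le_trans ?_ h1
    simp only [deBruijnOp]
    refine le_ciSup_of_le (Set.Finite.bddAbove (Set.finite_range _)) ⟨(r, a), rfl⟩ ?_
    exact le_rfl
  have claim : ∀ (k : ℕ) (w : Fin k → Fin p) (r : Fin d → Fin p) (i : Fin n),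
      ((wprod A w)ᵀ.mulVec fun j => u (r, j)) i ≤ c ^ k * u (iterState r w, i) := by
    intro k
    induction k with
    | zero =>
      intro w r i
      rw [wprod_zero, Matrix.transpose_one, Matrix.one_mulVec, pow_zero, one_mul]
      exact le_rfl
    | succ k ih =>
      intro w r i
      have hw : wprod A w = wprod A (Fin.init w) * A (w (Fin.last k)) := by
        conv_lhs => rw [← Fin.snoc_init_self w]
        rw [wprod_snoc]
      have hcomp : ((wprod A w)ᵀ.mulVec fun j => u (r, j))
          = (A (w (Fin.last k)))ᵀ.mulVec ((wprod A (Fin.init w))ᵀ.mulVec fun j => u (r, j)) := by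
        rw [hw, Matrix.transpose_mul, ← Matrix.mulVec_mulVec]
      rw [hcomp]
      calc ((A (w (Fin.last k)))ᵀ.mulVec ((wprod A (Fin.init w))ᵀ.mulVec fun j => u (r, j))) i
          = ∑ j, (A (w (Fin.last k))) j i
              * ((wprod A (Fin.init w))ᵀ.mulVec fun j' => u (r, j')) j := by
            simp [Matrix.mulVec, dotProduct, Matrix.transpose_apply]
        _ ≤ ∑ j, (A (w (Fin.last k))) j i * (c ^ k * u (iterState r (Fin.init w), j)) :=
            Finset.sum_le_sum fun j _ => mul_le_mul_of_nonneg_left (ih _ _ _) (hA _ _ _)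
        _ = c ^ k * ∑ j, (A (w (Fin.last k))) j i * u (iterState r (Fin.init w), j) := by
            rw [Finset.mul_sum]
            exact Finset.sum_congr rfl fun j _ => by ring
        _ = c ^ k * ((A (w (Fin.last k)))ᵀ.mulVec fun j => u (iterState r (Fin.init w), j)) i := by
            simp [Matrix.mulVec, dotProduct, Matrix.transpose_apply]
        _ ≤ c ^ k * (c * u (deBruijnShift d (iterState r (Fin.init w)) (w (Fin.last k)), i)) :=
            mul_le_mul_of_nonneg_left (hstep _ _ _) (pow_nonneg hc.le _)
        _ = c ^ (k+1) * u (iterState r w, i) := by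
            rw [show iterState r w
              = deBruijnShift d (iterState r (Fin.init w)) (w (Fin.last k)) from rfl]
            ring
  obtain ⟨m, hm⟩ : ∃ m : ℝ, m = Finset.univ.inf' Finset.univ_nonempty u := ⟨_, rfl⟩
  obtain ⟨M, hM⟩ : ∃ M : ℝ, M = Finset.univ.sup' Finset.univ_nonempty u := ⟨_, rfl⟩
  have hm0 : 0 < m := by
    rw [hm]; exact (Finset.lt_inf'_iff _).mpr fun q _ => hu q
  have hmle : ∀ q, m ≤ u q := fun q => hm ▸ Finset.inf'_le u (Finset.mem_univ q)
  have hleM : ∀ q, u q ≤ M := fun q => hM ▸ Finset.le_sup' u (Finset.mem_univ q)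
  have hM0 : 0 < M := lt_of_lt_of_le (hu _) (hleM ((fun _ => ⟨0, hp⟩), ⟨0, hn⟩))
  have hent : ∀ (k : ℕ) (w : Fin k → Fin p) (j i : Fin n), wprod A w j i ≤ c ^ k * M / m := by
    intro k w j i
    rw [le_div_iff₀ hm0]
    set r0 : Fin d → Fin p := fun _ => ⟨0, hp⟩ with hr0
    calc wprod A w j i * m ≤ wprod A w j i * u (r0, j) :=
          mul_le_mul_of_nonneg_left (hmle _) (wprod_nonneg hA w j i)
      _ ≤ ∑ j', wprod A w j' i * u (r0, j') :=
          Finset.single_le_sum (f := fun j' => wprod A w j' i * u (r0, j'))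
            (fun t _ => mul_nonneg (wprod_nonneg hA w t i) (hu _).le) (Finset.mem_univ j)
      _ = ((wprod A w)ᵀ.mulVec fun j' => u (r0, j')) i := by
          simp [Matrix.mulVec, dotProduct, Matrix.transpose_apply]
      _ ≤ c ^ k * u (iterState r0 w, i) := claim k w r0 i
      _ ≤ c ^ k * M := mul_le_mul_of_nonneg_left (hleM _) (pow_nonneg hc.le _)
  have hMm0 : 0 < M / m := div_pos hM0 hm0
  have hseq : ∀ k : ℕ, 1 ≤ k →
      (⨆ w : Fin k → Fin p,
        (⨆ i : Fin n, ⨆ j : Fin n, |((List.ofFn fun j => A (w j)).prod) i j|) ^ ((1 : ℝ) / k))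
      ≤ c * (M/m) ^ ((1:ℝ)/k) := by
    intro k hk
    have hrhs0 : (0:ℝ) ≤ c * (M/m) ^ ((1:ℝ)/k) :=
      mul_nonneg hc.le (Real.rpow_nonneg hMm0.le _)
    refine Real.iSup_le (fun w => ?_) hrhs0
    have hcb : (0:ℝ) ≤ c ^ k * M / m := by positivity
    have hME : (⨆ i : Fin n, ⨆ j : Fin n, |((List.ofFn fun j => A (w j)).prod) i j|)
        ≤ c ^ k * M / m :=
      Real.iSup_le (fun i => Real.iSup_le (fun j => by
        rw [show |((List.ofFn fun j => A (w j)).prod) i j| = |wprod A w i j| from rfl,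
          abs_of_nonneg (wprod_nonneg hA w i j)]
        exact hent k w i j) hcb) hcb
    have h0 : (0:ℝ) ≤ ⨆ i : Fin n, ⨆ j : Fin n, |((List.ofFn fun j => A (w j)).prod) i j| :=
      Real.iSup_nonneg fun i => Real.iSup_nonneg fun j => abs_nonneg _
    have hkR : ((k:ℝ)) ≠ 0 := Nat.cast_ne_zero.mpr (by omega)
    calc (⨆ i : Fin n, ⨆ j : Fin n, |((List.ofFn fun j => A (w j)).prod) i j|) ^ ((1:ℝ)/k)
        ≤ (c ^ k * M / m) ^ ((1:ℝ)/k) :=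
          Real.rpow_le_rpow h0 hME (by positivity)
      _ = c * (M/m) ^ ((1:ℝ)/k) := by
          rw [mul_div_assoc, Real.mul_rpow (pow_nonneg hc.le k) hMm0.le]
          congr 1
          rw [← Real.rpow_natCast c k, ← Real.rpow_mul hc.le, mul_one_div, div_self hkR,
            Real.rpow_one]
  have hR : Tendsto (fun k : ℕ => c * (M/m) ^ ((1:ℝ)/k)) atTop (nhds c) := by
    have := (tendsto_rpow_one_div hMm0).const_mul c
    simpa using this
  refine le_of_tendsto_of_tendsto hρ hR ?_
  filter_upwards [eventually_ge_atTop 1] with k hk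
  exact hseq k hk

end CW8

open CW8 in
/-- for a positively irreducible family of nonnegative matrices,
`r(T^d) ≤ n^{1/(d+1)} · ρ(𝒜)`, and in particular `r(T^d) → ρ(𝒜)` as `d → ∞`. -/
theorem cwRadius_deBruijnOp_le_and_tendsto {n p : ℕ} (hn : 0 < n) (hp : 0 < p)
    (A : Fin p → Matrix (Fin n) (Fin n) ℝ)
    (hA : ∀ a, ∀ i j, 0 ≤ A a i j)
    (hirr : PosIrredFamily A)
    (ρ : ℝ)
    (hρ : Tendsto (fun k : ℕ => ⨆ w : Fin k → Fin p,
        (⨆ i : Fin n, ⨆ j : Fin n, |((List.ofFn fun j => A (w j)).prod) i j|) ^ ((1 : ℝ) / k))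
      atTop (nhds ρ)) :
    (∀ d : ℕ, cwRadius (deBruijnOp A d) ≤ (n : ℝ) ^ ((1 : ℝ) / (d + 1)) * ρ) ∧
    Tendsto (fun d : ℕ => cwRadius (deBruijnOp A d)) atTop (nhds ρ) := by
  have hn' : (0:ℝ) < n := by exact_mod_cast hn
  -- ρ is nonnegative
  have hρ0 : 0 ≤ ρ := by
    refine ge_of_tendsto hρ ?_
    filter_upwards with k
    exact Real.iSup_nonneg fun w => Real.rpow_nonneg
      (Real.iSup_nonneg fun i => Real.iSup_nonneg fun j => abs_nonneg _) _
  -- membership of n^{1/(d+1)}λ in the CW set, for every λ > ρ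
  have hmem : ∀ (d : ℕ) (lam : ℝ), ρ < lam →
      ((n : ℝ) ^ ((1 : ℝ) / (d + 1)) * lam) ∈
        {c : ℝ | 0 < c ∧ ∃ u : (Fin d → Fin p) × Fin n → ℝ,
          (∀ q, 0 < u q) ∧ deBruijnOp A d u ≤ c • u} := by
    intro d lam hlam
    have hlam0 : 0 < lam := lt_of_le_of_lt hρ0 hlam
    obtain ⟨k0, hk0⟩ := (eventually_atTop).mp (hρ.eventually (eventually_lt_nhds hlam))
    set N : ℕ := k0 + 1 with hN
    have hNd : k0 ≤ N * (d + 1) := by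
      calc k0 ≤ N := by omega
        _ = N * 1 := (mul_one N).symm
        _ ≤ N * (d + 1) := Nat.mul_le_mul_left N (by omega)
    have hk1 : 0 < N * (d + 1) := Nat.mul_pos (by omega) (by omega)
    have hbound : ∀ i, G A hn hp (N * (d + 1)) i ≤ lam ^ (N * (d + 1)) := by
      set k := N * (d + 1) with hkdef
      intro i
      refine G_le fun w kk => ?_
      have hklt := hk0 k hNd
      have hle1 : (⨆ i : Fin n, ⨆ j : Fin n,
            |((List.ofFn fun j => A (w j)).prod) i j|) ^ ((1:ℝ)/k)
          ≤ ⨆ w' : Fin k → Fin p, (⨆ i : Fin n, ⨆ j : Fin n,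
            |((List.ofFn fun j => A (w' j)).prod) i j|) ^ ((1:ℝ)/k) :=
        le_ciSup (f := fun w' : Fin k → Fin p => (⨆ i : Fin n, ⨆ j : Fin n,
            |((List.ofFn fun j => A (w' j)).prod) i j|) ^ ((1:ℝ)/k))
          (Set.Finite.bddAbove (Set.finite_range _)) w
      have hlt : (⨆ i : Fin n, ⨆ j : Fin n,
          |((List.ofFn fun j => A (w j)).prod) i j|) ^ ((1:ℝ)/k) < lam :=
        lt_of_le_of_lt hle1 hklt
      have h0 : (0:ℝ) ≤ ⨆ i : Fin n, ⨆ j : Fin n, |((List.ofFn fun j => A (w j)).prod) i j| :=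
        Real.iSup_nonneg fun i => Real.iSup_nonneg fun j => abs_nonneg _
      have hkne : ((k:ℝ)) ≠ 0 := Nat.cast_ne_zero.mpr hk1.ne'
      have heq : (⨆ i : Fin n, ⨆ j : Fin n, |((List.ofFn fun j => A (w j)).prod) i j|)
          = ((⨆ i : Fin n, ⨆ j : Fin n,
              |((List.ofFn fun j => A (w j)).prod) i j|) ^ ((1:ℝ)/k)) ^ (k:ℕ) := by
        rw [← Real.rpow_natCast (_ ^ ((1:ℝ)/k)) k, ← Real.rpow_mul h0, one_div,
          inv_mul_cancel₀ hkne, Real.rpow_one]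
      have hME : (⨆ i : Fin n, ⨆ j : Fin n, |((List.ofFn fun j => A (w j)).prod) i j|)
          ≤ lam ^ (k:ℕ) := by
        rw [heq]
        exact pow_le_pow_left₀ (Real.rpow_nonneg h0 _) hlt.le k
      calc wprod A w kk i ≤ |wprod A w kk i| := le_abs_self _
        _ ≤ ⨆ j : Fin n, |((List.ofFn fun j => A (w j)).prod) kk j| :=
          le_ciSup (f := fun j : Fin n => |((List.ofFn fun j => A (w j)).prod) kk j|)
            (Set.Finite.bddAbove (Set.finite_range _)) i
        _ ≤ ⨆ i : Fin n, ⨆ j : Fin n, |((List.ofFn fun j => A (w j)).prod) i j| :=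
          le_ciSup (f := fun i : Fin n => ⨆ j : Fin n, |((List.ofFn fun j => A (w j)).prod) i j|)
            (Set.Finite.bddAbove (Set.finite_range _)) kk
        _ ≤ lam ^ (k:ℕ) := hME
    obtain ⟨u, hu, hTu⟩ := exists_good_u hn hp A hA hlam0 d N (by omega) hbound
    exact ⟨mul_pos (Real.rpow_pos_of_pos hn' _) hlam0, u, hu, hTu⟩
  have hbdd : ∀ d : ℕ, BddBelow {c : ℝ | 0 < c ∧ ∃ u : (Fin d → Fin p) × Fin n → ℝ,
      (∀ q, 0 < u q) ∧ deBruijnOp A d u ≤ c • u} :=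
    fun d => ⟨0, fun x hx => hx.1.le⟩
  have hupper : ∀ (d : ℕ) (lam : ℝ), ρ < lam →
      cwRadius (deBruijnOp A d) ≤ (n : ℝ) ^ ((1 : ℝ) / (d + 1)) * lam := by
    intro d lam hlam
    exact csInf_le (hbdd d) (hmem d lam hlam)
  have hup : ∀ d : ℕ, cwRadius (deBruijnOp A d) ≤ (n : ℝ) ^ ((1 : ℝ) / (d + 1)) * ρ := by
    intro d
    have hc : (0:ℝ) < (n : ℝ) ^ ((1 : ℝ) / (d + 1)) := Real.rpow_pos_of_pos hn' _
    have h2 : cwRadius (deBruijnOp A d) / ((n : ℝ) ^ ((1 : ℝ) / (d + 1))) ≤ ρ := by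
      refine le_of_forall_gt_imp_ge_of_dense fun lam hlam => ?_
      rw [div_le_iff₀ hc]
      exact (hupper d lam hlam).trans (le_of_eq (mul_comm _ _))
    rw [div_le_iff₀ hc] at h2
    exact h2.trans (le_of_eq (mul_comm _ _))
  have hlow : ∀ d : ℕ, ρ ≤ cwRadius (deBruijnOp A d) := by
    intro d
    refine le_csInf ⟨_, hmem d (ρ + 1) (lt_add_one ρ)⟩ ?_
    rintro c ⟨hc0, u, hu, hTu⟩
    exact rho_le_of_mem hn hp A hA d hρ hc0 hu hTu
  refine ⟨hup, ?_⟩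
  have hC : Tendsto (fun d : ℕ => (n : ℝ) ^ ((1 : ℝ) / ((d:ℝ) + 1))) atTop (nhds 1) := by
    have h1 := (tendsto_rpow_one_div hn').comp (tendsto_add_atTop_nat 1)
    refine h1.congr fun d => ?_
    simp only [Function.comp_apply]
    norm_num
  have hCρ : Tendsto (fun d : ℕ => (n : ℝ) ^ ((1 : ℝ) / ((d:ℝ) + 1)) * ρ) atTop (nhds ρ) := by
    have := hC.mul_const ρ
    simpa using this
  exact tendsto_of_tendsto_of_tendsto_of_le_of_le tendsto_const_nhds hCρ hlow hup
end

section
/- Let D be a closed convex subset of a Banach space and F : D → D nonexpansive with F(D) contained in a compact subset of D. Then for any x⁰ ∈ D, the Krasnoselskii–Mann sequence x^{k+1} = (x^k + F(x^k))/2 converges to a fixed point of F. -/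
open Filter

/-- Ishikawa's theorem: let `D` be a closed convex subset of a Banach
space and `F : D → D` nonexpansive with `F(D)` contained in a compact subset of `D`.
Then for every `x⁰ ∈ D` the Krasnoselskii–Mann sequence
`x^{k+1} = (x^k + F(x^k))/2` converges to a fixed point of `F`. -/
theorem krasnoselskii_mann_converges {E : Type*} [NormedAddCommGroup E] [NormedSpace ℝ E]
    [CompleteSpace E]
    (D : Set E) (hDc : IsClosed D) (hDconv : Convex ℝ D)
    (F : E → E) (hFD : Set.MapsTo F D D)
    (hne : ∀ x ∈ D, ∀ y ∈ D, ‖F x - F y‖ ≤ ‖x - y‖)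
    (K : Set E) (hK : IsCompact K) (hKD : K ⊆ D) (hFK : F '' D ⊆ K)
    (x : ℕ → E) (hx0 : x 0 ∈ D)
    (hrec : ∀ k, x (k + 1) = (2 : ℝ)⁻¹ • (x k + F (x k))) :
    ∃ z ∈ D, F z = z ∧ Tendsto x atTop (nhds z) := by
  -- the iterates stay in `D`
  have hxD : ∀ k, x k ∈ D := by
    intro k
    induction k with
    | zero => exact hx0
    | succ k ih =>
      rw [hrec k, smul_add]
      exact hDconv ih (hFD ih) (by norm_num) (by norm_num) (by norm_num)
  set d : ℕ → ℝ := fun k => ‖F (x k) - x k‖ with hd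
  have hd0 : ∀ k, 0 ≤ d k := fun k => norm_nonneg _
  have hstep : ∀ k, x (k + 1) - x k = (2 : ℝ)⁻¹ • (F (x k) - x k) := by
    intro k; rw [hrec k]; module
  have hstep' : ∀ k, F (x k) - x (k + 1) = (2 : ℝ)⁻¹ • (F (x k) - x k) := by
    intro k; rw [hrec k]; module
  have hdist : ∀ k, ‖x (k + 1) - x k‖ = 2⁻¹ * d k := by
    intro k; rw [hstep k, norm_smul]; simp [hd]
  -- `d` is nonincreasing
  have hdmono : ∀ k, d (k + 1) ≤ d k := by
    intro k
    have h1 : ‖F (x (k + 1)) - F (x k)‖ ≤ ‖x (k + 1) - x k‖ :=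
      hne _ (hxD _) _ (hxD _)
    have h2 : ‖F (x k) - x (k + 1)‖ = 2⁻¹ * d k := by
      rw [hstep' k, norm_smul]; simp [hd]
    have h3 : d (k + 1) = ‖(F (x (k + 1)) - F (x k)) + (F (x k) - x (k + 1))‖ := by
      simp [hd, sub_add_sub_cancel]
    have h4 := norm_add_le (F (x (k + 1)) - F (x k)) (F (x k) - x (k + 1))
    rw [hdist k] at h1
    linarith [h3 ▸ h4, h1, h2 ▸ le_refl (‖F (x k) - x (k + 1)‖)]
  have hdanti : Antitone d := antitone_nat_of_succ_le hdmono
  -- distance travelled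
  have hxdist : ∀ i n, ‖x (i + n) - x i‖ ≤ (n : ℝ) * 2⁻¹ * d i := by
    intro i n
    induction n with
    | zero => simp
    | succ n ih =>
      have h1 : ‖x (i + n + 1) - x (i + n)‖ = 2⁻¹ * d (i + n) := hdist (i + n)
      have h2 : d (i + n) ≤ d i := hdanti (Nat.le_add_right i n)
      have h3 := norm_add_le (x (i + n + 1) - x (i + n)) (x (i + n) - x i)
      rw [sub_add_sub_cancel] at h3
      have : (i + (n + 1)) = (i + n + 1) := by omega
      rw [this]
      push_cast
      nlinarith [hd0 i]
  -- Ishikawa's key inequality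
  have key : ∀ n i, (2 : ℝ) ^ n * (d (i + n) - d i) + (1 + (n : ℝ) / 2) * d i
      ≤ ‖F (x (i + n)) - x i‖ := by
    intro n
    induction n with
    | zero => intro i; simp [hd]
    | succ n IH =>
      intro i
      have hiden : F (x (i + n + 1)) - x i =
          (2 : ℝ) • (F (x (i + n + 1)) - x (i + 1)) - (F (x (i + n + 1)) - F (x i)) := by
        rw [hrec i]; module
      have h1 : (2 : ℝ) * ‖F (x (i + n + 1)) - x (i + 1)‖ - ‖F (x (i + n + 1)) - F (x i)‖
          ≤ ‖F (x (i + n + 1)) - x i‖ := by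
        rw [hiden]
        have := norm_sub_norm_le ((2 : ℝ) • (F (x (i + n + 1)) - x (i + 1)))
          (F (x (i + n + 1)) - F (x i))
        rw [norm_smul] at this
        simpa using this
      have h2 : ‖F (x (i + n + 1)) - F (x i)‖ ≤ ((n : ℝ) + 1) * 2⁻¹ * d i := by
        have := hne _ (hxD (i + n + 1)) _ (hxD i)
        have h := hxdist i (n + 1)
        rw [show i + (n + 1) = i + n + 1 from by omega] at h
        push_cast at h
        linarith
      have h3 := IH (i + 1)
      rw [show i + 1 + n = i + n + 1 from by omega] at h3
      have h4 : d (i + 1) ≤ d i := hdmono i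
      have h5 : ((n : ℝ) + 1) ≤ 2 ^ n := by
        exact_mod_cast Nat.lt_two_pow_self (n := n)
      have hgap : (((n : ℝ)) + 2) * (d i - d (i + 1)) ≤ 2 * 2 ^ n * (d i - d (i + 1)) := by
        apply mul_le_mul_of_nonneg_right _ (by linarith)
        have : ((n : ℝ)) + 2 ≤ 2 * ((n : ℝ) + 1) := by linarith [Nat.cast_nonneg (α := ℝ) n]
        linarith
      have h3' : 2 * 2 ^ n * (d (i + n + 1) - d (i + 1)) + 2 * ((1 + (n : ℝ) / 2) * d (i + 1))
          ≤ 2 * ‖F (x (i + n + 1)) - x (i + 1)‖ := by linarith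
      have hp : (2 : ℝ) ^ (n + 1) = 2 * 2 ^ n := by ring
      rw [show i + (n + 1) = i + n + 1 from by omega]
      push_cast
      rw [hp]
      nlinarith [h1, h2, h3', hgap]
  -- boundedness
  have hFxK : ∀ k, F (x k) ∈ K := fun k => hFK ⟨x k, hxD k, rfl⟩
  obtain ⟨R, hR⟩ : ∃ R, ∀ y ∈ K, ‖y‖ ≤ R := by
    obtain ⟨r, hr⟩ := hK.isBounded.subset_closedBall 0
    exact ⟨r, fun y hy => by simpa using hr hy⟩
  set M0 : ℝ := max ‖x 0‖ R with hM0
  have hxbound : ∀ k, ‖x k‖ ≤ M0 := by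
    intro k
    induction k with
    | zero => exact le_max_left _ _
    | succ k ih =>
      rw [hrec k, norm_smul]
      have h1 := norm_add_le (x k) (F (x k))
      have h2 : ‖F (x k)‖ ≤ R := hR _ (hFxK k)
      have h3 : R ≤ M0 := le_max_right _ _
      simp only [norm_inv, Real.norm_ofNat]
      nlinarith
  set M : ℝ := R + M0 with hM
  have hMb : ∀ i n, ‖F (x (i + n)) - x i‖ ≤ M := by
    intro i n
    calc ‖F (x (i + n)) - x i‖ ≤ ‖F (x (i + n))‖ + ‖x i‖ := norm_sub_le _ _
      _ ≤ R + M0 := add_le_add (hR _ (hFxK _)) (hxbound i)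
  -- `d` converges to its infimum, which is `0`
  have hbdd : BddBelow (Set.range d) := ⟨0, by rintro _ ⟨k, rfl⟩; exact hd0 k⟩
  set L : ℝ := ⨅ k, d k with hLdef
  have hL0 : 0 ≤ L := le_ciInf hd0
  have hLle : ∀ k, L ≤ d k := fun k => ciInf_le hbdd k
  have hLzero : L = 0 := by
    by_contra hne'
    have hLpos : 0 < L := lt_of_le_of_ne hL0 (Ne.symm hne')
    obtain ⟨n, hn⟩ := exists_nat_gt ((2 * (M + 1)) / L)
    have hn' : M + 1 < (1 + (n : ℝ) / 2) * L := by
      rw [div_lt_iff₀ hLpos] at hn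
      nlinarith
    obtain ⟨i, hi⟩ : ∃ i, d i < L + ((2 : ℝ) ^ n)⁻¹ := by
      apply exists_lt_of_ciInf_lt
      rw [← hLdef]
      have : (0 : ℝ) < ((2 : ℝ) ^ n)⁻¹ := by positivity
      linarith
    have hk := key n i
    have hMk := hMb i n
    have hpow : (0 : ℝ) < 2 ^ n := by positivity
    have h6 : d (i + n) - d i > -((2 : ℝ) ^ n)⁻¹ := by
      have := hLle (i + n); linarith
    have h7 : (2 : ℝ) ^ n * (d (i + n) - d i) ≥ -1 := by
      have := mul_le_mul_of_nonneg_left h6.le hpow.le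
      rw [mul_neg, mul_inv_cancel₀ hpow.ne'] at this
      linarith
    have h8 : (1 + (n : ℝ) / 2) * L ≤ (1 + (n : ℝ) / 2) * d i := by
      apply mul_le_mul_of_nonneg_left (hLle i)
      positivity
    linarith
  have hdT : Tendsto d atTop (nhds 0) := by
    have := tendsto_atTop_ciInf hdanti hbdd
    rwa [← hLdef, hLzero] at this
  -- extract a convergent subsequence of `F (x k)`
  obtain ⟨z, hzK, φ, hφ, hφT⟩ := hK.tendsto_subseq hFxK
  have hzD : z ∈ D := hKD hzK
  have hdφ : Tendsto (fun j => d (φ j)) atTop (nhds 0) := hdT.comp hφ.tendsto_atTop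
  have hsub : Tendsto (fun j => F (x (φ j)) - x (φ j)) atTop (nhds 0) := by
    rw [tendsto_zero_iff_norm_tendsto_zero]
    exact hdφ
  have hxφ : Tendsto (fun j => x (φ j)) atTop (nhds z) := by
    have := hφT.sub hsub
    simp only [Function.comp] at this
    simpa using this
  -- `z` is a fixed point
  have hFz : F z = z := by
    have h1 : Tendsto (fun j => F (x (φ j))) atTop (nhds (F z)) := by
      rw [tendsto_iff_norm_sub_tendsto_zero]
      apply squeeze_zero (fun j => norm_nonneg _) (fun j => hne _ (hxD _) _ hzD)
      rw [← tendsto_iff_norm_sub_tendsto_zero]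
      exact hxφ
    have h2 : Tendsto (fun j => F (x (φ j))) atTop (nhds z) := hφT
    exact tendsto_nhds_unique h1 h2
  -- Fejér monotonicity and conclusion
  set e : ℕ → ℝ := fun k => ‖x k - z‖ with he
  have hemono : ∀ k, e (k + 1) ≤ e k := by
    intro k
    have hiden : x (k + 1) - z = (2 : ℝ)⁻¹ • (x k - z) + (2 : ℝ)⁻¹ • (F (x k) - F z) := by
      rw [hrec k, hFz]; module
    have h1 : ‖F (x k) - F z‖ ≤ ‖x k - z‖ := hne _ (hxD k) _ hzD
    calc e (k + 1) = ‖(2 : ℝ)⁻¹ • (x k - z) + (2 : ℝ)⁻¹ • (F (x k) - F z)‖ := by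
          rw [he]; simp only []; rw [hiden]
      _ ≤ ‖(2 : ℝ)⁻¹ • (x k - z)‖ + ‖(2 : ℝ)⁻¹ • (F (x k) - F z)‖ := norm_add_le _ _
      _ = 2⁻¹ * ‖x k - z‖ + 2⁻¹ * ‖F (x k) - F z‖ := by
          rw [norm_smul, norm_smul]; simp
      _ ≤ e k := by simp only [he]; linarith
  have heanti : Antitone e := antitone_nat_of_succ_le hemono
  have hebdd : BddBelow (Set.range e) := ⟨0, by rintro _ ⟨k, rfl⟩; exact norm_nonneg _⟩
  have heφ : Tendsto (fun j => e (φ j)) atTop (nhds 0) :=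
    tendsto_iff_norm_sub_tendsto_zero.mp hxφ
  have heinf0 : (⨅ k, e k) = 0 := by
    have h1 : (⨅ k, e k) ≤ 0 :=
      ge_of_tendsto heφ (Eventually.of_forall fun j => ciInf_le hebdd (φ j))
    have h2 : 0 ≤ ⨅ k, e k := le_ciInf fun k => norm_nonneg _
    linarith
  have heT : Tendsto e atTop (nhds 0) := by
    have := tendsto_atTop_ciInf heanti hebdd
    rwa [heinf0] at this
  refine ⟨z, hzD, hFz, ?_⟩
  rw [tendsto_iff_norm_sub_tendsto_zero]
  exact heT
end

section
/- Let f : ℝ₊^N → ℝ₊^N be monotone, positively homogeneous, and have an eigenvector u with all entries positive (f(u) = λu, λ > 0). Then the projective Krasnoselskii–Mann iteration v^{k+1} = [ (f(v^k)/G[f(v^k)]) ∘ v^k ]^{1/2}, started from any positive v⁰ with ∏ᵢ v⁰ᵢ = 1, converges to an eigenvector v of f with positive entries, and G[f(v^k)] converges to the eigenvalue associated with v. -/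
open Filter

namespace PKM

variable {ι : Type*} [Fintype ι] [Nonempty ι]

noncomputable def msup (x : ι → ℝ) : ℝ := Finset.univ.sup' Finset.univ_nonempty x
noncomputable def minf (x : ι → ℝ) : ℝ := Finset.univ.inf' Finset.univ_nonempty x

lemma le_msup (x : ι → ℝ) (i : ι) : x i ≤ msup x := Finset.le_sup' x (Finset.mem_univ i)
lemma minf_le (x : ι → ℝ) (i : ι) : minf x ≤ x i := Finset.inf'_le x (Finset.mem_univ i)
lemma msup_le {x : ι → ℝ} {a : ℝ} (h : ∀ i, x i ≤ a) : msup x ≤ a :=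
  Finset.sup'_le _ _ (fun i _ => h i)
lemma le_minf {x : ι → ℝ} {a : ℝ} (h : ∀ i, a ≤ x i) : a ≤ minf x :=
  Finset.le_inf' _ _ (fun i _ => h i)
lemma exists_msup (x : ι → ℝ) : ∃ i, msup x = x i := by
  obtain ⟨i, _, h⟩ := Finset.exists_mem_eq_sup' (Finset.univ_nonempty (α := ι)) x
  exact ⟨i, h⟩
lemma exists_minf (x : ι → ℝ) : ∃ i, minf x = x i := by
  obtain ⟨i, _, h⟩ := Finset.exists_mem_eq_inf' (Finset.univ_nonempty (α := ι)) x
  exact ⟨i, h⟩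
lemma msup_zero : msup (fun _ : ι => (0:ℝ)) = 0 := by
  simp [msup]
lemma minf_zero : minf (fun _ : ι => (0:ℝ)) = 0 := by
  simp [minf]

lemma tendsto_msup {a : ℕ → ι → ℝ} {b : ι → ℝ}
    (h : ∀ i, Tendsto (fun n => a n i) atTop (nhds (b i))) :
    Tendsto (fun n => msup (a n)) atTop (nhds (msup b)) := by
  rw [Metric.tendsto_atTop]
  intro ε hε
  have h' : ∀ i : ι, ∃ N : ℕ, ∀ n ≥ N, |a n i - b i| < ε / 2 := by
    intro i
    have := (Metric.tendsto_atTop.mp (h i)) (ε/2) (by linarith)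
    simpa [Real.dist_eq] using this
  choose N hN using h'
  refine ⟨Finset.univ.sup N, fun n hn => ?_⟩
  have hub : ∀ i : ι, |a n i - b i| < ε / 2 := fun i =>
    hN i n (le_trans (Finset.le_sup (Finset.mem_univ i)) hn)
  rw [Real.dist_eq, abs_sub_lt_iff]
  constructor
  · obtain ⟨i, hi⟩ := exists_msup (a n)
    have := le_msup b i
    have := hub i
    have := abs_sub_lt_iff.mp (hub i)
    rw [hi]; linarith [this.1]
  · obtain ⟨i, hi⟩ := exists_msup b
    have := le_msup (a n) i
    have := abs_sub_lt_iff.mp (hub i)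
    rw [hi]; linarith [this.2]

lemma tendsto_minf {a : ℕ → ι → ℝ} {b : ι → ℝ}
    (h : ∀ i, Tendsto (fun n => a n i) atTop (nhds (b i))) :
    Tendsto (fun n => minf (a n)) atTop (nhds (minf b)) := by
  rw [Metric.tendsto_atTop]
  intro ε hε
  have h' : ∀ i : ι, ∃ N : ℕ, ∀ n ≥ N, |a n i - b i| < ε / 2 := by
    intro i
    have := (Metric.tendsto_atTop.mp (h i)) (ε/2) (by linarith)
    simpa [Real.dist_eq] using this
  choose N hN using h'
  refine ⟨Finset.univ.sup N, fun n hn => ?_⟩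
  have hub : ∀ i : ι, |a n i - b i| < ε / 2 := fun i =>
    hN i n (le_trans (Finset.le_sup (Finset.mem_univ i)) hn)
  rw [Real.dist_eq, abs_sub_lt_iff]
  constructor
  · obtain ⟨i, hi⟩ := exists_minf b
    have := minf_le (a n) i
    have := abs_sub_lt_iff.mp (hub i)
    rw [hi]; linarith [this.1]
  · obtain ⟨i, hi⟩ := exists_minf (a n)
    have := minf_le b i
    have := abs_sub_lt_iff.mp (hub i)
    rw [hi]; linarith [this.2]

/-- A monotone, additively homogeneous map satisfies `F x i ≤ F y i + max (x - y)`. -/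
lemma key_sup (F : (ι → ℝ) → (ι → ℝ))
    (hm : ∀ x y : ι → ℝ, x ≤ y → F x ≤ F y)
    (ha : ∀ (c : ℝ) (x : ι → ℝ), F (fun i => x i + c) = fun i => F x i + c)
    (x y : ι → ℝ) (i : ι) : F x i ≤ F y i + msup (fun j => x j - y j) := by
  have h1 : x ≤ fun j => y j + msup (fun j => x j - y j) := by
    intro j
    have := le_msup (fun j => x j - y j) j
    dsimp at this ⊢; linarith
  have h2 := hm x _ h1 i
  rw [ha] at h2
  exact h2

lemma key_inf (F : (ι → ℝ) → (ι → ℝ))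
    (hm : ∀ x y : ι → ℝ, x ≤ y → F x ≤ F y)
    (ha : ∀ (c : ℝ) (x : ι → ℝ), F (fun i => x i + c) = fun i => F x i + c)
    (x y : ι → ℝ) (i : ι) : F y i + minf (fun j => x j - y j) ≤ F x i := by
  have h1 : (fun j => y j + minf (fun j => x j - y j)) ≤ x := by
    intro j
    have := minf_le (fun j => x j - y j) j
    dsimp; linarith
  have h2 := hm _ x h1 i
  rw [ha] at h2
  exact h2

/-- Sequential continuity (pointwise) of a monotone additively homogeneous map. -/
lemma seqcont (F : (ι → ℝ) → (ι → ℝ))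
    (hm : ∀ x y : ι → ℝ, x ≤ y → F x ≤ F y)
    (ha : ∀ (c : ℝ) (x : ι → ℝ), F (fun i => x i + c) = fun i => F x i + c)
    {xs : ℕ → ι → ℝ} {x : ι → ℝ}
    (h : ∀ i, Tendsto (fun n => xs n i) atTop (nhds (x i))) (i : ι) :
    Tendsto (fun n => F (xs n) i) atTop (nhds (F x i)) := by
  have hup : ∀ n, F (xs n) i ≤ F x i + msup (fun j => xs n j - x j) :=
    fun n => key_sup F hm ha (xs n) x i
  have hlo : ∀ n, F x i + minf (fun j => xs n j - x j) ≤ F (xs n) i := by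
    intro n
    have := key_inf F hm ha (xs n) x i
    exact this
  have hsub : ∀ j : ι, Tendsto (fun n => xs n j - x j) atTop (nhds 0) := by
    intro j
    have := (h j).sub_const (x j)
    simpa using this
  have h1 : Tendsto (fun n => msup (fun j => xs n j - x j)) atTop (nhds 0) := by
    have := tendsto_msup (b := fun _ => (0:ℝ)) hsub
    simpa [msup_zero] using this
  have h2 : Tendsto (fun n => minf (fun j => xs n j - x j)) atTop (nhds 0) := by
    have := tendsto_minf (b := fun _ => (0:ℝ)) hsub
    simpa [minf_zero] using this
  have hU : Tendsto (fun n => F x i + msup (fun j => xs n j - x j)) atTop (nhds (F x i)) := by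
    have := (tendsto_const_nhds (x := F x i) (f := atTop (α := ℕ))).add h1
    simpa using this
  have hL : Tendsto (fun n => F x i + minf (fun j => xs n j - x j)) atTop (nhds (F x i)) := by
    have := (tendsto_const_nhds (x := F x i) (f := atTop (α := ℕ))).add h2
    simpa using this
  exact tendsto_of_tendsto_of_tendsto_of_le_of_le hL hU hlo hup


set_option maxHeartbeats 2000000 in
/-- Core convergence lemma: the Krasnoselskii–Mann (half-averaged) iteration of a
monotone, additively homogeneous map `S` with a fixed point `p` converges. -/
lemma core (S : (ι → ℝ) → (ι → ℝ))
    (Smono : ∀ x y : ι → ℝ, x ≤ y → S x ≤ S y)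
    (Sadd : ∀ (c : ℝ) (x : ι → ℝ), S (fun i => x i + c) = fun i => S x i + c)
    (p : ι → ℝ) (hp : S p = p)
    (z : ℕ → ι → ℝ)
    (hz : ∀ k, z (k + 1) = fun i => (z k i + S (z k) i) / 2) :
    ∃ w : ι → ℝ, S w = w ∧ ∀ i, Tendsto (fun k => z k i) atTop (nhds (w i)) := by
  classical
  set T : (ι → ℝ) → (ι → ℝ) := fun x i => (x i + S x i) / 2 with hTdef
  have Tap : ∀ (x : ι → ℝ) i, T x i = (x i + S x i) / 2 := fun _ _ => rfl
  have Tmono : ∀ x y : ι → ℝ, x ≤ y → T x ≤ T y := by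
    intro x y h i
    have h1 := Smono x y h i
    have h2 := h i
    rw [Tap, Tap]
    linarith
  have Tadd : ∀ (c : ℝ) (x : ι → ℝ), T (fun i => x i + c) = fun i => T x i + c := by
    intro c x
    funext i
    show ((x i + c) + S (fun j => x j + c) i) / 2 = (x i + S x i) / 2 + c
    have h : S (fun j => x j + c) i = S x i + c := by rw [Sadd]
    rw [h]
    ring
  have Tp : T p = p := by
    funext i
    show (p i + S p i) / 2 = p i
    rw [congrFun hp i]
    ring
  have hzT : ∀ k, z (k + 1) = T (z k) := fun k => hz k
  -- one-step inequality for increments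
  have stepub : ∀ (x : ι → ℝ) i,
      T (T x) i - T x i ≤ ((T x i - x i) + msup (fun j => T x j - x j)) / 2 := by
    intro x i
    have h1 := key_sup S Smono Sadd (T x) x i
    have e1 := Tap (T x) i
    have e2 := Tap x i
    linarith
  have steplb : ∀ (x : ι → ℝ) i,
      ((T x i - x i) + minf (fun j => T x j - x j)) / 2 ≤ T (T x) i - T x i := by
    intro x i
    have h1 := key_inf S Smono Sadd (T x) x i
    have e1 := Tap (T x) i
    have e2 := Tap x i
    linarith
  set c : ℕ → ℝ := fun k => msup (fun i => z (k + 1) i - z k i) with hcdef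
  set m : ℕ → ℝ := fun k => minf (fun i => z (k + 1) i - z k i) with hmdef
  have hdub : ∀ k i, z (k + 2) i - z (k + 1) i ≤ ((z (k + 1) i - z k i) + c k) / 2 := by
    intro k i
    have h := stepub (z k) i
    rw [← hzT k] at h
    rw [← hzT (k + 1)] at h
    exact h
  have hdlb : ∀ k i, ((z (k + 1) i - z k i) + m k) / 2 ≤ z (k + 2) i - z (k + 1) i := by
    intro k i
    have h := steplb (z k) i
    rw [← hzT k] at h
    rw [← hzT (k + 1)] at h
    exact h
  have hcanti : Antitone c := by
    apply antitone_nat_of_succ_le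
    intro k
    apply msup_le
    intro i
    have h1 := hdub k i
    have h2 : z (k + 1) i - z k i ≤ c k := le_msup (fun i => z (k + 1) i - z k i) i
    have : z (k + 1 + 1) i - z (k + 1) i ≤ (z (k + 1) i - z k i + c k) / 2 := h1
    linarith
  have hmmono : Monotone m := by
    apply monotone_nat_of_le_succ
    intro k
    apply le_minf
    intro i
    have h1 := hdlb k i
    have h2 : m k ≤ z (k + 1) i - z k i := minf_le (fun i => z (k + 1) i - z k i) i
    have : (z (k + 1) i - z k i + m k) / 2 ≤ z (k + 1 + 1) i - z (k + 1) i := h1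
    linarith
  have hmc : ∀ k, m k ≤ c k := by
    intro k
    obtain i0 : ι := Classical.arbitrary ι
    exact le_trans (minf_le (fun i => z (k + 1) i - z k i) i0)
      (le_msup (fun i => z (k + 1) i - z k i) i0)
  have hcbdd : BddBelow (Set.range c) := by
    refine ⟨m 0, ?_⟩
    rintro _ ⟨k, rfl⟩
    exact le_trans (hmmono (Nat.zero_le k)) (hmc k)
  have hmbdd : BddAbove (Set.range m) := by
    refine ⟨c 0, ?_⟩
    rintro _ ⟨k, rfl⟩
    exact le_trans (hmc k) (hcanti (Nat.zero_le k))
  have hcT : Tendsto c atTop (nhds (⨅ k, c k)) := tendsto_atTop_ciInf hcanti hcbdd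
  have hmT : Tendsto m atTop (nhds (⨆ k, m k)) := tendsto_atTop_ciSup hmmono hmbdd
  set cs : ℝ := ⨅ k, c k with hcsdef
  set ms : ℝ := ⨆ k, m k with hmsdef
  -- box invariance
  set lo : ℝ := minf (fun i => z 0 i - p i) with hlodef
  set hi : ℝ := msup (fun i => z 0 i - p i) with hhidef
  have hbox : ∀ k i, p i + lo ≤ z k i ∧ z k i ≤ p i + hi := by
    intro k
    induction k with
    | zero =>
      intro i
      have h1 : minf (fun i => z 0 i - p i) ≤ z 0 i - p i := minf_le _ i
      have h2 : z 0 i - p i ≤ msup (fun i => z 0 i - p i) := le_msup (fun i => z 0 i - p i) i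
      exact ⟨by linarith, by linarith⟩
    | succ n ih =>
      intro i
      rw [hzT n]
      constructor
      · have h1 := key_inf T Tmono Tadd (z n) p i
        have h2 : lo ≤ minf (fun j => z n j - p j) := le_minf fun j => by
          have := (ih j).1; linarith
        have h3 : T p i = p i := congrFun Tp i
        linarith
      · have h1 := key_sup T Tmono Tadd (z n) p i
        have h2 : msup (fun j => z n j - p j) ≤ hi := msup_le fun j => by
          have := (ih j).2; linarith
        have h3 : T p i = p i := congrFun Tp i
        linarith
  -- compactness: extract a convergent subsequence
  have hzmem : ∀ k, z k ∈ Set.Icc (fun i => p i + lo) (fun i => p i + hi) := by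
    intro k
    rw [Set.mem_Icc]
    exact ⟨fun i => (hbox k i).1, fun i => (hbox k i).2⟩
  obtain ⟨w, hwmem, φ, hφmono, hφtend⟩ := (isCompact_Icc).tendsto_subseq hzmem
  have hphiTop : Tendsto φ atTop atTop := hφmono.tendsto_atTop
  have hwc : ∀ i, Tendsto (fun n => z (φ n) i) atTop (nhds (w i)) := by
    intro i
    exact (tendsto_pi_nhds.mp hφtend) i
  -- iterates of the cluster point
  set x : ℕ → ι → ℝ := fun j => T^[j] w with hxdef
  have hxsucc : ∀ j, x (j + 1) = T (x j) := fun j => Function.iterate_succ_apply' T j w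
  have hxzero : x 0 = w := rfl
  have hxsub : ∀ j i, Tendsto (fun n => z (φ n + j) i) atTop (nhds (x j i)) := by
    intro j
    induction j with
    | zero => intro i; simpa [hxzero] using hwc i
    | succ jj ih =>
      intro i
      have h1 : ∀ n, z (φ n + (jj + 1)) i = T (z (φ n + jj)) i := by
        intro n
        rw [show φ n + (jj + 1) = (φ n + jj) + 1 from rfl, hzT (φ n + jj)]
      have h2 := seqcont T Tmono Tadd (xs := fun n => z (φ n + jj)) (x := x jj) ih i
      rw [hxsucc jj]
      simp only [h1]
      exact h2
  have hφj : ∀ j : ℕ, Tendsto (fun n => φ n + j) atTop atTop := fun j =>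
    tendsto_atTop_mono (fun n => Nat.le_add_right (φ n) j) hphiTop
  have hExc : ∀ j, msup (fun i => x (j + 1) i - x j i) = cs := by
    intro j
    have h1 : Tendsto (fun n => c (φ n + j)) atTop (nhds cs) := hcT.comp (hφj j)
    have h2 : Tendsto (fun n => c (φ n + j)) atTop
        (nhds (msup (fun i => x (j + 1) i - x j i))) := by
      have : ∀ i, Tendsto (fun n => z ((φ n + j) + 1) i - z (φ n + j) i) atTop
          (nhds (x (j + 1) i - x j i)) := by
        intro i
        exact (hxsub (j + 1) i).sub (hxsub j i)
      exact tendsto_msup this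
    exact tendsto_nhds_unique h2 h1
  have hExm : ∀ j, minf (fun i => x (j + 1) i - x j i) = ms := by
    intro j
    have h1 : Tendsto (fun n => m (φ n + j)) atTop (nhds ms) := hmT.comp (hφj j)
    have h2 : Tendsto (fun n => m (φ n + j)) atTop
        (nhds (minf (fun i => x (j + 1) i - x j i))) := by
      have : ∀ i, Tendsto (fun n => z ((φ n + j) + 1) i - z (φ n + j) i) atTop
          (nhds (x (j + 1) i - x j i)) := by
        intro i
        exact (hxsub (j + 1) i).sub (hxsub j i)
      exact tendsto_minf this
    exact tendsto_nhds_unique h2 h1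
  -- boundedness of the iterates of w
  have hxbox : ∀ j i, p i + lo ≤ x j i ∧ x j i ≤ p i + hi := by
    intro j
    induction j with
    | zero =>
      intro i
      have h := Set.mem_Icc.mp hwmem
      exact ⟨h.1 i, h.2 i⟩
    | succ n ih =>
      intro i
      rw [hxsucc n]
      constructor
      · have h1 := key_inf T Tmono Tadd (x n) p i
        have h2 : lo ≤ minf (fun j => x n j - p j) := le_minf fun j => by
          have := (ih j).1; linarith
        have h3 : T p i = p i := congrFun Tp i
        linarith
      · have h1 := key_sup T Tmono Tadd (x n) p i
        have h2 : msup (fun j => x n j - p j) ≤ hi := msup_le fun j => by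
          have := (ih j).2; linarith
        have h3 : T p i = p i := congrFun Tp i
        linarith
  -- chain argument: cs = 0
  have hEstep : ∀ j i, x (j + 2) i - x (j + 1) i ≤ ((x (j + 1) i - x j i) + cs) / 2 := by
    intro j i
    have h := stepub (x j) i
    rw [← hxsucc j] at h
    rw [← hxsucc (j + 1)] at h
    rw [hExc j] at h
    exact h
  have hEstep' : ∀ j i, ((x (j + 1) i - x j i) + ms) / 2 ≤ x (j + 2) i - x (j + 1) i := by
    intro j i
    have h := steplb (x j) i
    rw [← hxsucc j] at h
    rw [← hxsucc (j + 1)] at h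
    rw [hExm j] at h
    exact h
  have hAanti : ∀ j i, x (j + 2) i - x (j + 1) i = cs → x (j + 1) i - x j i = cs := by
    intro j i h
    have h1 := hEstep j i
    have h2 : x (j + 1) i - x j i ≤ msup (fun i => x (j + 1) i - x j i) :=
      le_msup (fun i => x (j + 1) i - x j i) i
    rw [hExc j] at h2
    linarith
  have hBanti : ∀ j i, x (j + 2) i - x (j + 1) i = ms → x (j + 1) i - x j i = ms := by
    intro j i h
    have h1 := hEstep' j i
    have h2 : minf (fun i => x (j + 1) i - x j i) ≤ x (j + 1) i - x j i :=
      minf_le (fun i => x (j + 1) i - x j i) i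
    rw [hExm j] at h2
    linarith
  have hdown : ∀ (P : ℝ) (hP : ∀ j i, x (j + 2) i - x (j + 1) i = P → x (j + 1) i - x j i = P)
      (d jj : ℕ) (i : ι), x (jj + d + 1) i - x (jj + d) i = P → x (jj + 1) i - x jj i = P := by
    intro P hP d
    induction d with
    | zero => intro jj i h; simpa using h
    | succ dd ih =>
      intro jj i h
      apply ih jj i
      exact hP (jj + dd) i h
  have hconst : ∀ (P : ℝ), (∀ j i, x (j + 2) i - x (j + 1) i = P → x (j + 1) i - x j i = P) →
      (∀ j, ∃ i, x (j + 1) i - x j i = P) → ∃ i, ∀ j, x (j + 1) i - x j i = P := by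
    intro P hP hEx
    choose g hg using hEx
    obtain ⟨i0, hi0⟩ := Finite.exists_infinite_fiber g
    have hi0' : (g ⁻¹' {i0}).Infinite := Set.infinite_coe_iff.mp hi0
    refine ⟨i0, fun j => ?_⟩
    obtain ⟨j', hj'mem, hjj'⟩ := hi0'.exists_gt j
    have hgj' : g j' = i0 := hj'mem
    have hstart : x (j + (j' - j) + 1) i0 - x (j + (j' - j)) i0 = P := by
      rw [Nat.add_sub_cancel' (le_of_lt hjj')]
      rw [← hgj']
      exact hg j'
    exact hdown P hP (j' - j) j i0 hstart
  have hlinear : ∀ (P : ℝ) (i : ι), (∀ j, x (j + 1) i - x j i = P) →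
      ∀ j : ℕ, x j i = x 0 i + j * P := by
    intro P i hall j
    induction j with
    | zero => simp
    | succ n ih =>
      have h := hall n
      push_cast
      linarith
  have hzero : ∀ (P : ℝ) (i : ι), (∀ j : ℕ, x j i = x 0 i + j * P) → P = 0 := by
    intro P i hlin
    by_contra hne
    rcases lt_or_gt_of_ne hne with hneg | hpos
    · obtain ⟨n, hn⟩ := exists_nat_gt ((x 0 i - (p i + lo)) / (-P))
      have h1 := (hxbox n i).1
      have h2 := hlin n
      have hpos' : (0:ℝ) < -P := by linarith
      have h3 : x 0 i - (p i + lo) < (n : ℝ) * (-P) := (div_lt_iff₀ hpos').mp hn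
      nlinarith
    · obtain ⟨n, hn⟩ := exists_nat_gt (((p i + hi) - x 0 i) / P)
      have h1 := (hxbox n i).2
      have h2 := hlin n
      have h3 : (p i + hi) - x 0 i < (n : ℝ) * P := (div_lt_iff₀ hpos).mp hn
      nlinarith
  have hcs0 : cs = 0 := by
    obtain ⟨i0, hi0⟩ := hconst cs hAanti (fun j => by
      obtain ⟨i, hi⟩ := exists_msup (fun i => x (j + 1) i - x j i)
      exact ⟨i, by rw [← hi, hExc j]⟩)
    exact hzero cs i0 (hlinear cs i0 hi0)
  have hms0 : ms = 0 := by
    obtain ⟨i0, hi0⟩ := hconst ms hBanti (fun j => by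
      obtain ⟨i, hi⟩ := exists_minf (fun i => x (j + 1) i - x j i)
      exact ⟨i, by rw [← hi, hExm j]⟩)
    exact hzero ms i0 (hlinear ms i0 hi0)
  -- increments tend to zero
  rw [hcs0] at hcT
  rw [hms0] at hmT
  have hd0 : ∀ i, Tendsto (fun k => z (k + 1) i - z k i) atTop (nhds 0) := by
    intro i
    have hub : ∀ k, z (k + 1) i - z k i ≤ c k := fun k =>
      le_msup (fun i => z (k + 1) i - z k i) i
    have hlb : ∀ k, m k ≤ z (k + 1) i - z k i := fun k =>
      minf_le (fun i => z (k + 1) i - z k i) i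
    exact tendsto_of_tendsto_of_tendsto_of_le_of_le hmT hcT hlb hub
  -- the cluster point is a fixed point of T
  have hTw : T w = w := by
    funext i
    have h1 : Tendsto (fun n => z (φ n + 1) i) atTop (nhds (T w i)) := by
      have := hxsub 1 i
      rw [show x 1 = T (x 0) from hxsucc 0, hxzero] at this
      exact this
    have h2 : Tendsto (fun n => z (φ n + 1) i) atTop (nhds (w i)) := by
      have h3 := (hwc i).add (((hd0 i).comp hphiTop))
      rw [add_zero] at h3
      refine h3.congr ?_
      intro n
      simp only [Function.comp_apply]
      ring
    exact tendsto_nhds_unique h1 h2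
  -- monotone convergence to the fixed point
  set al : ℕ → ℝ := fun k => msup (fun i => z k i - w i) with haldef
  set be : ℕ → ℝ := fun k => minf (fun i => z k i - w i) with hbedef
  have halanti : Antitone al := by
    apply antitone_nat_of_succ_le
    intro k
    apply msup_le
    intro i
    have h1 := key_sup T Tmono Tadd (z k) w i
    have h2 : T w i = w i := congrFun hTw i
    have h3 : z (k + 1) i = T (z k) i := congrFun (hzT k) i
    show z (k + 1) i - w i ≤ al k
    rw [h3]
    have : msup (fun j => z k j - w j) = al k := rfl
    linarith
  have hbemono : Monotone be := by
    apply monotone_nat_of_le_succ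
    intro k
    apply le_minf
    intro i
    have h1 := key_inf T Tmono Tadd (z k) w i
    have h2 : T w i = w i := congrFun hTw i
    have h3 : z (k + 1) i = T (z k) i := congrFun (hzT k) i
    show be k ≤ z (k + 1) i - w i
    rw [h3]
    have : minf (fun j => z k j - w j) = be k := rfl
    linarith
  have hbeal : ∀ k, be k ≤ al k := by
    intro k
    obtain i0 : ι := Classical.arbitrary ι
    exact le_trans (minf_le (fun i => z k i - w i) i0) (le_msup (fun i => z k i - w i) i0)
  have halbdd : BddBelow (Set.range al) := by
    refine ⟨be 0, ?_⟩
    rintro _ ⟨k, rfl⟩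
    exact le_trans (hbemono (Nat.zero_le k)) (hbeal k)
  have hbebdd : BddAbove (Set.range be) := by
    refine ⟨al 0, ?_⟩
    rintro _ ⟨k, rfl⟩
    exact le_trans (hbeal k) (halanti (Nat.zero_le k))
  have halT : Tendsto al atTop (nhds (⨅ k, al k)) := tendsto_atTop_ciInf halanti halbdd
  have hbeT : Tendsto be atTop (nhds (⨆ k, be k)) := tendsto_atTop_ciSup hbemono hbebdd
  have hsub0 : ∀ i, Tendsto (fun n => z (φ n) i - w i) atTop (nhds 0) := by
    intro i
    have := (hwc i).sub_const (w i)
    simpa using this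
  have hal0 : (⨅ k, al k) = 0 := by
    have h1 : Tendsto (fun n => al (φ n)) atTop (nhds (⨅ k, al k)) := halT.comp hphiTop
    have h2 : Tendsto (fun n => al (φ n)) atTop (nhds 0) := by
      have := tendsto_msup (b := fun _ : ι => (0:ℝ)) hsub0
      rw [msup_zero] at this
      exact this
    exact tendsto_nhds_unique h1 h2
  have hbe0 : (⨆ k, be k) = 0 := by
    have h1 : Tendsto (fun n => be (φ n)) atTop (nhds (⨆ k, be k)) := hbeT.comp hphiTop
    have h2 : Tendsto (fun n => be (φ n)) atTop (nhds 0) := by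
      have := tendsto_minf (b := fun _ : ι => (0:ℝ)) hsub0
      rw [minf_zero] at this
      exact this
    exact tendsto_nhds_unique h1 h2
  rw [hal0] at halT
  rw [hbe0] at hbeT
  have hzw : ∀ i, Tendsto (fun k => z k i) atTop (nhds (w i)) := by
    intro i
    have hub : ∀ k, z k i - w i ≤ al k := fun k => le_msup (fun i => z k i - w i) i
    have hlb : ∀ k, be k ≤ z k i - w i := fun k => minf_le (fun i => z k i - w i) i
    have h0 : Tendsto (fun k => z k i - w i) atTop (nhds 0) :=
      tendsto_of_tendsto_of_tendsto_of_le_of_le hbeT halT hlb hub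
    have := h0.add_const (w i)
    simpa using this
  have hSw : S w = w := by
    funext i
    have h1 := congrFun hTw i
    have h2 := Tap w i
    linarith
  exact ⟨w, hSw, hzw⟩

end PKM

/-- Geometric mean of the entries of a vector. -/
noncomputable def geomMean {ι : Type*} [Fintype ι] (x : ι → ℝ) : ℝ :=
  (∏ i, x i) ^ ((1 : ℝ) / (Fintype.card ι : ℝ))

set_option maxHeartbeats 2000000 in
/-- let `f : ℝ₊^N → ℝ₊^N` be monotone, positively homogeneous, with a
positive eigenvector.  Then the projective Krasnoselskii–Mann iteration
`v^{k+1} = [(f(v^k)/G[f(v^k)]) ∘ v^k]^{1/2}`, started from any positive `v⁰` with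
`∏ᵢ v⁰ᵢ = 1`, converges to a positive eigenvector `v` of `f`, and `G[f(v^k)]`
converges to the associated eigenvalue. -/
theorem projective_krasnoselskii_mann_converges {ι : Type*} [Fintype ι] [Nonempty ι]
    (f : (ι → ℝ) → (ι → ℝ))
    (hpos : ∀ x : ι → ℝ, 0 ≤ x → 0 ≤ f x)
    (hmono : ∀ x y : ι → ℝ, 0 ≤ x → x ≤ y → f x ≤ f y)
    (hhom : ∀ t : ℝ, 0 < t → ∀ x : ι → ℝ, 0 ≤ x → f (t • x) = t • f x)
    (u : ι → ℝ) (hu : ∀ i, 0 < u i) (lam : ℝ) (hlam : 0 < lam) (heig : f u = lam • u)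
    (v : ℕ → ι → ℝ) (hv0pos : ∀ i, 0 < v 0 i) (hv0 : ∏ i, v 0 i = 1)
    (hrec : ∀ k i, v (k + 1) i = Real.sqrt ((f (v k) i / geomMean (f (v k))) * v k i)) :
    ∃ w : ι → ℝ, (∀ i, 0 < w i) ∧ ∃ μ : ℝ, 0 < μ ∧ f w = μ • w ∧
      Tendsto v atTop (nhds w) ∧
      Tendsto (fun k => geomMean (f (v k))) atTop (nhds μ) := by
  classical
  set N : ℕ := Fintype.card ι with hN
  have hN0 : 0 < N := Fintype.card_pos
  have hNR : (0:ℝ) < (N:ℝ) := by exact_mod_cast hN0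
  -- f maps positive vectors to positive vectors
  have hfpos : ∀ x : ι → ℝ, (∀ i, 0 < x i) → ∀ i, 0 < f x i := by
    intro x hx i
    set t : ℝ := PKM.minf (fun i => x i / u i) with ht
    have htpos : 0 < t := by
      obtain ⟨i0, hi0⟩ := PKM.exists_minf (fun i => x i / u i)
      rw [ht, hi0]
      exact div_pos (hx i0) (hu i0)
    have hunn : (0:ι → ℝ) ≤ u := fun j => (hu j).le
    have htu : t • u ≤ x := by
      intro j
      have h1 : t ≤ x j / u j := PKM.minf_le (fun i => x i / u i) j
      have h2 := (le_div_iff₀ (hu j)).mp h1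
      simpa [smul_eq_mul] using h2
    have h0 : (0:ι → ℝ) ≤ t • u := fun j => by
      have := mul_nonneg htpos.le (hu j).le
      simpa [smul_eq_mul] using this
    have hmf := hmono (t • u) x h0 htu
    have heq : f (t • u) = t • (lam • u) := by
      rw [hhom t htpos u hunn, heig]
    calc (0:ℝ) < t * (lam * u i) := mul_pos htpos (mul_pos hlam (hu i))
      _ = f (t • u) i := by rw [heq]; simp [smul_eq_mul]
      _ ≤ f x i := hmf i
  -- positivity of the iterates
  have hvpos : ∀ k i, 0 < v k i := by
    intro k
    induction k with
    | zero => exact hv0pos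
    | succ n ih =>
      intro i
      rw [hrec n i]
      apply Real.sqrt_pos.mpr
      have h1 : 0 < f (v n) i := hfpos (v n) ih i
      have h2 : 0 < geomMean (f (v n)) := by
        unfold geomMean
        exact Real.rpow_pos_of_pos (Finset.prod_pos (fun j _ => hfpos (v n) ih j)) _
      exact mul_pos (div_pos h1 h2) (ih i)
  -- geometric mean facts
  have hGMpos : ∀ xx : ι → ℝ, (∀ i, 0 < xx i) → 0 < geomMean xx := by
    intro xx hxx
    unfold geomMean
    exact Real.rpow_pos_of_pos (Finset.prod_pos (fun j _ => hxx j)) _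
  have hlogGM : ∀ xx : ι → ℝ, (∀ i, 0 < xx i) →
      Real.log (geomMean xx) = (∑ i, Real.log (xx i)) / (N:ℝ) := by
    intro xx hxx
    unfold geomMean
    rw [Real.log_rpow (Finset.prod_pos fun i _ => hxx i)]
    rw [Real.log_prod (fun i _ => (hxx i).ne')]
    rw [← hN]
    ring
  -- log coordinates
  set y : ℕ → ι → ℝ := fun k i => Real.log (v k i) with hy
  have hvy : ∀ k i, v k i = Real.exp (y k i) := fun k i => (Real.exp_log (hvpos k i)).symm
  set Sr : (ι → ℝ) → (ι → ℝ) := fun a i => Real.log (f (fun j => Real.exp (a j)) i) with hSr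
  have hSrap : ∀ (a : ι → ℝ) i, Sr a i = Real.log (f (fun j => Real.exp (a j)) i) :=
    fun _ _ => rfl
  have hexppos : ∀ a : ι → ℝ, ∀ j, (0:ℝ) < Real.exp (a j) := fun a j => Real.exp_pos _
  have hfexp : ∀ (a : ι → ℝ) i, 0 < f (fun j => Real.exp (a j)) i := fun a i =>
    hfpos _ (hexppos a) i
  have hfv : ∀ k, f (v k) = f (fun j => Real.exp (y k j)) := by
    intro k
    have h : v k = fun j => Real.exp (y k j) := funext (hvy k)
    rw [h]
  have hlogfv : ∀ k i, Real.log (f (v k) i) = Sr (y k) i := by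
    intro k i
    rw [hfv k, hSrap]
  -- recursion in log coordinates
  have hyrec : ∀ k i, y (k + 1) i = (y k i + Sr (y k) i - (∑ j, Sr (y k) j) / (N:ℝ)) / 2 := by
    intro k i
    have hfvk : 0 < f (v k) i := hfpos (v k) (hvpos k) i
    have hGM : 0 < geomMean (f (v k)) := hGMpos _ (hfpos (v k) (hvpos k))
    have hvk : 0 < v k i := hvpos k i
    have harg : (0:ℝ) ≤ f (v k) i / geomMean (f (v k)) * v k i :=
      (mul_pos (div_pos hfvk hGM) hvk).le
    show Real.log (v (k + 1) i) = _
    rw [hrec k i, Real.log_sqrt harg,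
      Real.log_mul (div_pos hfvk hGM).ne' hvk.ne',
      Real.log_div hfvk.ne' hGM.ne']
    rw [hlogfv k i, hlogGM _ (hfpos (v k) (hvpos k))]
    have hsum : ∑ j, Real.log (f (v k) j) = ∑ j, Sr (y k) j :=
      Finset.sum_congr rfl (fun j _ => hlogfv k j)
    rw [hsum]
    ring
  -- sum of log coordinates is zero
  have hysum : ∀ k, ∑ i, y k i = 0 := by
    intro k
    induction k with
    | zero =>
      show ∑ i, Real.log (v 0 i) = 0
      rw [← Real.log_prod (fun i _ => (hvpos 0 i).ne'), hv0, Real.log_one]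
    | succ n ih =>
      have h1 : ∑ i, y (n + 1) i
          = ∑ i, (y n i + Sr (y n) i - (∑ j, Sr (y n) j) / (N:ℝ)) / 2 :=
        Finset.sum_congr rfl (fun i _ => hyrec n i)
      rw [h1]
      rw [← Finset.sum_div, Finset.sum_sub_distrib, Finset.sum_add_distrib,
        Finset.sum_const, Finset.card_univ, ← hN, ih, nsmul_eq_mul]
      field_simp
      ring
  -- the shifted log-map with fixed point log u
  set Sm : (ι → ℝ) → (ι → ℝ) := fun a i => Sr a i - Real.log lam with hSm
  have hSmap : ∀ (a : ι → ℝ) i, Sm a i = Sr a i - Real.log lam := fun _ _ => rfl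
  have hSrmono : ∀ a b : ι → ℝ, a ≤ b → Sr a ≤ Sr b := by
    intro a b hab i
    rw [hSrap, hSrap]
    apply Real.log_le_log (hfexp a i)
    refine hmono _ _ (fun j => (hexppos a j).le) (fun j => ?_) i
    exact Real.exp_le_exp.mpr (hab j)
  have hSradd : ∀ (cc : ℝ) (a : ι → ℝ), Sr (fun i => a i + cc) = fun i => Sr a i + cc := by
    intro cc a
    funext i
    rw [hSrap, hSrap]
    have h1 : (fun j => Real.exp (a j + cc)) = Real.exp cc • (fun j => Real.exp (a j)) := by
      funext j
      simp [Real.exp_add, smul_eq_mul, mul_comm]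
    rw [h1, hhom (Real.exp cc) (Real.exp_pos cc) _ (fun j => (hexppos a j).le)]
    rw [Pi.smul_apply, smul_eq_mul, Real.log_mul (Real.exp_pos cc).ne' (hfexp a i).ne',
      Real.log_exp]
    ring
  have hSmmono : ∀ a b : ι → ℝ, a ≤ b → Sm a ≤ Sm b := by
    intro a b hab i
    rw [hSmap, hSmap]
    have := hSrmono a b hab i
    linarith
  have hSmadd : ∀ (cc : ℝ) (a : ι → ℝ), Sm (fun i => a i + cc) = fun i => Sm a i + cc := by
    intro cc a
    funext i
    rw [hSmap, hSmap]
    rw [show Sr (fun i => a i + cc) i = Sr a i + cc from congrFun (hSradd cc a) i]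
    ring
  have hfix : Sm (fun i => Real.log (u i)) = fun i => Real.log (u i) := by
    funext i
    rw [hSmap, hSrap]
    have h1 : (fun j => Real.exp (Real.log (u j))) = u := by
      funext j; exact Real.exp_log (hu j)
    rw [h1, heig, Pi.smul_apply, smul_eq_mul, Real.log_mul hlam.ne' (hu i).ne']
    ring
  -- the KM iteration in log coordinates
  set z : ℕ → ι → ℝ := fun k => (fun a : ι → ℝ => fun i => (a i + Sm a i) / 2)^[k] (y 0)
    with hzdef
  have hzrec : ∀ k, z (k + 1) = fun i => (z k i + Sm (z k) i) / 2 := fun k =>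
    Function.iterate_succ_apply' _ k (y 0)
  obtain ⟨wb, hwb, hzconv⟩ := PKM.core Sm hSmmono hSmadd _ hfix z hzrec
  -- y and z differ by a constant
  have hyz : ∀ k, ∃ t : ℝ, ∀ i, y k i = z k i + t := by
    intro k
    induction k with
    | zero => exact ⟨0, fun i => by simp [hzdef]⟩
    | succ n ih =>
      obtain ⟨t, ht⟩ := ih
      have hyn : y n = fun i => z n i + t := funext ht
      refine ⟨(t - (∑ j, Sr (z n) j) / (N:ℝ) + Real.log lam) / 2, fun i => ?_⟩
      have h1 := hyrec n i
      rw [hyn] at h1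
      have h2 : Sr (fun i => z n i + t) = fun i => Sr (z n) i + t := hSradd t (z n)
      rw [h2] at h1
      have h3 : ∑ j, (Sr (z n) j + t) = (∑ j, Sr (z n) j) + (N:ℝ) * t := by
        rw [Finset.sum_add_distrib, Finset.sum_const, Finset.card_univ, ← hN, nsmul_eq_mul]
      rw [h3] at h1
      have h4 : z (n + 1) i = (z n i + Sm (z n) i) / 2 := congrFun (hzrec n) i
      rw [h1, h4, hSmap]
      field_simp
      ring
  have hyz' : ∀ k i, y k i = z k i - (∑ j, z k j) / (N:ℝ) := by
    intro k i
    obtain ⟨t, ht⟩ := hyz k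
    have hsum : (0:ℝ) = (∑ j, z k j) + (N:ℝ) * t := by
      have h1 := hysum k
      have h2 : ∑ j, y k j = ∑ j, (z k j + t) := Finset.sum_congr rfl (fun j _ => ht j)
      rw [h2, Finset.sum_add_distrib, Finset.sum_const, Finset.card_univ, ← hN,
        nsmul_eq_mul] at h1
      linarith
    have htval : t = -(∑ j, z k j) / (N:ℝ) := by
      field_simp at hsum ⊢
      linarith
    rw [ht i, htval]
    ring
  -- limits in log coordinates
  set s0 : ℝ := (∑ j, wb j) / (N:ℝ) with hs0
  set wh : ι → ℝ := fun i => wb i - s0 with hwh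
  have hyconv : ∀ i, Tendsto (fun k => y k i) atTop (nhds (wh i)) := by
    intro i
    have h1 : Tendsto (fun k => ∑ j, z k j) atTop (nhds (∑ j, wb j)) :=
      tendsto_finset_sum _ (fun j _ => hzconv j)
    have h2 := (hzconv i).sub (h1.div_const (N:ℝ))
    have h3 : (fun k => y k i) = fun k => z k i - (∑ j, z k j) / (N:ℝ) :=
      funext fun k => hyz' k i
    rw [h3]
    exact h2
  set w : ι → ℝ := fun i => Real.exp (wh i) with hwdef
  have hwpos : ∀ i, 0 < w i := fun i => Real.exp_pos _
  have hvconv : Tendsto v atTop (nhds w) := by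
    rw [tendsto_pi_nhds]
    intro i
    have h1 := (Real.continuous_exp.tendsto (wh i)).comp (hyconv i)
    refine h1.congr ?_
    intro k
    simp only [Function.comp_apply]
    exact (hvy k i).symm
  -- eigenvector property of the limit
  have hfixw : ∀ i, Sr wb i = wb i + Real.log lam := by
    intro i
    have h1 := congrFun hwb i
    rw [hSmap] at h1
    linarith
  have hX : f (fun j => Real.exp (wb j)) = fun i => lam * Real.exp (wb i) := by
    funext i
    have h1 : Real.log (f (fun j => Real.exp (wb j)) i) = wb i + Real.log lam := by
      rw [← hSrap]; exact hfixw i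
    have h2 := Real.exp_log (hfexp wb i)
    rw [← h2, h1, Real.exp_add, Real.exp_log hlam]
    ring
  have hfw : f w = lam • w := by
    have hwX : w = Real.exp (-s0) • (fun j => Real.exp (wb j)) := by
      funext i
      show Real.exp (wb i - s0) = Real.exp (-s0) * Real.exp (wb i)
      rw [← Real.exp_add]
      ring_nf
    rw [hwX, hhom (Real.exp (-s0)) (Real.exp_pos _) _ (fun j => (Real.exp_pos _).le), hX]
    funext i
    simp only [Pi.smul_apply, smul_eq_mul]
    ring
  -- convergence of the geometric means
  have hgm : ∀ k, geomMean (f (v k)) = Real.exp ((∑ j, Sr (y k) j) / (N:ℝ)) := by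
    intro k
    have hpos' : ∀ i, 0 < f (v k) i := hfpos (v k) (hvpos k)
    have h1 : 0 < geomMean (f (v k)) := hGMpos _ hpos'
    rw [← Real.exp_log h1, hlogGM _ hpos']
    congr 1
    rw [Finset.sum_congr rfl (fun j _ => hlogfv k j)]
  have hSrconv : ∀ j, Tendsto (fun k => Sr (y k) j) atTop (nhds (Sr wh j)) :=
    fun j => PKM.seqcont Sr hSrmono hSradd hyconv j
  have hwhsum : ∑ j, wh j = 0 := by
    rw [hwh]
    rw [Finset.sum_sub_distrib, Finset.sum_const, Finset.card_univ, ← hN, nsmul_eq_mul, hs0]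
    field_simp
    ring
  have hSrwh : (∑ j, Sr wh j) / (N:ℝ) = Real.log lam := by
    have h1 : ∀ j, Sr wh j = wh j + Real.log lam := by
      intro j
      rw [hSrap]
      have hexpwh : (fun i => Real.exp (wh i)) = w := rfl
      rw [hexpwh, hfw, Pi.smul_apply, smul_eq_mul,
        Real.log_mul hlam.ne' (hwpos j).ne',
        show w j = Real.exp (wh j) from rfl, Real.log_exp]
      ring
    rw [Finset.sum_congr rfl (fun j _ => h1 j), Finset.sum_add_distrib, hwhsum,
      Finset.sum_const, Finset.card_univ, ← hN, nsmul_eq_mul]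
    field_simp
    ring
  have hgmconv : Tendsto (fun k => geomMean (f (v k))) atTop (nhds lam) := by
    have h1 : Tendsto (fun k => (∑ j, Sr (y k) j) / (N:ℝ)) atTop
        (nhds ((∑ j, Sr wh j) / (N:ℝ))) :=
      (tendsto_finset_sum _ (fun j _ => hSrconv j)).div_const (N:ℝ)
    rw [hSrwh] at h1
    have h2 := (Real.continuous_exp.tendsto _).comp h1
    rw [Real.exp_log hlam] at h2
    have h3 : (fun k => geomMean (f (v k)))
        = fun k => Real.exp ((∑ j, Sr (y k) j) / (N:ℝ)) := funext hgm
    rw [h3]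
    refine h2.congr ?_
    intro k
    simp only [Function.comp_apply]
  exact ⟨w, hwpos, lam, hlam, hfw, hvconv, hgmconv⟩
end

section
/- Under the assumptions of the projective Krasnoselskii–Mann convergence theorem (f monotone, positively homogeneous on ℝ₊^N with positive eigenvector u), the iterates satisfy the asymptotic regularity bound d_H(f(v^k), v^k) ≤ (4/√(πk)) · d_H(v⁰, u), where d_H is Hilbert's projective metric. -/
open Real Stirling Finset

section AsymptoticRegularityAux

lemma stirling_ge (n : ℕ) : Real.sqrt Real.pi ≤ stirlingSeq (n + 1) := by
  have h := stirlingSeq'_antitone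
  have := tendsto_stirlingSeq_sqrt_pi
  have h2 : Filter.Tendsto (stirlingSeq ∘ Nat.succ) Filter.atTop (nhds (Real.sqrt Real.pi)) :=
    this.comp (Filter.tendsto_add_atTop_nat 1)
  exact h.le_of_tendsto h2 n

lemma centralBinom_le (n : ℕ) (hn : 1 ≤ n) :
    (Nat.centralBinom n : ℝ) ≤ 4 ^ n / Real.sqrt (Real.pi * n) := by
  obtain ⟨m, rfl⟩ := Nat.exists_eq_add_of_le hn
  set n := 1 + m with hn'
  have hnpos : (0 : ℝ) < n := by positivity
  have hs1 : Real.sqrt Real.pi ≤ stirlingSeq n := by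
    have := stirling_ge m; rwa [Nat.add_comm] at this
  have hs2 : stirlingSeq (2 * n) ≤ stirlingSeq n := by
    have : stirlingSeq ((2 * m + 1) + 1) ≤ stirlingSeq (m + 1) :=
      stirlingSeq'_antitone (by omega)
    convert this using 2 <;> omega
  have hspos : 0 < stirlingSeq n := lt_of_lt_of_le (Real.sqrt_pos.2 Real.pi_pos) hs1
  -- factorial identities
  have ha : (0:ℝ) < Real.sqrt (2 * n) * ((n : ℝ) / Real.exp 1) ^ n := by positivity
  have hfact : ((Nat.factorial n : ℕ) : ℝ) = stirlingSeq n * (Real.sqrt (2 * n) * ((n : ℝ) / Real.exp 1) ^ n) := by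
    rw [stirlingSeq]; field_simp
  have hb : (0:ℝ) < Real.sqrt (2 * (2 * n : ℕ)) * (((2*n : ℕ) : ℝ) / Real.exp 1) ^ (2*n) := by
    positivity
  have hfact2 : ((Nat.factorial (2*n) : ℕ) : ℝ) = stirlingSeq (2*n) *
      (Real.sqrt (2 * (2*n : ℕ)) * (((2*n : ℕ) : ℝ) / Real.exp 1) ^ (2*n)) := by
    rw [stirlingSeq]; field_simp
  have hcbn : Nat.centralBinom n * (Nat.factorial n * Nat.factorial n) = Nat.factorial (2*n) := by
    have := Nat.choose_mul_factorial_mul_factorial (le_of_lt (by omega : n < 2*n))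
    rw [show 2*n - n = n by omega] at this
    rw [Nat.centralBinom]
    rw [← this]; ring
  have hcb : (Nat.centralBinom n : ℝ) * (((Nat.factorial n : ℕ) : ℝ) * ((Nat.factorial n : ℕ) : ℝ)) = ((Nat.factorial (2*n) : ℕ) : ℝ) := by
    exact_mod_cast congrArg (fun x : ℕ => (x : ℝ)) hcbn
  set P : ℝ := ((n : ℝ) / Real.exp 1) ^ (2*n) with hP
  have hPpos : 0 < P := by positivity
  have hA2 : (Real.sqrt (2 * n) * ((n : ℝ) / Real.exp 1) ^ n) ^ 2 = 2 * n * P := by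
    rw [mul_pow, Real.sq_sqrt (by positivity), hP, ← pow_mul, Nat.mul_comm n 2]
  have hB : Real.sqrt (2 * (2*n : ℕ)) * (((2*n : ℕ) : ℝ) / Real.exp 1) ^ (2*n)
      = 2 * Real.sqrt n * 4 ^ n * P := by
    push_cast
    rw [show (2 : ℝ) * (2 * n) = 4 * n by ring, show (2:ℝ) * n / Real.exp 1 = 2 * ((n:ℝ)/Real.exp 1) by ring,
      mul_pow, Real.sqrt_mul (by norm_num) (n : ℝ),
      show Real.sqrt 4 = 2 by rw [show (4:ℝ) = 2^2 by norm_num, Real.sqrt_sq (by norm_num)],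
      show (2:ℝ)^(2*n) = 4^n by rw [pow_mul]; norm_num]
    ring
  have key : stirlingSeq (2*n) * Real.sqrt Real.pi ≤ stirlingSeq n ^ 2 := by
    nlinarith [mul_le_mul hs2 hs1 (Real.sqrt_nonneg Real.pi) (le_of_lt hspos),
      Real.sqrt_nonneg Real.pi]
  have h1 : (Nat.centralBinom n : ℝ) * (stirlingSeq n ^ 2 *
      (Real.sqrt (2 * n) * ((n : ℝ) / Real.exp 1) ^ n) ^ 2)
      = stirlingSeq (2*n) * (Real.sqrt (2 * (2*n : ℕ)) * (((2*n : ℕ) : ℝ) / Real.exp 1) ^ (2*n)) := by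
    rw [hfact, hfact2] at hcb
    linear_combination hcb
  have hsqrtn : 0 < Real.sqrt (Real.pi * n) := Real.sqrt_pos.2 (by positivity)
  rw [le_div_iff₀ hsqrtn]
  have hX : (0:ℝ) < stirlingSeq n ^ 2 * (Real.sqrt (2 * n) * ((n : ℝ) / Real.exp 1) ^ n) ^ 2 := by
    positivity
  rw [← mul_le_mul_iff_of_pos_right hX]
  have hsqrt : Real.sqrt (Real.pi * n) = Real.sqrt Real.pi * Real.sqrt n :=
    Real.sqrt_mul Real.pi_pos.le _
  calc (Nat.centralBinom n : ℝ) * Real.sqrt (Real.pi * n) *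
        (stirlingSeq n ^ 2 * (Real.sqrt (2 * n) * ((n : ℝ) / Real.exp 1) ^ n) ^ 2)
      = (Nat.centralBinom n : ℝ) * (stirlingSeq n ^ 2 *
          (Real.sqrt (2 * n) * ((n : ℝ) / Real.exp 1) ^ n) ^ 2) * Real.sqrt (Real.pi * n) := by
        ring
    _ = stirlingSeq (2*n) * (Real.sqrt (2 * (2*n : ℕ)) * (((2*n : ℕ) : ℝ) / Real.exp 1) ^ (2*n))
          * Real.sqrt (Real.pi * n) := by rw [h1]
    _ = stirlingSeq (2*n) * Real.sqrt Real.pi * (2 * 4 ^ n * P * (Real.sqrt n * Real.sqrt n)) := by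
        rw [hB, hsqrt]; ring
    _ = stirlingSeq (2*n) * Real.sqrt Real.pi * (2 * 4 ^ n * P * n) := by
        rw [Real.mul_self_sqrt (by positivity)]
    _ ≤ stirlingSeq n ^ 2 * (2 * 4 ^ n * P * n) := by
        apply mul_le_mul_of_nonneg_right key (by positivity)
    _ = 4 ^ n * (stirlingSeq n ^ 2 * (Real.sqrt (2 * n) * ((n : ℝ) / Real.exp 1) ^ n) ^ 2) := by
        rw [hA2]; ring

/-- First-passage weights: `phiW c j` is the probability that a simple random walk
started at `c` first hits `0` after exactly `j` up-steps (and `j + c` down-steps). -/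
noncomputable def phiW : ℕ → ℕ → ℝ
  | c, 0 => (2:ℝ)⁻¹ ^ c
  | 0, _+1 => 0
  | c+1, j+1 => (((2*j+c+2).choose (j+1) : ℝ) - ((2*j+c+2).choose j : ℝ)) * (2:ℝ)⁻¹ ^ (2*j+c+3)

lemma phiW_zero (c : ℕ) : phiW c 0 = (2:ℝ)⁻¹ ^ c := by rw [phiW]
lemma phiW_zero_succ (j : ℕ) : phiW 0 (j+1) = 0 := by rw [phiW]
lemma phiW_succ_succ (c j : ℕ) :
    phiW (c+1) (j+1) = (((2*j+c+2).choose (j+1) : ℝ) - ((2*j+c+2).choose j : ℝ)) * (2:ℝ)⁻¹ ^ (2*j+c+3) := by rw [phiW]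

/-- the one-step decomposition of first passage probabilities -/
lemma phiW_step (c j : ℕ) :
    phiW (c+1) j = (1/2) * phiW (c+2) (j-1) * (if j = 0 then 0 else 1) + (1/2) * phiW c j := by
  match j with
  | 0 => simp [phiW_zero]; ring
  | 1 =>
    match c with
    | 0 => simp [phiW_succ_succ, phiW_zero, phiW_zero_succ]; norm_num
    | c'+1 =>
      simp only [phiW_succ_succ, phiW_zero, if_neg one_ne_zero]
      rw [phiW_zero]
      push_cast [Nat.choose_one_right, Nat.choose_zero_right]
      ring
  | (j'+2) =>
    match c with
    | 0 =>
      simp only [phiW_succ_succ, phiW_zero_succ, if_neg (Nat.succ_ne_zero _)]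
      norm_num
      have hphi2 : phiW 2 (j'+1) =
          (((2*j'+3).choose (j'+1) : ℝ) - ((2*j'+3).choose j' : ℝ)) * (2:ℝ)⁻¹ ^ (2*j'+4) := by
        rw [show (2:ℕ) = 1+1 from rfl, phiW_succ_succ, show 2*j'+1+2 = 2*j'+3 from by ring,
          show 2*j'+1+3 = 2*j'+4 from by ring]
      rw [hphi2, show 2*(j'+1)+2 = 2*j'+4 from by ring, show 2*(j'+1)+3 = 2*j'+5 from by ring]
      have e1 := Nat.choose_succ_succ (2*j'+3) (j'+1)
      have e2 := Nat.choose_succ_succ (2*j'+3) j'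
      simp only [Nat.succ_eq_add_one, show j'+1+1 = j'+2 from rfl] at e1 e2
      have e3 : (2*j'+3).choose (j'+2) = (2*j'+3).choose (j'+1) := by
        rw [← Nat.choose_symm (by omega : j'+1 ≤ 2*j'+3)]
        congr 1
        omega
      have hN : (2*j'+4).choose (j'+2) + (2*j'+3).choose j'
          = (2*j'+4).choose (j'+1) + (2*j'+3).choose (j'+1) := by
        rw [show 2*j'+4 = (2*j'+3)+1 from by ring]
        omega
      have hNc : ((2*j'+4).choose (j'+2) : ℝ) + ((2*j'+3).choose j' : ℝ)
          = ((2*j'+4).choose (j'+1) : ℝ) + ((2*j'+3).choose (j'+1) : ℝ) := by exact_mod_cast hN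
      rw [show j'+1+1 = j'+2 from rfl]
      linear_combination ((2:ℝ)⁻¹ ^ (2*j'+5)) * hNc
    | c'+1 =>
      simp only [phiW_succ_succ, if_neg (Nat.succ_ne_zero _)]
      norm_num
      have hphi2 : phiW (c'+1+2) (j'+1) =
          (((2*j'+c'+4).choose (j'+1) : ℝ) - ((2*j'+c'+4).choose j' : ℝ)) * (2:ℝ)⁻¹ ^ (2*j'+c'+5) := by
        rw [show c'+1+2 = (c'+2)+1 from rfl, phiW_succ_succ]
        rw [show 2*j'+(c'+2)+2 = 2*j'+c'+4 from by ring, show 2*j'+(c'+2)+3 = 2*j'+c'+5 from by ring]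
      rw [hphi2,
        show 2*(j'+1)+(c'+1)+2 = 2*j'+c'+5 from by ring,
        show 2*(j'+1)+(c'+1)+3 = 2*j'+c'+6 from by ring,
        show 2*(j'+1)+c'+2 = 2*j'+c'+4 from by ring,
        show 2*(j'+1)+c'+3 = 2*j'+c'+5 from by ring]
      have e1 := Nat.choose_succ_succ (2*j'+c'+4) (j'+1)
      have e2 := Nat.choose_succ_succ (2*j'+c'+4) j'
      simp only [Nat.succ_eq_add_one, show j'+1+1 = j'+2 from rfl] at e1 e2
      have hN : (2*j'+c'+5).choose (j'+2) + (2*j'+c'+4).choose j'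
          = (2*j'+c'+5).choose (j'+1) + (2*j'+c'+4).choose (j'+2) := by
        rw [show 2*j'+c'+5 = (2*j'+c'+4)+1 from by ring]
        omega
      have hNc : ((2*j'+c'+5).choose (j'+2) : ℝ) + ((2*j'+c'+4).choose j' : ℝ)
          = ((2*j'+c'+5).choose (j'+1) : ℝ) + ((2*j'+c'+4).choose (j'+2) : ℝ) := by
        exact_mod_cast hN
      rw [show j'+1+1 = j'+2 from rfl]
      linear_combination ((2:ℝ)⁻¹ ^ (2*j'+c'+6)) * hNc

noncomputable def UB (m n : ℕ) : ℝ := 1 - ∑ j ∈ range m, phiW (n - m + 2) j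
noncomputable def VB (m n : ℕ) : ℝ := 1 - ∑ j ∈ range (m+1), phiW (n - m) j

lemma sum_phiW_step (c m : ℕ) : ∑ j ∈ range (m+1), phiW (c+1) j
    = (1/2) * ∑ j ∈ range m, phiW (c+2) j + (1/2) * ∑ j ∈ range (m+1), phiW c j := by
  rw [Finset.sum_congr rfl (fun j _ => phiW_step c j), Finset.sum_add_distrib]
  congr 1
  · rw [Finset.sum_range_succ']
    simp [Finset.mul_sum]
  · rw [Finset.mul_sum]

lemma UB_zero (n : ℕ) : UB 0 n = 1 := by simp [UB]

lemma VB_diag (m : ℕ) : VB m m = 0 := by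
  unfold VB
  rw [Nat.sub_self, Finset.sum_range_succ']
  simp [phiW_zero, phiW_zero_succ]

lemma VB_rec (m n : ℕ) (h : m ≤ n) : VB m (n+1) = (1/2) * UB m n + (1/2) * VB m n := by
  unfold UB VB
  rw [show n+1-m = (n-m)+1 from by omega, sum_phiW_step (n-m) m]
  ring

lemma UB_rec (m n : ℕ) (h : m < n) : UB (m+1) n = (1/2) * UB m n + (1/2) * VB m n := by
  unfold UB VB
  rw [show n-(m+1)+2 = (n-m)+1 from by omega, sum_phiW_step (n-m) m]
  ring

lemma UB_diag (n : ℕ) : UB n n = ((2*n+1).choose n : ℝ) * (2:ℝ)⁻¹ ^ (2*n) := by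
  unfold UB
  rw [Nat.sub_self]
  simp only [show (0:ℕ)+2 = 2 from rfl]
  induction n with
  | zero => simp
  | succ n ih =>
    rw [Finset.sum_range_succ]
    have step : phiW 2 n = ((2*n+1).choose n : ℝ) * (2:ℝ)⁻¹ ^ (2*n)
        - ((2*(n+1)+1).choose (n+1) : ℝ) * (2:ℝ)⁻¹ ^ (2*(n+1)) := by
      match n with
      | 0 => rw [phiW_zero]; norm_num
      | n'+1 =>
        rw [show (2:ℕ) = 1+1 from rfl, phiW_succ_succ,
          show 2*n'+1+2 = 2*n'+3 from by ring, show 2*n'+1+3 = 2*n'+4 from by ring,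
          show 2*(n'+1)+1 = 2*n'+3 from by ring,
          show 2*(n'+1+1)+1 = 2*n'+5 from by ring,
          show n'+1+1 = n'+2 from rfl,
          show 2*(n'+1) = 2*n'+2 from by ring,
          show 2*(n'+2) = 2*n'+4 from by ring]
        have e1 := Nat.choose_succ_succ (2*n'+4) (n'+1)
        have e2 := Nat.choose_succ_succ (2*n'+3) n'
        have e3 := Nat.choose_succ_succ (2*n'+3) (n'+1)
        have e4 : (2*n'+3).choose (n'+2) = (2*n'+3).choose (n'+1) := by
          rw [← Nat.choose_symm (by omega : n'+1 ≤ 2*n'+3)]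
          congr 1
          omega
        simp only [Nat.succ_eq_add_one, show n'+1+1 = n'+2 from rfl,
          show 2*n'+3+1 = 2*n'+4 from by ring] at e1 e2 e3
        have hN : 4 * ((2*n'+3).choose (n'+1)) + (2*n'+3).choose n'
            = (2*n'+5).choose (n'+2) + (2*n'+3).choose (n'+1) := by
          rw [show 2*n'+5 = 2*n'+4+1 from by ring]
          omega
        have hNc : (4:ℝ) * ((2*n'+3).choose (n'+1) : ℝ) + ((2*n'+3).choose n' : ℝ)
            = ((2*n'+5).choose (n'+2) : ℝ) + ((2*n'+3).choose (n'+1) : ℝ) := by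
          exact_mod_cast hN
        linear_combination (-(2:ℝ)⁻¹ ^ (2*n'+4)) * hNc
    rw [step]
    linear_combination ih

lemma centralBinom_le' (n : ℕ) (hn : 1 ≤ n) :
    (Nat.centralBinom n : ℝ) ≤ 4 ^ n / Real.sqrt (Real.pi * n) := centralBinom_le n hn

lemma UB_diag_le (n : ℕ) (hn : 1 ≤ n) : UB n n ≤ 2 / Real.sqrt (Real.pi * n) := by
  have hn' : (1:ℝ) ≤ (n:ℝ) := by exact_mod_cast hn
  have hπn : (0:ℝ) < Real.sqrt (Real.pi * n) := Real.sqrt_pos.2 (by nlinarith [Real.pi_pos])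
  rw [UB_diag, le_div_iff₀ hπn]
  have h2 : 2 * (2*n+1).choose n = Nat.centralBinom (n+1) := by
    rw [Nat.centralBinom]
    have e1 := Nat.choose_succ_succ (2*n+1) n
    have e4 : (2*n+1).choose (n+1) = (2*n+1).choose n := by
      rw [← Nat.choose_symm (by omega : n ≤ 2*n+1)]
      congr 1
      omega
    simp only [Nat.succ_eq_add_one] at e1
    rw [show 2*(n+1) = 2*n+1+1 from by ring]
    omega
  have hcb := centralBinom_le' (n+1) (by omega)
  have hcb2 : (Nat.centralBinom (n+1) : ℝ) * Real.sqrt (Real.pi * ((n:ℝ)+1)) ≤ 4^(n+1) := by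
    push_cast at hcb
    rwa [le_div_iff₀ (Real.sqrt_pos.2 (by positivity))] at hcb
  have h3 : Real.sqrt (Real.pi*(n:ℝ)) ≤ Real.sqrt (Real.pi*((n:ℝ)+1)) :=
    Real.sqrt_le_sqrt (by nlinarith [Real.pi_pos])
  have h4 : (2:ℝ)⁻¹^(2*n) * 4^n = 1 := by
    rw [pow_mul, ← mul_pow]
    norm_num
  have hC : ((2*n+1).choose n : ℝ) = (Nat.centralBinom (n+1):ℝ)/2 := by
    have := congrArg (fun x : ℕ => (x:ℝ)) h2
    push_cast at this
    linarith
  rw [hC]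
  calc (Nat.centralBinom (n+1):ℝ)/2 * 2⁻¹^(2*n) * Real.sqrt (Real.pi*n)
      ≤ (Nat.centralBinom (n+1):ℝ)/2 * 2⁻¹^(2*n) * Real.sqrt (Real.pi*((n:ℝ)+1)) := by
        apply mul_le_mul_of_nonneg_left h3 (by positivity)
    _ = (Nat.centralBinom (n+1):ℝ) * Real.sqrt (Real.pi*((n:ℝ)+1)) * (2⁻¹^(2*n)/2) := by
        ring
    _ ≤ 4^(n+1) * (2⁻¹^(2*n)/2) := by apply mul_le_mul_of_nonneg_right hcb2 (by positivity)
    _ = 2 * (2⁻¹^(2*n) * 4^n) := by ring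
    _ = 2 := by rw [h4]; ring

end AsymptoticRegularityAux


/-- Hopf's oscillation seminorm `‖z‖_H = max_i z_i − min_i z_i`. -/
noncomputable def hopfOsc {ι : Type*} [Fintype ι] (z : ι → ℝ) : ℝ :=
  (⨆ i, z i) - ⨅ i, z i

/-- Hilbert's projective metric `d_H(x, y) = ‖log x − log y‖_H`. -/
noncomputable def dHilbert {ι : Type*} [Fintype ι] (x y : ι → ℝ) : ℝ :=
  hopfOsc fun i => Real.log (x i) - Real.log (y i)

lemma le_hopfOsc {ι : Type*} [Fintype ι] [Nonempty ι] (z : ι → ℝ) (i j : ι) :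
    z i - z j ≤ hopfOsc z := by
  have h1 : z i ≤ ⨆ k, z k := le_ciSup (Set.Finite.bddAbove (Set.finite_range z)) i
  have h2 : ⨅ k, z k ≤ z j := ciInf_le (Set.Finite.bddBelow (Set.finite_range z)) j
  unfold hopfOsc
  linarith

lemma hopfOsc_le {ι : Type*} [Fintype ι] [Nonempty ι] (z : ι → ℝ) (C : ℝ)
    (h : ∀ i j, z i - z j ≤ C) : hopfOsc z ≤ C := by
  obtain ⟨i0, hi0⟩ := Finite.exists_max z
  obtain ⟨j0, hj0⟩ := Finite.exists_min z
  have h1 : ⨆ k, z k ≤ z i0 := ciSup_le hi0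
  have h2 : z j0 ≤ ⨅ k, z k := le_ciInf hj0
  have := h i0 j0
  unfold hopfOsc
  linarith

/-- quantitative asymptotic regularity of the projective
Krasnoselskii–Mann iteration: `d_H(f(v^k), v^k) ≤ (4/√(πk)) d_H(v⁰, u)`. -/
theorem projective_krasnoselskii_mann_asymptotic_regularity
    {ι : Type*} [Fintype ι] [Nonempty ι]
    (f : (ι → ℝ) → (ι → ℝ))
    (hpos : ∀ x : ι → ℝ, 0 ≤ x → 0 ≤ f x)
    (hmono : ∀ x y : ι → ℝ, 0 ≤ x → x ≤ y → f x ≤ f y)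
    (hhom : ∀ t : ℝ, 0 < t → ∀ x : ι → ℝ, 0 ≤ x → f (t • x) = t • f x)
    (u : ι → ℝ) (hu : ∀ i, 0 < u i) (lam : ℝ) (hlam : 0 < lam) (heig : f u = lam • u)
    (v : ℕ → ι → ℝ) (hv0pos : ∀ i, 0 < v 0 i) (hv0 : ∏ i, v 0 i = 1)
    (hrec : ∀ k i, v (k + 1) i = Real.sqrt ((f (v k) i / geomMean (f (v k))) * v k i)) :
    ∀ k : ℕ, 0 < k →
      dHilbert (f (v k)) (v k) ≤ 4 / Real.sqrt (Real.pi * k) * dHilbert (v 0) u := by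
  -- positivity of f on positive vectors
  have fpos : ∀ x : ι → ℝ, (∀ i, 0 < x i) → ∀ i, 0 < f x i := by
    intro x hx
    obtain ⟨i0, hi0⟩ := Finite.exists_min (fun i => x i / u i)
    set t := x i0 / u i0 with ht
    have htpos : 0 < t := div_pos (hx i0) (hu i0)
    have hle : t • u ≤ x := by
      intro i
      have h1 : t * u i ≤ (x i / u i) * u i :=
        mul_le_mul_of_nonneg_right (hi0 i) (hu i).le
      have h2 : (x i / u i) * u i = x i := div_mul_cancel₀ _ (hu i).ne'
      calc (t • u) i = t * u i := rfl
        _ ≤ x i := by rw [← h2]; exact h1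
    have h0 : (0 : ι → ℝ) ≤ t • u := by
      intro i
      have : 0 ≤ t * u i := mul_nonneg htpos.le (hu i).le
      simpa using this
    have hfm := hmono (t • u) x h0 hle
    have heq : f (t • u) = t • f u := hhom t htpos u (fun i => (hu i).le)
    intro i
    have h1 : t * (lam * u i) ≤ f x i := by
      have h2 := hfm i
      rw [heq, heig] at h2
      simpa using h2
    have : (0:ℝ) < t * (lam * u i) := mul_pos htpos (mul_pos hlam (hu i))
    linarith
  -- positivity of iterates
  have vpos : ∀ k, ∀ i, 0 < v k i := by
    intro k
    induction k with
    | zero => exact hv0pos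
    | succ k ih =>
      intro i
      rw [hrec k i]
      apply Real.sqrt_pos.2
      have hG : 0 < geomMean (f (v k)) := by
        unfold geomMean
        exact Real.rpow_pos_of_pos (Finset.prod_pos (fun i _ => fpos _ ih i)) _
      exact mul_pos (div_pos (fpos _ ih i) hG) (ih i)
  -- log recursion
  have hrecL : ∀ k i, Real.log (v (k+1) i)
      = (Real.log (f (v k) i) + Real.log (v k i))/2 - Real.log (geomMean (f (v k))) / 2 := by
    intro k i
    have hG : 0 < geomMean (f (v k)) := by
      unfold geomMean
      exact Real.rpow_pos_of_pos (Finset.prod_pos (fun i _ => fpos _ (vpos k) i)) _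
    have h1 : (0:ℝ) ≤ (f (v k) i / geomMean (f (v k))) * v k i := by
      have := fpos _ (vpos k) i
      have := vpos k i
      positivity
    rw [hrec k i, Real.log_sqrt h1,
      Real.log_mul (div_pos (fpos _ (vpos k) i) hG).ne' (vpos k i).ne',
      Real.log_div (fpos _ (vpos k) i).ne' hG.ne']
    ring
  -- one-sided comparison
  have onesided : ∀ x y : ι → ℝ, (∀ i, 0 < x i) → (∀ i, 0 < y i) → ∀ c : ℝ,
      (∀ i, Real.log (x i) - Real.log (y i) ≤ c) →
      ∀ i, Real.log (f x i) - Real.log (f y i) ≤ c := by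
    intro x y hx hy c hc
    have hxley : x ≤ Real.exp c • y := by
      intro i
      have h := hc i
      calc x i = Real.exp (Real.log (x i)) := (Real.exp_log (hx i)).symm
        _ ≤ Real.exp (c + Real.log (y i)) := Real.exp_le_exp.2 (by linarith)
        _ = Real.exp c * y i := by rw [Real.exp_add, Real.exp_log (hy i)]
        _ = (Real.exp c • y) i := rfl
    have h2 := hmono x _ (fun i => (hx i).le) hxley
    have h3 : f (Real.exp c • y) = Real.exp c • f y :=
      hhom _ (Real.exp_pos _) y (fun i => (hy i).le)
    intro i
    have h4 : f x i ≤ Real.exp c * f y i := by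
      have h5 := h2 i
      rw [h3] at h5
      simpa using h5
    have h5 : Real.log (f x i) ≤ Real.log (Real.exp c * f y i) :=
      Real.log_le_log (fpos x hx i) h4
    rw [Real.log_mul (Real.exp_pos c).ne' (fpos y hy i).ne', Real.log_exp] at h5
    linarith
  -- nonexpansiveness in the Hopf oscillation seminorm
  have nonexp : ∀ x y : ι → ℝ, (∀ i, 0 < x i) → (∀ i, 0 < y i) →
      hopfOsc (fun i => Real.log (f x i) - Real.log (f y i))
        ≤ hopfOsc (fun i => Real.log (x i) - Real.log (y i)) := by
    intro x y hx hy
    obtain ⟨i0, hi0⟩ := Finite.exists_max (fun i => Real.log (x i) - Real.log (y i))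
    obtain ⟨j0, hj0⟩ := Finite.exists_min (fun i => Real.log (x i) - Real.log (y i))
    have hup := onesided x y hx hy (Real.log (x i0) - Real.log (y i0)) hi0
    have hlo := onesided y x hy hx (-(Real.log (x j0) - Real.log (y j0)))
      (fun i => by have := hj0 i; linarith)
    apply hopfOsc_le
    intro i j
    have d0 : Real.log (x i0) - Real.log (y i0) - (Real.log (x j0) - Real.log (y j0))
        ≤ hopfOsc (fun i => Real.log (x i) - Real.log (y i)) :=
      le_hopfOsc (fun i => Real.log (x i) - Real.log (y i)) i0 j0
    have h1 := hup i
    have h2 := hlo j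
    show Real.log (f x i) - Real.log (f y i) - (Real.log (f x j) - Real.log (f y j)) ≤ _
    linarith
  -- eigen-logs
  have heiglog : ∀ i, Real.log (f u i) = Real.log lam + Real.log (u i) := by
    intro i
    rw [heig]
    show Real.log (lam * u i) = _
    rw [Real.log_mul hlam.ne' (hu i).ne']
  set R := dHilbert (v 0) u with hRdef
  have hRosc : R = hopfOsc (fun i => Real.log (v 0 i) - Real.log (u i)) := rfl
  have hR0 : 0 ≤ R := by
    have h : Real.log (v 0 (Classical.arbitrary ι)) - Real.log (u (Classical.arbitrary ι))
        - (Real.log (v 0 (Classical.arbitrary ι)) - Real.log (u (Classical.arbitrary ι)))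
        ≤ hopfOsc (fun i => Real.log (v 0 i) - Real.log (u i)) :=
      le_hopfOsc (fun i => Real.log (v 0 i) - Real.log (u i)) (Classical.arbitrary ι) (Classical.arbitrary ι)
    rw [hRosc]
    simpa using h
  -- the orbit stays in the ball of radius R around log u
  have orbit : ∀ k, hopfOsc (fun i => Real.log (v k i) - Real.log (u i)) ≤ R := by
    intro k
    induction k with
    | zero => rw [hRosc]
    | succ k ih =>
      apply hopfOsc_le
      intro i j
      have e_i := hrecL k i
      have e_j := hrecL k j
      have d1 : Real.log (f (v k) i) - Real.log (f u i)
          - (Real.log (f (v k) j) - Real.log (f u j))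
          ≤ hopfOsc (fun i => Real.log (f (v k) i) - Real.log (f u i)) :=
        le_hopfOsc (fun i => Real.log (f (v k) i) - Real.log (f u i)) i j
      have o1 : hopfOsc (fun i => Real.log (f (v k) i) - Real.log (f u i))
          ≤ hopfOsc (fun i => Real.log (v k i) - Real.log (u i)) :=
        nonexp (v k) u (vpos k) hu
      have d2 : Real.log (v k i) - Real.log (u i) - (Real.log (v k j) - Real.log (u j))
          ≤ hopfOsc (fun i => Real.log (v k i) - Real.log (u i)) :=
        le_hopfOsc (fun i => Real.log (v k i) - Real.log (u i)) i j
      have hei := heiglog i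
      have hej := heiglog j
      show Real.log (v (k+1) i) - Real.log (u i) - (Real.log (v (k+1) j) - Real.log (u j)) ≤ R
      linarith
  -- diameter bound
  have diam : ∀ a b : ℕ, hopfOsc (fun i => Real.log (v a i) - Real.log (f (v b) i)) ≤ 2*R := by
    intro a b
    apply hopfOsc_le
    intro i j
    have d1 : Real.log (v a i) - Real.log (u i) - (Real.log (v a j) - Real.log (u j))
        ≤ hopfOsc (fun i => Real.log (v a i) - Real.log (u i)) :=
      le_hopfOsc (fun i => Real.log (v a i) - Real.log (u i)) i j
    have o1 := orbit a
    have d2 : Real.log (f u i) - Real.log (f (v b) i)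
        - (Real.log (f u j) - Real.log (f (v b) j))
        ≤ hopfOsc (fun i => Real.log (f u i) - Real.log (f (v b) i)) :=
      le_hopfOsc (fun i => Real.log (f u i) - Real.log (f (v b) i)) i j
    have o2 : hopfOsc (fun i => Real.log (f u i) - Real.log (f (v b) i))
        ≤ hopfOsc (fun i => Real.log (u i) - Real.log (v b i)) :=
      nonexp u (v b) hu (vpos b)
    have o3 : hopfOsc (fun i => Real.log (u i) - Real.log (v b i)) ≤ R := by
      apply hopfOsc_le
      intro i' j'
      have d3 : Real.log (v b j') - Real.log (u j') - (Real.log (v b i') - Real.log (u i'))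
          ≤ hopfOsc (fun i => Real.log (v b i) - Real.log (u i)) :=
        le_hopfOsc (fun i => Real.log (v b i) - Real.log (u i)) j' i'
      have := orbit b
      show Real.log (u i') - Real.log (v b i') - (Real.log (u j') - Real.log (v b j')) ≤ R
      linarith
    have hei := heiglog i
    have hej := heiglog j
    show Real.log (v a i) - Real.log (f (v b) i) - (Real.log (v a j) - Real.log (f (v b) j)) ≤ 2*R
    linarith
  -- the main double induction
  have main : ∀ n, ∀ m, m ≤ n →
      hopfOsc (fun i => Real.log (v m i) - Real.log (f (v n) i)) ≤ 2*R*UB m n ∧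
      hopfOsc (fun i => Real.log (v m i) - Real.log (v n i)) ≤ 2*R*VB m n := by
    intro n
    induction n with
    | zero =>
      intro m hm
      rw [Nat.le_zero] at hm
      subst hm
      constructor
      · rw [UB_zero, mul_one]
        exact diam 0 0
      · rw [VB_diag, mul_zero]
        apply hopfOsc_le
        intro i j
        show Real.log (v 0 i) - Real.log (v 0 i) - (Real.log (v 0 j) - Real.log (v 0 j)) ≤ 0
        simp
    | succ n ih =>
      have Vpart : ∀ m, m ≤ n+1 →
          hopfOsc (fun i => Real.log (v m i) - Real.log (v (n+1) i)) ≤ 2*R*VB m (n+1) := by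
        intro m hm
        rcases Nat.lt_or_ge m (n+1) with hlt | hge
        · have hmn : m ≤ n := by omega
          obtain ⟨hU, hV⟩ := ih m hmn
          rw [VB_rec m n hmn]
          apply hopfOsc_le
          intro i j
          have e_i := hrecL n i
          have e_j := hrecL n j
          have d1 : Real.log (v m i) - Real.log (f (v n) i)
              - (Real.log (v m j) - Real.log (f (v n) j))
              ≤ hopfOsc (fun i => Real.log (v m i) - Real.log (f (v n) i)) :=
            le_hopfOsc (fun i => Real.log (v m i) - Real.log (f (v n) i)) i j
          have d2 : Real.log (v m i) - Real.log (v n i)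
              - (Real.log (v m j) - Real.log (v n j))
              ≤ hopfOsc (fun i => Real.log (v m i) - Real.log (v n i)) :=
            le_hopfOsc (fun i => Real.log (v m i) - Real.log (v n i)) i j
          show Real.log (v m i) - Real.log (v (n+1) i)
              - (Real.log (v m j) - Real.log (v (n+1) j)) ≤ _
          linarith
        · have hm1 : m = n+1 := by omega
          subst hm1
          rw [VB_diag, mul_zero]
          apply hopfOsc_le
          intro i j
          show Real.log (v (n+1) i) - Real.log (v (n+1) i)
              - (Real.log (v (n+1) j) - Real.log (v (n+1) j)) ≤ 0
          simp
      have Upart : ∀ m, m ≤ n+1 →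
          hopfOsc (fun i => Real.log (v m i) - Real.log (f (v (n+1)) i)) ≤ 2*R*UB m (n+1) := by
        intro m
        induction m with
        | zero =>
          intro _
          rw [UB_zero, mul_one]
          exact diam 0 (n+1)
        | succ m ihm =>
          intro hm
          have hm' : m ≤ n+1 := by omega
          have hUm := ihm hm'
          have hVm := Vpart m hm'
          have hne : hopfOsc (fun i => Real.log (f (v m) i) - Real.log (f (v (n+1)) i))
              ≤ hopfOsc (fun i => Real.log (v m i) - Real.log (v (n+1) i)) :=
            nonexp _ _ (vpos m) (vpos (n+1))
          rw [UB_rec m (n+1) (by omega)]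
          apply hopfOsc_le
          intro i j
          have e_i := hrecL m i
          have e_j := hrecL m j
          have d1 : Real.log (f (v m) i) - Real.log (f (v (n+1)) i)
              - (Real.log (f (v m) j) - Real.log (f (v (n+1)) j))
              ≤ hopfOsc (fun i => Real.log (f (v m) i) - Real.log (f (v (n+1)) i)) :=
            le_hopfOsc (fun i => Real.log (f (v m) i) - Real.log (f (v (n+1)) i)) i j
          have d2 : Real.log (v m i) - Real.log (f (v (n+1)) i)
              - (Real.log (v m j) - Real.log (f (v (n+1)) j))
              ≤ hopfOsc (fun i => Real.log (v m i) - Real.log (f (v (n+1)) i)) :=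
            le_hopfOsc (fun i => Real.log (v m i) - Real.log (f (v (n+1)) i)) i j
          show Real.log (v (m+1) i) - Real.log (f (v (n+1)) i)
              - (Real.log (v (m+1) j) - Real.log (f (v (n+1)) j)) ≤ _
          linarith
      intro m hm
      exact ⟨Upart m hm, Vpart m hm⟩
  -- conclusion
  intro k hk
  have hmain := (main k k le_rfl).1
  have hswap : dHilbert (f (v k)) (v k) ≤ 2*R*UB k k := by
    show hopfOsc (fun i => Real.log (f (v k) i) - Real.log (v k i)) ≤ 2*R*UB k k
    apply hopfOsc_le
    intro i j
    have d1 : Real.log (v k j) - Real.log (f (v k) j)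
        - (Real.log (v k i) - Real.log (f (v k) i))
        ≤ hopfOsc (fun i => Real.log (v k i) - Real.log (f (v k) i)) :=
      le_hopfOsc (fun i => Real.log (v k i) - Real.log (f (v k) i)) j i
    show Real.log (f (v k) i) - Real.log (v k i) - (Real.log (f (v k) j) - Real.log (v k j)) ≤ _
    linarith
  have hub := UB_diag_le k hk
  calc dHilbert (f (v k)) (v k) ≤ 2*R*UB k k := hswap
    _ ≤ 2*R*(2/Real.sqrt (Real.pi*k)) := by
        apply mul_le_mul_of_nonneg_left hub (by linarith)
    _ = 4/Real.sqrt (Real.pi*(k:ℝ)) * R := by ring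
end

section
/- The depth-d De Bruijn operator T^d on ∏_{s∈[p]^d} ℝ₊ⁿ is positively irreducible if and only if the family of lifted matrices { (e_r e_s^T) ⊗ A_a : r,s ∈ [p]^d, a ∈ [p], τ^d(r,a) = s } acting on ℝ^{p^d} ⊗ ℝⁿ ≅ ℝ^{p^d · n} is positively irreducible. -/
open Matrix

/-- The face of the nonnegative orthant of `ι → ℝ` associated with `I ⊆ ι`. -/
def orthantFace {ι : Type*} (I : Set ι) : Set (ι → ℝ) :=
  {x | 0 ≤ x ∧ ∀ i ∉ I, x i = 0}

/-- The lifted matrix `(e_r e_sᵀ) ⊗ A_a` acting on `ℝ^{p^d} ⊗ ℝⁿ ≅ ℝ^{p^d · n}`. -/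
def liftedMatrix {n p : ℕ} (A : Fin p → Matrix (Fin n) (Fin n) ℝ) (d : ℕ)
    (r s : Fin d → Fin p) (a : Fin p) :
    Matrix ((Fin d → Fin p) × Fin n) ((Fin d → Fin p) × Fin n) ℝ :=
  fun q q' => if q.1 = r ∧ q'.1 = s then A a q.2 q'.2 else 0

lemma single_mem_face {n p : ℕ} {d : ℕ} {J : Set ((Fin d → Fin p) × Fin n)}
    {q : (Fin d → Fin p) × Fin n} (hq : q ∈ J) :
    (Pi.single q 1 : (Fin d → Fin p) × Fin n → ℝ) ∈ orthantFace J := by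
  refine ⟨fun q' => ?_, fun q' hq' => ?_⟩
  · classical
    rw [Pi.single_apply]
    split <;> norm_num
  · rw [Pi.single_eq_of_ne]
    rintro rfl; exact hq' hq

lemma TChar {n p : ℕ} (d : ℕ) (A : Fin p → Matrix (Fin n) (Fin n) ℝ)
    (hA : ∀ a, ∀ i j, 0 ≤ A a i j) (J : Set ((Fin d → Fin p) × Fin n)) :
    (∀ x ∈ orthantFace J, deBruijnOp A d x ∈ orthantFace J) ↔
    (∀ (r : Fin d → Fin p) (a : Fin p) (i j : Fin n),
      (deBruijnShift d r a, i) ∉ J → (r, j) ∈ J → A a j i = 0) := by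
  constructor
  · intro h r a i j hsi hrj
    classical
    set x : (Fin d → Fin p) × Fin n → ℝ := Pi.single (r, j) 1 with hxdef
    have hx : x ∈ orthantFace J := single_mem_face hrj
    have h0 := (h x hx).2 (deBruijnShift d r a, i) hsi
    have hxr : (fun j' => x (r, j')) = Pi.single j (1 : ℝ) := by
      funext j'
      simp [x, Pi.single_apply, Prod.ext_iff]
    have hval : (A a)ᵀ.mulVec (fun j' => x (r, j')) i = A a j i := by
      rw [hxr, Matrix.mulVec_single]
      simp
    have hle : (A a)ᵀ.mulVec (fun j' => x (r, j')) i ≤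
        deBruijnOp A d x (deBruijnShift d r a, i) := by
      exact le_ciSup (f := fun ra : {ra : (Fin d → Fin p) × Fin p //
            deBruijnShift d ra.1 ra.2 = (deBruijnShift d r a, i).1} =>
          (A ra.1.2)ᵀ.mulVec (fun j' => x (ra.1.1, j')) i)
        (Set.finite_range _).bddAbove ⟨(r, a), rfl⟩
    rw [hval, h0] at hle
    have hge : 0 ≤ A a j i := hA a j i
    linarith
  · intro h x hx
    constructor
    · intro q
      refine Real.iSup_nonneg fun ra => ?_
      simp only [Matrix.mulVec, dotProduct, Matrix.transpose_apply]
      exact Finset.sum_nonneg fun j _ => mul_nonneg (hA _ _ _) (hx.1 _)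
    · intro q hq
      have hterm : ∀ ra : {ra : (Fin d → Fin p) × Fin p //
          deBruijnShift d ra.1 ra.2 = q.1},
          (A ra.1.2)ᵀ.mulVec (fun j => x (ra.1.1, j)) q.2 = 0 := by
        rintro ⟨⟨r, a⟩, hra⟩
        simp only [Matrix.mulVec, dotProduct, Matrix.transpose_apply]
        refine Finset.sum_eq_zero fun j _ => ?_
        by_cases hj : (r, j) ∈ J
        · have : A a j q.2 = 0 := by
            refine h r a q.2 j ?_ hj
            simp only at hra
            rw [hra]
            simpa using hq
          simp [this]
        · rw [hx.2 _ hj, mul_zero]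
      refine le_antisymm (Real.iSup_le (fun ra => le_of_eq (hterm ra)) le_rfl) ?_
      exact Real.iSup_nonneg fun ra => le_of_eq (hterm ra).symm

lemma liftChar {n p : ℕ} (d : ℕ) (A : Fin p → Matrix (Fin n) (Fin n) ℝ)
    (hA : ∀ a, ∀ i j, 0 ≤ A a i j) (J : Set ((Fin d → Fin p) × Fin n)) :
    (∀ (r s : Fin d → Fin p) (a : Fin p), deBruijnShift d r a = s →
        ∀ x ∈ orthantFace J, (liftedMatrix A d r s a).mulVec x ∈ orthantFace J) ↔
    (∀ (r : Fin d → Fin p) (a : Fin p) (i j : Fin n),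
      (r, i) ∉ J → (deBruijnShift d r a, j) ∈ J → A a i j = 0) := by
  constructor
  · intro h r a i j hri hsj
    classical
    set s := deBruijnShift d r a with hs
    set x : (Fin d → Fin p) × Fin n → ℝ := Pi.single (s, j) 1 with hxdef
    have hx : x ∈ orthantFace J := single_mem_face hsj
    have h0 := (h r s a rfl x hx).2 (r, i) hri
    rw [hxdef, Matrix.mulVec_single] at h0
    simpa [liftedMatrix] using h0
  · intro h r s a hrs x hx
    constructor
    · intro q
      refine Finset.sum_nonneg fun q' _ => ?_
      show (if q.1 = r ∧ q'.1 = s then A a q.2 q'.2 else 0) * x q' ≥ 0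
      split
      · exact mul_nonneg (hA _ _ _) (hx.1 _)
      · simp
    · intro q hq
      refine Finset.sum_eq_zero fun q' _ => ?_
      show (if q.1 = r ∧ q'.1 = s then A a q.2 q'.2 else 0) * x q' = 0
      split
      case isTrue hcond =>
        by_cases hq' : q' ∈ J
        · have : A a q.2 q'.2 = 0 := by
            refine h r a q.2 q'.2 ?_ ?_
            · rw [← hcond.1]; simpa using hq
            · rw [hrs, ← hcond.2]; simpa using hq'
          simp [this]
        · rw [hx.2 _ hq', mul_zero]
      case isFalse => simp

/-- `T^d` is positively irreducible if and only if the family of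
lifted matrices `{(e_r e_sᵀ) ⊗ A_a : τ^d(r,a) = s}` is positively irreducible. -/
theorem deBruijnOp_posIrred_iff_lifted_family {n p : ℕ} (hn : 0 < n) (hp : 0 < p)
    (d : ℕ)
    (A : Fin p → Matrix (Fin n) (Fin n) ℝ)
    (hA : ∀ a, ∀ i j, 0 ≤ A a i j) :
    (∀ J : Set ((Fin d → Fin p) × Fin n), J.Nonempty → J ≠ Set.univ →
        ¬ (∀ x ∈ orthantFace J, deBruijnOp A d x ∈ orthantFace J)) ↔
    (∀ J : Set ((Fin d → Fin p) × Fin n), J.Nonempty → J ≠ Set.univ →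
        ¬ (∀ (r s : Fin d → Fin p) (a : Fin p), deBruijnShift d r a = s →
            ∀ x ∈ orthantFace J, (liftedMatrix A d r s a).mulVec x ∈ orthantFace J)) := by
  have key : ∀ J : Set ((Fin d → Fin p) × Fin n),
      (∀ x ∈ orthantFace J, deBruijnOp A d x ∈ orthantFace J) ↔
      (∀ (r s : Fin d → Fin p) (a : Fin p), deBruijnShift d r a = s →
          ∀ x ∈ orthantFace Jᶜ, (liftedMatrix A d r s a).mulVec x ∈ orthantFace Jᶜ) := by
    intro J
    rw [TChar d A hA J, liftChar d A hA Jᶜ]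
    constructor
    · intro h r a i j hi hj
      exact h r a j i (by simpa using hj) (by simpa using hi)
    · intro h r a i j hi hj
      exact h r a j i (by simpa using hj) (by simpa using hi)
  constructor
  · intro H J hJne hJuniv hinv
    refine H Jᶜ (Set.nonempty_compl.mpr hJuniv) ?_ ?_
    · intro hc
      exact hJne.ne_empty (by rw [← compl_compl J, hc, Set.compl_univ])
    · rw [key Jᶜ, compl_compl]
      exact hinv
  · intro H J hJne hJuniv hinv
    refine H Jᶜ (Set.nonempty_compl.mpr hJuniv) ?_ ?_
    · intro hc
      exact hJne.ne_empty (by rw [← compl_compl J, hc, Set.compl_univ])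
    · exact (key J).mp hinv
end
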